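/- arXiv:1005.1528 — 4 statements merged into one kernel-verified Lean document; each statement's English description precedes it below -/
import Mathlib

section
/- There are no Gaussian integers x, y, z with xyz ≠ 0 satisfying x^4 - y^4 = i·z^2. -/
open Zsqrtd GaussianInt

namespace Quartic

/-- The prime `1 + i` of `ℤ[i]`. -/
abbrev pp : GaussianInt := ⟨1, 1⟩

lemma pp_sq : pp ^ 2 = 2 * sqrtd := by
  ext <;> simp [pow_two, Zsqrtd.re_mul, Zsqrtd.im_mul]

lemma i_sq : (sqrtd : GaussianInt) ^ 2 = -1 := by
  ext <;> simp [pow_two, Zsqrtd.re_mul, Zsqrtd.im_mul]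

lemma pp_pow4 : pp ^ 4 = -4 := by
  have h : pp ^ 4 = (pp ^ 2) ^ 2 := by ring
  rw [h, pp_sq]
  have h2 : (2 * sqrtd : GaussianInt) ^ 2 = 4 * sqrtd ^ 2 := by ring
  rw [h2, i_sq]; ring

lemma isUnit_i : IsUnit (sqrtd : GaussianInt) :=
  IsUnit.of_mul_eq_one (-sqrtd) (by have h := i_sq; linear_combination -h)

lemma pp_ne_zero : (pp : GaussianInt) ≠ 0 := by decide

lemma two_eq : (2 : GaussianInt) = pp ^ 2 * (-sqrtd) := by
  rw [pp_sq]; linear_combination (2 : GaussianInt) * i_sq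

lemma pp_dvd_two : pp ∣ (2 : GaussianInt) :=
  ⟨pp * (-sqrtd), by rw [two_eq]; ring⟩

lemma norm_pp : Zsqrtd.norm pp = 2 := by
  simp [Zsqrtd.norm_def]

lemma pp_not_unit : ¬ IsUnit pp := by
  rw [← Zsqrtd.norm_eq_one_iff, norm_pp]
  decide

lemma pp_prime : Prime pp := by
  rw [← UniqueFactorizationMonoid.irreducible_iff_prime]
  constructor
  · exact pp_not_unit
  · intro a b hab
    have h : a.norm.natAbs * b.norm.natAbs = 2 := by
      rw [← Int.natAbs_mul, ← Zsqrtd.norm_mul, ← hab, norm_pp]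
      rfl
    rcases (Nat.prime_two.eq_one_or_self_of_dvd a.norm.natAbs ⟨_, h.symm⟩) with h1 | h2
    · exact Or.inl (Zsqrtd.norm_eq_one_iff.mp h1)
    · right
      apply Zsqrtd.norm_eq_one_iff.mp
      have ha : a.norm.natAbs = 2 := h2
      rw [ha] at h
      omega

/-- every unit of `ℤ[i]` squares to `±1` -/
lemma unit_sq {u : GaussianInt} (hu : IsUnit u) : u ^ 2 = 1 ∨ u ^ 2 = -1 := by
  have h1 : u.norm.natAbs = 1 := Zsqrtd.norm_eq_one_iff.mpr hu
  have h2 : u.norm = u.re * u.re + u.im * u.im := by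
    rw [Zsqrtd.norm_def]; ring
  have h3 : u.re * u.re + u.im * u.im = 1 := by
    have h := Int.natAbs_eq u.norm
    rw [h1] at h
    rcases h with h | h
    · rw [← h2, h]; rfl
    · exfalso
      have hnn : 0 ≤ u.norm := GaussianInt.norm_nonneg u
      rw [h] at hnn
      norm_num at hnn
  have hre : -1 ≤ u.re ∧ u.re ≤ 1 := by constructor <;> nlinarith
  have him : -1 ≤ u.im ∧ u.im ≤ 1 := by constructor <;> nlinarith
  have hcase : (u.re = 0 ∧ (u.im = 1 ∨ u.im = -1)) ∨ (u.im = 0 ∧ (u.re = 1 ∨ u.re = -1)) := by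
    rcases hre with ⟨h4, h5⟩; rcases him with ⟨h6, h7⟩
    interval_cases h : u.re <;> interval_cases h' : u.im <;> omega
  have hsq : u ^ 2 = ⟨u.re * u.re - u.im * u.im, 2 * (u.re * u.im)⟩ := by
    ext <;> (simp [pow_two, Zsqrtd.re_mul, Zsqrtd.im_mul]; ring)
  rcases hcase with ⟨h0, h1' | h1'⟩ | ⟨h0, h1' | h1'⟩ <;>
    [right; right; left; left] <;>
    (rw [hsq]; ext <;> simp [h0, h1'])

lemma two_dvd_iff (w : GaussianInt) : (2 : GaussianInt) ∣ w ↔ (2:ℤ) ∣ w.re ∧ (2:ℤ) ∣ w.im := by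
  have h : ((2:ℤ) : GaussianInt) = 2 := by norm_cast
  rw [← h, Zsqrtd.intCast_dvd]

lemma four_dvd_iff (w : GaussianInt) : (4 : GaussianInt) ∣ w ↔ (4:ℤ) ∣ w.re ∧ (4:ℤ) ∣ w.im := by
  have h : ((4:ℤ) : GaussianInt) = 4 := by norm_cast
  rw [← h, Zsqrtd.intCast_dvd]

lemma pp_dvd_iff (w : GaussianInt) : pp ∣ w ↔ (2:ℤ) ∣ w.re + w.im := by
  constructor
  · rintro ⟨c, rfl⟩
    simp [Zsqrtd.re_mul, Zsqrtd.im_mul]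
    exact ⟨c.re, by ring⟩
  · rintro ⟨k, hk⟩
    refine ⟨⟨k, w.im - k⟩, ?_⟩
    ext <;> (simp [Zsqrtd.re_mul, Zsqrtd.im_mul]; try omega)

lemma not_four_dvd_two : ¬ (4 : GaussianInt) ∣ 2 := by
  intro h
  rw [show (4 : GaussianInt) = ((4:ℤ) : GaussianInt) by norm_cast,
    show (2 : GaussianInt) = ((2:ℤ) : GaussianInt) by norm_cast,
    Zsqrtd.intCast_dvd_intCast] at h
  norm_num at h

/-- the square of an odd Gaussian integer is `±1 (mod 4)` -/
lemma sq_odd {α : GaussianInt} (h : ¬ pp ∣ α) :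
    (4 : GaussianInt) ∣ α ^ 2 - 1 ∨ (4 : GaussianInt) ∣ α ^ 2 + 1 := by
  rw [pp_dvd_iff] at h
  have hsq : α ^ 2 = ⟨α.re * α.re - α.im * α.im, 2 * (α.re * α.im)⟩ := by
    ext <;> (simp [pow_two, Zsqrtd.re_mul, Zsqrtd.im_mul]; ring)
  rcases Int.even_or_odd α.im with ⟨n, hn⟩ | ⟨n, hn⟩
  · obtain ⟨m, hm⟩ : Odd α.re := by
      rcases Int.even_or_odd α.re with ⟨m, hm⟩ | ho
      · exact absurd ⟨m + n, by omega⟩ h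
      · exact ho
    left
    rw [four_dvd_iff]
    constructor
    · have h' : (α ^ 2 - 1).re = α.re * α.re - α.im * α.im - 1 := by rw [hsq]; simp
      rw [h', hm, hn]
      exact ⟨m * m + m - n * n, by ring⟩
    · have h' : (α ^ 2 - 1).im = 2 * (α.re * α.im) := by rw [hsq]; simp
      rw [h', hn]
      exact ⟨α.re * n, by ring⟩
  · obtain ⟨m, hm⟩ : Even α.re := by
      rcases Int.even_or_odd α.re with he | ⟨m, hm⟩
      · exact he
      · exact absurd ⟨m + n + 1, by omega⟩ h
    right
    rw [four_dvd_iff]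
    constructor
    · have h' : (α ^ 2 + 1).re = α.re * α.re - α.im * α.im + 1 := by rw [hsq]; simp
      rw [h', hm, hn]
      exact ⟨m * m - n * n - n, by ring⟩
    · have h' : (α ^ 2 + 1).im = 2 * (α.re * α.im) := by rw [hsq]; simp
      rw [h', hm]
      exact ⟨m * α.im, by ring⟩

/-- the fourth power of an odd Gaussian integer is `1 (mod 8)` -/
lemma pow4_odd {α : GaussianInt} (h : ¬ pp ∣ α) : (8 : GaussianInt) ∣ α ^ 4 - 1 := by
  rcases sq_odd h with ⟨t, ht⟩ | ⟨t, ht⟩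
  · exact ⟨2 * t ^ 2 + t, by linear_combination (α ^ 2 + 1 + 4 * t) * ht⟩
  · exact ⟨2 * t ^ 2 - t, by linear_combination (α ^ 2 - 1 + 4 * t) * ht⟩

/-- The main descent step.  Assumes `x - y` is not divisible by 2. -/
lemma descent_step (n : ℕ)
    (IH : ∀ m, m < n → ∀ x y z u : GaussianInt, IsUnit u → ¬ pp ∣ x → ¬ pp ∣ y →
      IsCoprime x y → z ≠ 0 → (Zsqrtd.norm z).natAbs = m → x ^ 4 - y ^ 4 = u * z ^ 2 → False)
    (x y z u : GaussianInt) (hu : IsUnit u) (hx : ¬ pp ∣ x) (hy : ¬ pp ∣ y)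
    (hxy : IsCoprime x y) (hz : z ≠ 0) (hnz : (Zsqrtd.norm z).natAbs = n)
    (h2 : ¬ (2 : GaussianInt) ∣ x - y)
    (heq : x ^ 4 - y ^ 4 = u * z ^ 2) : False := by
  -- x + y and x - y are divisible by 1+i exactly once
  have hxodd := (pp_dvd_iff x).not.mp hx
  have hyodd := (pp_dvd_iff y).not.mp hy
  obtain ⟨e, he⟩ : pp ∣ x + y := by
    rw [pp_dvd_iff, Zsqrtd.re_add, Zsqrtd.im_add]; omega
  obtain ⟨f, hf⟩ : pp ∣ x - y := by
    rw [pp_dvd_iff, Zsqrtd.re_sub, Zsqrtd.im_sub]; omega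
  have h2sum : ¬ (2 : GaussianInt) ∣ x + y := by
    rintro ⟨c, hc⟩
    exact h2 ⟨c - y, by rw [mul_sub, ← hc]; ring⟩
  have hfe : ¬ pp ∣ e := by
    rintro ⟨c, hc⟩
    exact h2sum ⟨sqrtd * c, by rw [he, hc]; linear_combination c * pp_sq⟩
  have hff : ¬ pp ∣ f := by
    rintro ⟨c, hc⟩
    exact h2 ⟨sqrtd * c, by rw [hf, hc]; linear_combination c * pp_sq⟩
  -- e and f are coprime
  obtain ⟨a, b, hab⟩ := hxy
  have hcomb : (sqrtd * (a + b)) * e + (sqrtd * (a - b)) * f = pp := by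
    apply mul_left_cancel₀ pp_ne_zero
    linear_combination (-(sqrtd * (a + b))) * he + (-(sqrtd * (a - b))) * hf +
      2 * sqrtd * hab - pp_sq
  have hef : IsCoprime e f := by
    obtain ⟨s, t, hst⟩ := (pp_prime.coprime_iff_not_dvd).mpr hfe
    exact ⟨s * (sqrtd * (a + b)) + t, s * (sqrtd * (a - b)), by
      linear_combination s * hcomb + hst⟩
  -- basic identities
  have hx2my2 : x ^ 2 - y ^ 2 = pp ^ 2 * (e * f) := by
    linear_combination (x - y) * he + pp * e * hf
  have hx2py2 : x ^ 2 + y ^ 2 = sqrtd * (e ^ 2 + f ^ 2) := by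
    apply mul_left_cancel₀ (two_ne_zero (α := GaussianInt))
    linear_combination (x + y + pp * e) * he + (x - y + pp * f) * hf +
      (e ^ 2 + f ^ 2) * pp_sq
  have hmain : u * z ^ 2 = -2 * (e * f * (e ^ 2 + f ^ 2)) := by
    have t1 : u * z ^ 2 = (pp ^ 2 * (e * f)) * (sqrtd * (e ^ 2 + f ^ 2)) := by
      rw [← hx2my2, ← hx2py2]; linear_combination -heq
    rw [t1, pp_sq]
    linear_combination (2 * (e * f) * (e ^ 2 + f ^ 2)) * i_sq
  -- z is divisible by pp
  obtain ⟨z1, hz1⟩ : pp ∣ z := by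
    have hd : pp ∣ u * z ^ 2 := by
      rw [hmain]
      exact dvd_mul_of_dvd_left (dvd_neg.mpr pp_dvd_two) _
    have hd2 : pp ∣ z ^ 2 := by
      rcases (pp_prime.dvd_mul).mp hd with h' | h'
      · exact absurd (isUnit_of_dvd_unit h' hu) pp_not_unit
      · exact h'
    exact pp_prime.dvd_of_dvd_pow hd2
  have hz1ne : z1 ≠ 0 := by
    rintro rfl
    rw [mul_zero] at hz1
    exact hz hz1
  -- the key factorisation
  have hkey : e * f * (e ^ 2 + f ^ 2) = (-(sqrtd * u)) * z1 ^ 2 := by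
    apply mul_left_cancel₀ (two_ne_zero (α := GaussianInt))
    have zsq : z ^ 2 = 2 * sqrtd * z1 ^ 2 := by
      rw [hz1]; linear_combination z1 ^ 2 * pp_sq
    have hk' : 2 * sqrtd * (u * z1 ^ 2) = -2 * (e * f * (e ^ 2 + f ^ 2)) := by
      rw [← hmain, zsq]; ring
    linear_combination hk'
  have hu' : IsUnit (-(sqrtd * u)) := (isUnit_i.mul hu).neg
  -- 8 divides z^2, so 4 divides z1^2, hence 4 divides e^2+f^2
  have h4S : (4 : GaussianInt) ∣ e ^ 2 + f ^ 2 := by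
    obtain ⟨k1, hk1⟩ := pow4_odd hx
    obtain ⟨k2, hk2⟩ := pow4_odd hy
    have h8 : (8 : GaussianInt) ∣ u * z ^ 2 :=
      ⟨k1 - k2, by rw [← heq]; linear_combination hk1 - hk2⟩
    obtain ⟨ui, hui⟩ := hu.exists_right_inv
    obtain ⟨k, hk⟩ := h8
    have h4z1 : (4 : GaussianInt) ∣ z1 ^ 2 := by
      refine ⟨-sqrtd * (ui * k), ?_⟩
      apply mul_left_cancel₀ (two_ne_zero (α := GaussianInt))
      have zsq : z ^ 2 = 2 * sqrtd * z1 ^ 2 := by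
        rw [hz1]; linear_combination z1 ^ 2 * pp_sq
      have hzk : 2 * sqrtd * (u * z1 ^ 2) = 8 * k := by rw [← hk, zsq]; ring
      linear_combination (-sqrtd * ui) * hzk - 2 * z1 ^ 2 * hui + 2 * u * ui * z1 ^ 2 * i_sq
    obtain ⟨c, hc⟩ := h4z1
    have h4efS : (4 : GaussianInt) ∣ e * f * (e ^ 2 + f ^ 2) :=
      ⟨-(sqrtd * u) * c, by rw [hkey, hc]; ring⟩
    have hppef : ¬ pp ∣ e * f := by
      intro hd
      rcases (pp_prime.dvd_mul).mp hd with h' | h'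
      · exact hfe h'
      · exact hff h'
    have hpp4 : pp ^ 4 ∣ (e * f) * (e ^ 2 + f ^ 2) := by
      refine dvd_trans ⟨-1, ?_⟩ h4efS
      rw [pp_pow4]; ring
    obtain ⟨c2, hc2⟩ := pp_prime.pow_dvd_of_dvd_mul_left 4 hppef hpp4
    exact ⟨-c2, by rw [hc2, pp_pow4]; ring⟩
  -- e*f and e^2+f^2 are coprime
  have hefS : IsCoprime (e * f) (e ^ 2 + f ^ 2) := by
    have h1 : IsCoprime e (e ^ 2 + f ^ 2) := by
      have hh := (hef.pow_right (n := 2)).add_mul_left_right e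
      exact (by ring_nf : f ^ 2 + e * e = e ^ 2 + f ^ 2) ▸ hh
    have h2' : IsCoprime f (e ^ 2 + f ^ 2) := by
      have hh := (hef.symm.pow_right (n := 2)).add_mul_left_right f
      exact (by ring_nf : e ^ 2 + f * f = e ^ 2 + f ^ 2) ▸ hh
    exact h1.mul_left h2'
  -- split into squares
  obtain ⟨v, hv⟩ := hu'.exists_right_inv
  have hvunit : IsUnit v := IsUnit.of_mul_eq_one (-(sqrtd * u)) (by linear_combination hv)
  have hsplit : (v * (e * f)) * (e ^ 2 + f ^ 2) = z1 ^ 2 := by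
    linear_combination v * hkey + z1 ^ 2 * hv
  have hcop1 : IsCoprime (v * (e * f)) (e ^ 2 + f ^ 2) :=
    (isCoprime_mul_unit_left_left hvunit _ _).mpr hefS
  obtain ⟨s, ws, hws⟩ : ∃ s : GaussianInt, ∃ w : GaussianIntˣ,
      (e ^ 2 + f ^ 2) = ↑w * s ^ 2 := by
    obtain ⟨s, hs⟩ := exists_associated_pow_of_mul_eq_pow' hcop1.symm
      (by rw [mul_comm]; exact hsplit)
    obtain ⟨w, hw⟩ := hs
    exact ⟨s, w, by rw [← hw]; ring⟩
  obtain ⟨r, hr⟩ := exists_associated_pow_of_mul_eq_pow' hcop1 hsplit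
  obtain ⟨cr, hcr⟩ := hr
  -- e * f = U * r^2 with U a unit
  set U : GaussianInt := -(sqrtd * u) * (↑cr : GaussianInt) with hUdef
  have hU : IsUnit U := hu'.mul cr.isUnit
  have hefU : e * f = U * r ^ 2 := by
    rw [hUdef]
    linear_combination (sqrtd * u) * hcr - (e * f) * hv
  obtain ⟨Ui, hUi⟩ := hU.exists_right_inv
  have hsplit2 : (Ui * e) * f = r ^ 2 := by
    linear_combination Ui * hefU + r ^ 2 * hUi
  have hcop2 : IsCoprime (Ui * e) f :=
    (isCoprime_mul_unit_left_left (IsUnit.of_mul_eq_one U (by linear_combination hUi)) _ _).mpr hef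
  obtain ⟨g, hg⟩ := exists_associated_pow_of_mul_eq_pow' hcop2 hsplit2
  obtain ⟨cg, hcg⟩ := hg
  have hge : e = (U * (↑cg : GaussianInt)) * g ^ 2 := by
    linear_combination (-U) * hcg - e * hUi
  obtain ⟨h', hh'⟩ := exists_associated_pow_of_mul_eq_pow' hcop2.symm
    (by rw [mul_comm]; exact hsplit2)
  obtain ⟨ch, hch⟩ := hh'
  have hfh : f = (↑ch : GaussianInt) * h' ^ 2 := by rw [← hch]; ring
  -- g and h' are odd and coprime
  have hgodd : ¬ pp ∣ g := by
    intro hd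
    exact hfe (by rw [hge]; exact Dvd.dvd.mul_left (hd.trans (dvd_pow_self g two_ne_zero)) _)
  have hhodd : ¬ pp ∣ h' := by
    intro hd
    exact hff (by rw [hfh]; exact Dvd.dvd.mul_left (hd.trans (dvd_pow_self h' two_ne_zero)) _)
  have hgh : IsCoprime g h' := by
    have h1 : g ∣ e := ⟨U * ↑cg * g, by rw [hge]; ring⟩
    have h2' : h' ∣ f := ⟨↑ch * h', by rw [hfh]; ring⟩
    exact (hef.of_isCoprime_of_dvd_left h1).of_isCoprime_of_dvd_right h2'
  -- s ≠ 0
  have hSne : e ^ 2 + f ^ 2 ≠ 0 := by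
    intro h0
    apply hz1ne
    have : z1 ^ 2 = 0 := by rw [← hsplit, h0, mul_zero]
    exact pow_eq_zero_iff two_ne_zero |>.mp this
  have hsne : s ≠ 0 := by
    rintro rfl
    rw [zero_pow two_ne_zero, mul_zero] at hws
    exact hSne hws
  -- norms
  have hnorm_lt : (Zsqrtd.norm s).natAbs < n := by
    have hzn : (Zsqrtd.norm z).natAbs = 2 * (Zsqrtd.norm z1).natAbs := by
      rw [hz1, Zsqrtd.norm_mul, Int.natAbs_mul, norm_pp]; rfl
    have hene : e ≠ 0 := fun h0 => hfe (h0 ▸ dvd_zero pp)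
    have hfne : f ≠ 0 := fun h0 => hff (h0 ▸ dvd_zero pp)
    have h1 : (Zsqrtd.norm (e ^ 2 + f ^ 2)).natAbs = (Zsqrtd.norm s).natAbs ^ 2 := by
      rw [hws, Zsqrtd.norm_mul, Int.natAbs_mul,
        Zsqrtd.norm_eq_one_iff.mpr ws.isUnit, one_mul, pow_two, Zsqrtd.norm_mul,
        Int.natAbs_mul, pow_two]
    have hq : Zsqrtd.norm z1 * Zsqrtd.norm z1
        = (Zsqrtd.norm v * Zsqrtd.norm (e * f)) * Zsqrtd.norm (e ^ 2 + f ^ 2) := by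
      rw [← Zsqrtd.norm_mul, ← Zsqrtd.norm_mul, ← Zsqrtd.norm_mul]
      exact congrArg Zsqrtd.norm (by rw [← pow_two z1, ← hsplit])
    have h2' := congrArg Int.natAbs hq
    rw [Int.natAbs_mul, Int.natAbs_mul, Int.natAbs_mul,
      Zsqrtd.norm_eq_one_iff.mpr hvunit, one_mul, h1] at h2'
    have hefpos : 0 < (Zsqrtd.norm (e * f)).natAbs := by
      have : e * f ≠ 0 := mul_ne_zero hene hfne
      have hnz' : Zsqrtd.norm (e * f) ≠ 0 := fun hcc => this (GaussianInt.norm_eq_zero.mp hcc)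
      omega
    have hz1pos : 0 < (Zsqrtd.norm z1).natAbs := by
      have hnz' : Zsqrtd.norm z1 ≠ 0 := fun hcc => hz1ne (GaussianInt.norm_eq_zero.mp hcc)
      omega
    have hle : (Zsqrtd.norm s).natAbs * (Zsqrtd.norm s).natAbs
        ≤ (Zsqrtd.norm z1).natAbs * (Zsqrtd.norm z1).natAbs := by
      rw [h2']
      nlinarith [hefpos, sq_nonneg ((Zsqrtd.norm s).natAbs : ℤ)]
    have hle2 : (Zsqrtd.norm s).natAbs ≤ (Zsqrtd.norm z1).natAbs := by
      nlinarith [hle]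
    omega
  -- final case analysis on the squares of the two units
  obtain ⟨k3, hk3⟩ := pow4_odd hgodd
  obtain ⟨k4, hk4⟩ := pow4_odd hhodd
  obtain ⟨c4, hc4⟩ := h4S
  have happly : ∀ X Y : GaussianInt, ¬ pp ∣ X → ¬ pp ∣ Y → IsCoprime X Y →
      X ^ 4 - Y ^ 4 = (↑ws : GaussianInt) * s ^ 2 → False := fun X Y hX hY hXY hE =>
    IH _ hnorm_lt X Y s (↑ws) ws.isUnit hX hY hXY hsne rfl hE
  have hu1 : IsUnit (U * (↑cg : GaussianInt)) := hU.mul cg.isUnit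
  rcases unit_sq hu1 with h1 | h1 <;> rcases unit_sq ch.isUnit with h2' | h2'
  · -- e^2+f^2 = g^4 + h'^4 : impossible mod 4
    have hS2 : e ^ 2 + f ^ 2 = g ^ 4 + h' ^ 4 := by
      rw [hge, hfh]; linear_combination g ^ 4 * h1 + h' ^ 4 * h2'
    exact not_four_dvd_two ⟨c4 - 2 * k3 - 2 * k4, by
      linear_combination -hS2 + hc4 - hk3 - hk4⟩
  · -- e^2+f^2 = g^4 - h'^4 : descend
    have hS2 : e ^ 2 + f ^ 2 = g ^ 4 - h' ^ 4 := by
      rw [hge, hfh]; linear_combination g ^ 4 * h1 + h' ^ 4 * h2'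
    exact happly g h' hgodd hhodd hgh (by linear_combination -hS2 + hws)
  · -- e^2+f^2 = h'^4 - g^4 : descend
    have hS2 : e ^ 2 + f ^ 2 = h' ^ 4 - g ^ 4 := by
      rw [hge, hfh]; linear_combination g ^ 4 * h1 + h' ^ 4 * h2'
    exact happly h' g hhodd hgodd hgh.symm (by linear_combination -hS2 + hws)
  · -- e^2+f^2 = -(g^4 + h'^4) : impossible mod 4
    have hS2 : e ^ 2 + f ^ 2 = -(g ^ 4 + h' ^ 4) := by
      rw [hge, hfh]; linear_combination g ^ 4 * h1 + h' ^ 4 * h2'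
    exact not_four_dvd_two ⟨-c4 - 2 * k3 - 2 * k4, by
      linear_combination hS2 - hc4 - hk3 - hk4⟩

/-- No solutions with `x, y` odd and coprime, `z ≠ 0`, `u` a unit. -/
lemma no_solution : ∀ n : ℕ, ∀ x y z u : GaussianInt, IsUnit u → ¬ pp ∣ x → ¬ pp ∣ y →
    IsCoprime x y → z ≠ 0 → (Zsqrtd.norm z).natAbs = n → x ^ 4 - y ^ 4 = u * z ^ 2 → False := by
  intro n
  induction n using Nat.strong_induction_on with
  | _ n IH =>
    intro x y z u hu hx hy hxy hz hnz heq
    by_cases h2 : (2 : GaussianInt) ∣ x - y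
    · -- replace y by i*y
      refine descent_step n (fun m hm => IH m hm) x (sqrtd * y) z u hu hx ?_ ?_ hz hnz ?_ ?_
      · intro hd
        rcases (pp_prime.dvd_mul).mp hd with h' | h'
        · exact pp_not_unit (isUnit_of_dvd_unit h' isUnit_i)
        · exact hy h'
      · exact (isCoprime_mul_unit_left_right isUnit_i x y).mpr hxy
      · -- 2 does not divide x - i*y
        rw [two_dvd_iff] at h2 ⊢
        push_neg
        have hxo := (pp_dvd_iff x).not.mp hx
        have hre : (x - sqrtd * y).re = x.re + y.im := by
          simp [Zsqrtd.re_mul, Zsqrtd.im_mul]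
        have him : (x - sqrtd * y).im = x.im - y.re := by
          simp [Zsqrtd.re_mul, Zsqrtd.im_mul]
        rw [hre, him]
        rw [Zsqrtd.re_sub, Zsqrtd.im_sub] at h2
        intro h2a
        obtain ⟨h2b, h2c⟩ := h2
        omega
      · linear_combination heq - y ^ 4 * (sqrtd ^ 2 - 1) * i_sq
    · exact descent_step n (fun m hm => IH m hm) x y z u hu hx hy hxy hz hnz h2 heq

lemma not_four_dvd_i_add_one : ¬ (4 : GaussianInt) ∣ sqrtd + 1 := by
  rw [four_dvd_iff]
  rintro ⟨h1, h2⟩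
  simp only [Zsqrtd.re_add, Zsqrtd.im_add, Zsqrtd.re_sqrtd, Zsqrtd.im_sqrtd,
    Zsqrtd.re_one, Zsqrtd.im_one] at h1 h2
  omega

lemma not_four_dvd_i_sub_one : ¬ (4 : GaussianInt) ∣ sqrtd - 1 := by
  rw [four_dvd_iff]
  rintro ⟨h1, h2⟩
  simp only [Zsqrtd.re_sub, Zsqrtd.im_sub, Zsqrtd.re_sqrtd, Zsqrtd.im_sqrtd,
    Zsqrtd.re_one, Zsqrtd.im_one] at h1 h2
  omega

/-- if `(x, y, z)` is a coprime solution of `x⁴ - y⁴ = i z²`, then `1+i` can't divide `x`. -/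
lemma parity {x y z : GaussianInt} (hxy : IsCoprime x y)
    (heq : x ^ 4 - y ^ 4 = sqrtd * z ^ 2) (hppx : pp ∣ x) : False := by
  have hppy : ¬ pp ∣ y := fun h => pp_not_unit (hxy.isUnit_of_dvd' hppx h)
  have hppz : ¬ pp ∣ z := by
    intro h
    apply hppy
    apply pp_prime.dvd_of_dvd_pow (n := 4)
    have h1 : y ^ 4 = x ^ 4 - sqrtd * z ^ 2 := by linear_combination -heq
    rw [h1]
    exact dvd_sub (dvd_pow hppx (by norm_num)) (Dvd.dvd.mul_left (dvd_pow h two_ne_zero) _)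
  obtain ⟨c, hc⟩ := hppx
  have hx4 : x ^ 4 = 4 * (-(c ^ 4)) := by
    rw [hc]; linear_combination c ^ 4 * pp_pow4
  obtain ⟨k2, hk2⟩ := pow4_odd hppy
  rcases sq_odd hppz with ⟨t, ht⟩ | ⟨t, ht⟩
  · exact not_four_dvd_i_add_one ⟨-(c ^ 4) - 2 * k2 - sqrtd * t, by
      linear_combination -heq + hx4 - hk2 - sqrtd * ht⟩
  · exact not_four_dvd_i_sub_one ⟨c ^ 4 + 2 * k2 + sqrtd * t, by
      linear_combination heq - hx4 + hk2 + sqrtd * ht⟩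

end Quartic

open Quartic

/-- The Diophantine equation `x⁴ - y⁴ = i·z²` has only trivial solutions in the
Gaussian integers `ℤ[i]`, where `i = Zsqrtd.sqrtd` is the square root of `-1`. -/
theorem stmt_0 :
    ¬ ∃ x y z : GaussianInt, x * y * z ≠ 0 ∧
      x ^ 4 - y ^ 4 = Zsqrtd.sqrtd * z ^ 2 := by
  rintro ⟨x, y, z, hne, heq⟩
  have hx0 : x ≠ 0 := fun h => hne (by rw [h]; ring)
  have hy0 : y ≠ 0 := fun h => hne (by rw [h]; ring)
  have hz0 : z ≠ 0 := fun h => hne (by rw [h]; ring)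
  -- divide out the gcd
  set d := EuclideanDomain.gcd x y with hd
  have hd0 : d ≠ 0 := fun h => hx0 (EuclideanDomain.gcd_eq_zero_iff.mp h).1
  obtain ⟨x1, hx1⟩ : d ∣ x := EuclideanDomain.gcd_dvd_left x y
  obtain ⟨y1, hy1⟩ : d ∣ y := EuclideanDomain.gcd_dvd_right x y
  have hcop : IsCoprime x1 y1 := by
    have hb := EuclideanDomain.gcd_eq_gcd_ab x y
    refine ⟨EuclideanDomain.gcdA x y, EuclideanDomain.gcdB x y, ?_⟩
    apply mul_left_cancel₀ hd0
    rw [mul_one]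
    linear_combination -hb - EuclideanDomain.gcdA x y * hx1 - EuclideanDomain.gcdB x y * hy1
  have hdvd : (d ^ 2) ^ 2 ∣ z ^ 2 := by
    have h1 : d ^ 4 ∣ x ^ 4 - y ^ 4 := ⟨x1 ^ 4 - y1 ^ 4, by rw [hx1, hy1]; ring⟩
    rw [heq] at h1
    obtain ⟨c, hc⟩ := h1
    exact ⟨-sqrtd * c, by rw [← pow_mul]; linear_combination (-sqrtd) * hc + z ^ 2 * i_sq⟩
  obtain ⟨z1, hz1⟩ : d ^ 2 ∣ z := (IsIntegrallyClosed.pow_dvd_pow_iff two_ne_zero).mp hdvd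
  have hz10 : z1 ≠ 0 := by
    rintro rfl
    rw [mul_zero] at hz1
    exact hz0 hz1
  have heq1 : x1 ^ 4 - y1 ^ 4 = sqrtd * z1 ^ 2 := by
    apply mul_left_cancel₀ (pow_ne_zero 4 hd0)
    have hxe : x = d * x1 := hx1
    have hye : y = d * y1 := hy1
    calc d ^ 4 * (x1 ^ 4 - y1 ^ 4) = x ^ 4 - y ^ 4 := by rw [hxe, hye]; ring
      _ = sqrtd * z ^ 2 := heq
      _ = d ^ 4 * (sqrtd * z1 ^ 2) := by rw [hz1]; ring
  have hx1odd : ¬ pp ∣ x1 := fun h => parity hcop heq1 h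
  have hy1odd : ¬ pp ∣ y1 := by
    intro h
    apply parity hcop.symm (z := sqrtd * z1) ?_ h
    linear_combination -heq1 - sqrtd * z1 ^ 2 * i_sq
  exact no_solution (Zsqrtd.norm z1).natAbs x1 y1 z1 sqrtd isUnit_i hx1odd hy1odd hcop hz10 rfl heq1
end

section
/- If x, y, z are Gaussian integers with xyz ≠ 0, gcd(x,y,z) = 1, and x^4 + y^4 = i·z^2, then x ∈ {1, -1, i, -i}, y ∈ {1, -1, i, -i}, and z = i(1+i) or z = -i(1+i). -/
local notation "I" => (Zsqrtd.sqrtd : GaussianInt)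

open Zsqrtd

namespace GD

set_option maxHeartbeats 4000000
set_option synthInstance.maxHeartbeats 400000

local notation "π" => (⟨1,1⟩ : GaussianInt)


example : π^2 = 2 * sqrtd := by decide
example : π^4 = -4 := by decide
example : π^8 = 16 := by decide
example : (2 : GaussianInt) = -sqrtd * π^2 := by decide

lemma pp_ne_zero : (π : GaussianInt) ≠ 0 := by decide

lemma pp_prime : Prime (π : GaussianInt) := by
  rw [← irreducible_iff_prime]
  constructor
  · rw [← Zsqrtd.norm_eq_one_iff]; decide
  · intro a b hab
    have hnorm : a.norm * b.norm = 2 := by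
      have h1 := congrArg Zsqrtd.norm hab
      rw [Zsqrtd.norm_mul] at h1
      rw [← h1]; rfl
    have ha := Zsqrtd.norm_nonneg (by norm_num : (-1:ℤ) ≤ 0) a
    have hb := Zsqrtd.norm_nonneg (by norm_num : (-1:ℤ) ≤ 0) b
    have hadvd : a.norm ∣ 2 := ⟨b.norm, hnorm.symm⟩
    have hale : a.norm ≤ 2 := Int.le_of_dvd (by norm_num) hadvd
    have hane : a.norm ≠ 0 := by intro h; rw [h] at hnorm; simp at hnorm
    have : a.norm = 1 ∨ b.norm = 1 := by
      rcases (by omega : a.norm = 1 ∨ a.norm = 2) with h | h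
      · exact Or.inl h
      · right; rw [h] at hnorm; omega
    rcases this with h | h
    · left; rw [← Zsqrtd.norm_eq_one_iff, h]; rfl
    · right; rw [← Zsqrtd.norm_eq_one_iff, h]; rfl



/-- oddness characterisation -/
lemma pp_dvd_iff (w : GaussianInt) : π ∣ w ↔ (2:ℤ) ∣ (w.re + w.im) := by
  constructor
  · rintro ⟨c, rfl⟩
    refine ⟨c.re, ?_⟩
    simp [Zsqrtd.re_mul, Zsqrtd.im_mul]; ring
  · rintro ⟨k, hk⟩
    refine ⟨⟨k, w.im - k⟩, ?_⟩
    have : w.re = 2 * k - w.im := by omega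
    ext <;> simp [Zsqrtd.re_mul, Zsqrtd.im_mul, this] <;> ring

lemma int16 (c : ℤ) (h : ¬ (2:ℤ) ∣ c) : (16:ℤ) ∣ c^4 - 1 := by
  obtain ⟨k, rfl⟩ := (Int.even_or_odd c).resolve_left (fun ⟨k,hk⟩ => h ⟨k, by omega⟩)
  obtain ⟨m, hm⟩ : (2:ℤ) ∣ k * (k+1) := Int.even_mul_succ_self k |>.two_dvd
  exact ⟨k^4 + 2*k^3 + k^2 + m, by linear_combination 8 * hm⟩

lemma int4 (c : ℤ) (h : ¬ (2:ℤ) ∣ c) : (4:ℤ) ∣ c^2 - 1 := by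
  obtain ⟨k, rfl⟩ := (Int.even_or_odd c).resolve_left (fun ⟨k,hk⟩ => h ⟨k, by omega⟩)
  exact ⟨k^2 + k, by ring⟩

lemma D1 : ∀ A B : ZMod 16, (A+B)^4 = 1 →
    (A^4 - 6*A^2*B^2 + B^4 - 1) - (4*A^3*B - 4*A*B^3) = 0 ∧
    (A^4 - 6*A^2*B^2 + B^4 - 1) + (4*A^3*B - 4*A*B^3) = 0 := by decide

lemma D2 : ∀ A B : ZMod 4, (A+B)^2 = 1 →
    (A^2 - B^2 - 1 = 0 ∧ 2*A*B = 0) ∨ (A^2 - B^2 + 1 = 0 ∧ 2*A*B = 0) := by decide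




lemma pow4_eq (x : GaussianInt) :
    x^4 = ⟨x.re^4 - 6*x.re^2*x.im^2 + x.im^4, 4*x.re^3*x.im - 4*x.re*x.im^3⟩ := by
  obtain ⟨a, b⟩ := x
  have e : (⟨a,b⟩ : GaussianInt)^4 = ⟨a,b⟩*⟨a,b⟩*⟨a,b⟩*⟨a,b⟩ := by ring
  rw [e]; ext <;> simp [Zsqrtd.re_mul, Zsqrtd.im_mul] <;> ring

lemma pow2_eq (x : GaussianInt) : x^2 = ⟨x.re^2 - x.im^2, 2*x.re*x.im⟩ := by
  obtain ⟨a, b⟩ := x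
  have e : (⟨a,b⟩ : GaussianInt)^2 = ⟨a,b⟩*⟨a,b⟩ := by ring
  rw [e]; ext <;> simp [Zsqrtd.re_mul, Zsqrtd.im_mul] <;> ring

lemma pp7_dvd_iff (w : GaussianInt) :
    π^7 ∣ w ↔ ((16:ℤ) ∣ w.re - w.im ∧ (16:ℤ) ∣ w.re + w.im) := by
  have h1 : π^7 ∣ w ↔ π^8 ∣ π * w := by
    constructor
    · intro h
      have : π^8 = π * π^7 := by ring
      rw [this]
      exact mul_dvd_mul_left _ h
    · intro h
      have : π^8 = π * π^7 := by ring
      rw [this] at h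
      exact (mul_dvd_mul_iff_left pp_ne_zero).mp h
  have h2 : (π^8 : GaussianInt) = ((16:ℤ) : GaussianInt) := by decide
  rw [h1, h2, Zsqrtd.intCast_dvd]
  have hre : (π * w).re = w.re - w.im := by simp [Zsqrtd.re_mul]; ring
  have him : (π * w).im = w.re + w.im := by simp [Zsqrtd.im_mul]; ring
  rw [hre, him]

lemma pp4_dvd_iff (w : GaussianInt) :
    π^4 ∣ w ↔ ((4:ℤ) ∣ w.re ∧ (4:ℤ) ∣ w.im) := by
  have h2 : (π^4 : GaussianInt) = ((-4:ℤ) : GaussianInt) := by decide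
  rw [h2, Zsqrtd.intCast_dvd]
  constructor
  · rintro ⟨h1, h2⟩; exact ⟨neg_dvd.mp h1, neg_dvd.mp h2⟩
  · rintro ⟨h1, h2⟩; exact ⟨neg_dvd.mpr h1, neg_dvd.mpr h2⟩

/-- L1 : odd fourth powers are 1 mod π⁷ -/
lemma L1 {x : GaussianInt} (h : ¬ π ∣ x) : π^7 ∣ x^4 - 1 := by
  rw [pp7_dvd_iff]
  obtain ⟨a, b⟩ := x
  have hodd : ¬ (2:ℤ) ∣ (a + b) := fun hd => h ((pp_dvd_iff _).mpr hd)
  have h16 := int16 (a+b) hodd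
  rw [pow4_eq]
  have hz : (((a+b)^4 - 1 : ℤ) : ZMod 16) = 0 := (ZMod.intCast_zmod_eq_zero_iff_dvd _ 16).mpr h16
  push_cast at hz
  have hAB : ((a : ZMod 16) + (b : ZMod 16))^4 = 1 := by linear_combination hz
  obtain ⟨e1, e2⟩ := D1 (a : ZMod 16) (b : ZMod 16) hAB
  constructor
  · apply (ZMod.intCast_zmod_eq_zero_iff_dvd _ 16).mp
    push_cast
    simp only [Zsqrtd.re_sub, Zsqrtd.im_sub, Zsqrtd.re_one, Zsqrtd.im_one]
    push_cast
    linear_combination e1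
  · apply (ZMod.intCast_zmod_eq_zero_iff_dvd _ 16).mp
    push_cast
    simp only [Zsqrtd.re_sub, Zsqrtd.im_sub, Zsqrtd.re_one, Zsqrtd.im_one]
    push_cast
    linear_combination e2

/-- L2 : odd squares are ±1 mod π⁴ -/
lemma L2 {x : GaussianInt} (h : ¬ π ∣ x) : π^4 ∣ x^2 - 1 ∨ π^4 ∣ x^2 + 1 := by
  obtain ⟨a, b⟩ := x
  have hodd : ¬ (2:ℤ) ∣ (a + b) := fun hd => h ((pp_dvd_iff _).mpr hd)
  have h4 := int4 (a+b) hodd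
  have hz : (((a+b)^2 - 1 : ℤ) : ZMod 4) = 0 := (ZMod.intCast_zmod_eq_zero_iff_dvd _ 4).mpr h4
  push_cast at hz
  have hAB : ((a : ZMod 4) + (b : ZMod 4))^2 = 1 := by linear_combination hz
  rcases D2 (a : ZMod 4) (b : ZMod 4) hAB with ⟨e1, e2⟩ | ⟨e1, e2⟩
  · left
    rw [pp4_dvd_iff, pow2_eq]
    constructor
    · apply (ZMod.intCast_zmod_eq_zero_iff_dvd _ 4).mp
      simp only [Zsqrtd.re_sub, Zsqrtd.re_one]
      push_cast
      linear_combination e1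
    · apply (ZMod.intCast_zmod_eq_zero_iff_dvd _ 4).mp
      simp only [Zsqrtd.im_sub, Zsqrtd.im_one]
      push_cast
      linear_combination e2
  · right
    rw [pp4_dvd_iff, pow2_eq]
    constructor
    · apply (ZMod.intCast_zmod_eq_zero_iff_dvd _ 4).mp
      simp only [Zsqrtd.re_add, Zsqrtd.re_one]
      push_cast
      linear_combination e1
    · apply (ZMod.intCast_zmod_eq_zero_iff_dvd _ 4).mp
      simp only [Zsqrtd.im_add, Zsqrtd.im_one]
      push_cast
      linear_combination e2




/-- enumeration of units -/
lemma unit_enum {u : GaussianInt} (h : IsUnit u) :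
    u = 1 ∨ u = -1 ∨ u = sqrtd ∨ u = -sqrtd := by
  obtain ⟨a, b⟩ := u
  have h1 : (⟨a,b⟩ : GaussianInt).norm.natAbs = 1 := Zsqrtd.norm_eq_one_iff.mpr h
  have h2 : (⟨a,b⟩ : GaussianInt).norm = a^2 + b^2 := by
    rw [Zsqrtd.norm_def]; ring
  rw [h2] at h1
  have hnn : 0 ≤ a^2 + b^2 := by positivity
  have h3 : a^2 + b^2 = 1 := by omega
  have ha1 : -1 ≤ a := by nlinarith
  have ha2 : a ≤ 1 := by nlinarith
  have hb1 : -1 ≤ b := by nlinarith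
  have hb2 : b ≤ 1 := by nlinarith
  interval_cases a <;> interval_cases b <;> first | decide | (exfalso; norm_num at h3)

lemma unit_pow4 {u : GaussianInt} (h : IsUnit u) : u^4 = 1 := by
  rcases unit_enum h with rfl | rfl | rfl | rfl <;> decide

lemma unit_sq {u : GaussianInt} (h : IsUnit u) : u^2 = 1 ∨ u^2 = -1 := by
  rcases unit_enum h with rfl | rfl | rfl | rfl <;> [left; left; right; right] <;> decide

lemma norm_dvd {a b : GaussianInt} (h : a ∣ b) : a.norm ∣ b.norm := by
  obtain ⟨c, rfl⟩ := h
  exact ⟨c.norm, (Zsqrtd.norm_mul a c)⟩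

lemma not_pp3_dvd_two : ¬ (π^3 ∣ (2 : GaussianInt)) := by
  intro h
  have h1 := norm_dvd h
  have e1 : (π^3 : GaussianInt).norm = 8 := by decide
  have e2 : (2 : GaussianInt).norm = 4 := by decide
  rw [e1, e2] at h1
  omega

lemma not_pp4_dvd_one_sub : ¬ (π^4 ∣ (1 - sqrtd : GaussianInt)) := by
  intro h
  have h1 := norm_dvd h
  have e1 : (π^4 : GaussianInt).norm = 16 := by decide
  have e2 : (1 - sqrtd : GaussianInt).norm = 2 := by decide
  rw [e1, e2] at h1; omega

lemma not_pp4_dvd_one_add : ¬ (π^4 ∣ (1 + sqrtd : GaussianInt)) := by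
  intro h
  have h1 := norm_dvd h
  have e1 : (π^4 : GaussianInt).norm = 16 := by decide
  have e2 : (1 + sqrtd : GaussianInt).norm = 2 := by decide
  rw [e1, e2] at h1; omega

lemma odd_unit {u : GaussianInt} (h : IsUnit u) : ¬ π ∣ u :=
  fun hd => pp_prime.not_unit (isUnit_of_dvd_unit hd h)

lemma odd_mul {a b : GaussianInt} (ha : ¬ π ∣ a) (hb : ¬ π ∣ b) : ¬ π ∣ a * b := by
  intro h
  rcases pp_prime.dvd_mul.mp h with h | h
  exacts [ha h, hb h]

lemma odd_ne_zero {a : GaussianInt} (ha : ¬ π ∣ a) : a ≠ 0 := fun h => ha (h ▸ dvd_zero _)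

/-- exponent bound -/
lemma pp_pow_le {k n : ℕ} {u : GaussianInt} (hu : ¬ π ∣ u) (h : π^k ∣ π^n * u) : k ≤ n := by
  by_contra hlt
  push_neg at hlt
  have h1 : (π^(n+1) : GaussianInt) ∣ π^n * u := (pow_dvd_pow _ hlt).trans h
  rw [pow_succ] at h1
  have h2 : (π^n : GaussianInt) ≠ 0 := pow_ne_zero _ pp_ne_zero
  exact hu ((mul_dvd_mul_iff_left h2).mp h1)

lemma pp_decomp_unique {a b : ℕ} {u v : GaussianInt} (hu : ¬ π ∣ u) (hv : ¬ π ∣ v)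
    (h : π^a * u = π^b * v) : a = b ∧ u = v := by
  have hab : a = b := le_antisymm
    (pp_pow_le hv (h ▸ Dvd.intro u rfl))
    (pp_pow_le hu (h.symm ▸ Dvd.intro v rfl))
  subst hab
  exact ⟨rfl, mul_left_cancel₀ (pow_ne_zero _ pp_ne_zero) h⟩

/-- decomposition into π-power times odd part -/
lemma pp_decomp {a : GaussianInt} (ha : a ≠ 0) : ∃ (n : ℕ) (b : GaussianInt), ¬ π ∣ b ∧ a = π^n * b :=
  WfDvdMonoid.max_power_factor ha pp_prime.irreducible

lemma coprime_of_no_common_prime {a b : GaussianInt} (ha : a ≠ 0)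
    (H : ∀ p : GaussianInt, Prime p → p ∣ a → p ∣ b → False) : IsCoprime a b :=
  isCoprime_of_prime_dvd (fun ⟨h1, _⟩ => ha h1) (fun z hz hza hzb => H z hz hza hzb)

/-- extraction of squares from coprime products -/
lemma sq_extract {A B w : GaussianInt} (hcop : IsCoprime A B) (h : A * B = w^2) :
    ∃ u m : GaussianInt, IsUnit u ∧ A = u * m^2 := by
  obtain ⟨d, u, hu⟩ := exists_associated_pow_of_mul_eq_pow' hcop h
  exact ⟨u, d, u.isUnit, by rw [← hu]; ring⟩

lemma pow4_extract {A B w : GaussianInt} (hcop : IsCoprime A B) (h : A * B = w^4) :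
    ∃ u m : GaussianInt, IsUnit u ∧ A = u * m^4 := by
  obtain ⟨d, u, hu⟩ := exists_associated_pow_of_mul_eq_pow' hcop h
  exact ⟨u, d, u.isUnit, by rw [← hu]; ring⟩

/-- from (m*n)^k ∣ x^k and x^k ∣ unit * (m*n)^k : x = unit * m * n -/
lemma assoc_of_pow4_eq {x c : GaussianInt} {v : GaussianInt} (hv : IsUnit v)
    (h : x^4 = v * c^4) (hx : x ≠ 0) : ∃ u : GaussianInt, IsUnit u ∧ x = u * c := by
  have h1 : c^4 ∣ x^4 := ⟨v, by rw [h]; ring⟩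
  have h2 : x^4 ∣ c^4 := by
    obtain ⟨v', hv'⟩ := hv.exists_left_inv
    exact ⟨v', by rw [h, show v * c ^ 4 * v' = (v' * v) * c^4 by ring, hv', one_mul]⟩
  have hc : c ∣ x := (IsIntegrallyClosed.pow_dvd_pow_iff (by norm_num : (4:ℕ) ≠ 0)).mp h1
  have hx' : x ∣ c := (IsIntegrallyClosed.pow_dvd_pow_iff (by norm_num : (4:ℕ) ≠ 0)).mp h2
  obtain ⟨u, hu, rfl⟩ : ∃ u, IsUnit u ∧ x = u * c := by
    obtain ⟨k, hk⟩ := hc; obtain ⟨l, hl⟩ := hx'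
    have hcne : c ≠ 0 := by rintro rfl; simp at hk; exact hx hk
    have : c * (k * l) = c * 1 := by rw [← mul_assoc, ← hk, ← hl, mul_one]
    have hkl := mul_left_cancel₀ hcne this
    exact ⟨k, IsUnit.of_mul_eq_one l hkl, by rw [hk, mul_comm]⟩
  exact ⟨u, hu, rfl⟩


lemma two_eq : (2 : GaussianInt) = -sqrtd * π^2 := by decide

lemma two_sqrtd : (2 : GaussianInt) * sqrtd = π^2 := by decide

lemma isUnit_sqrtd : IsUnit (sqrtd : GaussianInt) :=
  IsUnit.of_mul_eq_one (-sqrtd) (by decide)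

lemma isUnit_neg_sqrtd : IsUnit (-sqrtd : GaussianInt) :=
  IsUnit.of_mul_eq_one (sqrtd) (by decide)

lemma odd_sqrtd : ¬ π ∣ (sqrtd : GaussianInt) := odd_unit isUnit_sqrtd

lemma odd_add {a b : GaussianInt} (ha : ¬ π ∣ a) (hb : ¬ π ∣ b) : π ∣ a + b := by
  obtain ⟨k, hk⟩ : Odd (a.re + a.im) :=
    ((a.re + a.im).even_or_odd).resolve_left
      (fun ⟨k, hk⟩ => ha ((pp_dvd_iff a).mpr ⟨k, by omega⟩))
  obtain ⟨l, hl⟩ : Odd (b.re + b.im) :=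
    ((b.re + b.im).even_or_odd).resolve_left
      (fun ⟨l, hl⟩ => hb ((pp_dvd_iff b).mpr ⟨l, by omega⟩))
  apply (pp_dvd_iff _).mpr
  refine ⟨k + l + 1, ?_⟩
  have h1 : (a+b).re = a.re + b.re := Zsqrtd.re_add a b
  have h2 : (a+b).im = a.im + b.im := Zsqrtd.im_add a b
  omega

lemma odd_sub {a b : GaussianInt} (ha : ¬ π ∣ a) (hb : ¬ π ∣ b) : π ∣ a - b := by
  obtain ⟨k, hk⟩ : Odd (a.re + a.im) :=
    ((a.re + a.im).even_or_odd).resolve_left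
      (fun ⟨k, hk⟩ => ha ((pp_dvd_iff a).mpr ⟨k, by omega⟩))
  obtain ⟨l, hl⟩ : Odd (b.re + b.im) :=
    ((b.re + b.im).even_or_odd).resolve_left
      (fun ⟨l, hl⟩ => hb ((pp_dvd_iff b).mpr ⟨l, by omega⟩))
  apply (pp_dvd_iff _).mpr
  refine ⟨k - l, ?_⟩
  have h1 : (a-b).re = a.re - b.re := Zsqrtd.re_sub a b
  have h2 : (a-b).im = a.im - b.im := Zsqrtd.im_sub a b
  omega

lemma assoc_of_pow_eq {k : ℕ} (hk : k ≠ 0) {x c v : GaussianInt} (hv : IsUnit v)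
    (h : x^k = v * c^k) (hx : x ≠ 0) : ∃ u, IsUnit u ∧ x = u * c ∧ v = u^k := by
  have h1 : c^k ∣ x^k := ⟨v, by rw [h]; ring⟩
  obtain ⟨v', hv'⟩ := hv.exists_left_inv
  have h2 : x^k ∣ c^k :=
    ⟨v', by rw [h, show v * c^k * v' = (v' * v) * c^k by ring, hv', one_mul]⟩
  have hc : c ∣ x := (IsIntegrallyClosed.pow_dvd_pow_iff hk).mp h1
  have hx' : x ∣ c := (IsIntegrallyClosed.pow_dvd_pow_iff hk).mp h2
  obtain ⟨u1, hu1⟩ := hc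
  obtain ⟨l, hl⟩ := hx'
  have hcne : c ≠ 0 := by rintro rfl; rw [zero_mul] at hu1; exact hx hu1
  have hkl : u1 * l = 1 := mul_left_cancel₀ hcne (by rw [← mul_assoc, ← hu1, ← hl, mul_one])
  have huu : IsUnit u1 := IsUnit.of_mul_eq_one l hkl
  refine ⟨u1, huu, by rw [hu1, mul_comm], ?_⟩
  have he : u1^k * c^k = v * c^k := by rw [← mul_pow, mul_comm u1 c, ← hu1, h]
  exact (mul_right_cancel₀ (pow_ne_zero k hcne) he).symm
/-- Shape A : `X⁴ - Y⁴ = (πᵗ W)²` with X, Y, W odd. -/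
def ShA (X Y W : GaussianInt) (t : ℕ) : Prop :=
  ¬ π ∣ X ∧ ¬ π ∣ Y ∧ ¬ π ∣ W ∧ IsCoprime X Y ∧ X^4 - Y^4 = (π^t * W)^2

/-- Shape B : `X⁴ - (πᵉ Y)⁴ = W²` with X, Y, W odd, e ≥ 1. -/
def ShB (X Y W : GaussianInt) (e : ℕ) : Prop :=
  ¬ π ∣ X ∧ ¬ π ∣ Y ∧ ¬ π ∣ W ∧ IsCoprime X Y ∧ 1 ≤ e ∧ X^4 - (π^e * Y)^4 = W^2

/-- Shape C : `(πᵛ X)⁴ - Y⁴ = W²` with X, Y, W odd, v ≥ 1. -/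
def ShC (X Y W : GaussianInt) (v : ℕ) : Prop :=
  ¬ π ∣ X ∧ ¬ π ∣ Y ∧ ¬ π ∣ W ∧ IsCoprime X Y ∧ 1 ≤ v ∧ (π^v * X)^4 - Y^4 = W^2

lemma pp_dvd_of_prime_dvd {p a : GaussianInt} (hp : Prime p) (hpπ : p ∣ π) (hpa : p ∣ a) :
    π ∣ a := by
  obtain ⟨c, hc⟩ := hpπ
  have hcu : IsUnit c := (pp_prime.irreducible.isUnit_or_isUnit hc).resolve_left hp.not_unit
  obtain ⟨cu, rfl⟩ := hcu
  obtain ⟨k, hk⟩ := hpa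
  refine ⟨(↑cu⁻¹ : GaussianInt) * k, ?_⟩
  rw [hc, hk, show p * ↑cu * ((↑cu⁻¹ : GaussianInt) * k) = p * ((↑cu * ↑cu⁻¹) * k) by ring,
    Units.mul_inv, one_mul]

lemma prime_not_dvd_pp {p a : GaussianInt} (hp : Prime p) (ha : ¬ π ∣ a) (hpa : p ∣ a) :
    ¬ p ∣ π := fun h => ha (pp_dvd_of_prime_dvd hp h hpa)

lemma prime_dvd_odd_part {p u : GaussianInt} {n : ℕ} (hp : Prime p) (hnπ : ¬ p ∣ π)
    (h : p ∣ π^n * u) : p ∣ u := by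
  rcases hp.dvd_mul.mp h with h1 | h1
  · exact absurd (hp.dvd_of_dvd_pow h1) hnπ
  · exact h1

lemma prime_dvd_unit_part {p u v : GaussianInt} (hp : Prime p) (hv : IsUnit v)
    (h : p ∣ v * u) : p ∣ u := by
  rcases hp.dvd_mul.mp h with h1 | h1
  · exact absurd (isUnit_of_dvd_unit h1 hv) hp.not_unit
  · exact h1

lemma unit_cases_sq_neg_one {γ : GaussianInt} (hγ : IsUnit γ) (h : γ^2 = -1) :
    γ = sqrtd ∨ γ = -sqrtd := by
  rcases unit_enum hγ with rfl | rfl | rfl | rfl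
  · exact absurd h (by decide)
  · exact absurd h (by decide)
  · exact Or.inl rfl
  · exact Or.inr rfl

lemma unit_cases_sq_one {γ : GaussianInt} (hγ : IsUnit γ) (h : γ^2 = 1) :
    γ = 1 ∨ γ = -1 := by
  rcases unit_enum hγ with rfl | rfl | rfl | rfl
  · exact Or.inl rfl
  · exact Or.inr rfl
  · exact absurd h (by decide)
  · exact absurd h (by decide)

lemma odd_of_factor_left {a b : GaussianInt} (h : ¬ π ∣ a * b) : ¬ π ∣ a :=
  fun hd => h (hd.mul_right b)

lemma odd_pow {a : GaussianInt} {n : ℕ} (ha : ¬ π ∣ a) : ¬ π ∣ a^n :=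
  fun h => ha (pp_prime.dvd_of_dvd_pow h)

lemma pow4_mul (a : GaussianInt) (m : ℕ) : (π^m * a)^4 = π^(m*4) * a^4 := by
  rw [mul_pow, ← pow_mul]

lemma pp_dvd_of_pp7 {x : GaussianInt} (h : π^7 ∣ x) : π ∣ x :=
  (dvd_pow_self (π : GaussianInt) (by norm_num : (7:ℕ) ≠ 0)).trans h

/-- all-odd kill : `c⁴ + d⁴ = γ·Y²` with c, d, Y odd and γ a unit is impossible. -/
lemma kill_plus {c d Y γ : GaussianInt} (hc : ¬ π ∣ c) (hd : ¬ π ∣ d) (hY : ¬ π ∣ Y)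
    (hγ : IsUnit γ) (h : c^4 + d^4 = γ * Y^2) : False := by
  have h2 : π ∣ c^4 + d^4 := by
    have e : c^4 + d^4 = (c^4 - 1) + (d^4 - 1) + 2 := by ring
    rw [e]
    refine dvd_add (dvd_add (pp_dvd_of_pp7 (L1 hc)) (pp_dvd_of_pp7 (L1 hd)))
      ⟨-sqrtd * π, by rw [two_eq]; ring⟩
  rw [h] at h2
  exact hY (pp_prime.dvd_of_dvd_pow (prime_dvd_unit_part pp_prime hγ h2))

/-- all-odd kill : `c⁴ - d⁴ = γ·Y²` with c, d, Y odd and γ a unit is impossible. -/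
lemma kill_diff {c d Y γ : GaussianInt} (hc : ¬ π ∣ c) (hd : ¬ π ∣ d) (hY : ¬ π ∣ Y)
    (hγ : IsUnit γ) (h : c^4 - d^4 = γ * Y^2) : False := by
  have h2 : π ∣ c^4 - d^4 := by
    have e : c^4 - d^4 = (c^4 - 1) - (d^4 - 1) := by ring
    rw [e]
    exact dvd_sub (pp_dvd_of_pp7 (L1 hc)) (pp_dvd_of_pp7 (L1 hd))
  rw [h] at h2
  exact hY (pp_prime.dvd_of_dvd_pow (prime_dvd_unit_part pp_prime hγ h2))

/-- mixed kill : `c⁴ + E⁴ = γ·Y²` with c, Y odd, E even, γ = ±i is impossible. -/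
lemma kill_mixed {c E Y γ : GaussianInt} (hc : ¬ π ∣ c) (hY : ¬ π ∣ Y)
    (hγ : γ = sqrtd ∨ γ = -sqrtd) (hE : π ∣ E) (h : c^4 + E^4 = γ * Y^2) : False := by
  have h1 : π^4 ∣ γ * Y^2 - 1 := by
    have e : γ * Y^2 - 1 = (c^4 - 1) + E^4 := by rw [← h]; ring
    rw [e]
    exact dvd_add ((pow_dvd_pow (π:GaussianInt) (by norm_num : 4 ≤ 7)).trans (L1 hc))
      (pow_dvd_pow_of_dvd hE 4)
  rcases L2 hY with h2 | h2
  · have key : π^4 ∣ γ - 1 := by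
      have e : γ - 1 = (γ * Y^2 - 1) - γ * (Y^2 - 1) := by ring
      rw [e]; exact dvd_sub h1 (Dvd.dvd.mul_left h2 γ)
    rcases hγ with rfl | rfl
    · exact not_pp4_dvd_one_sub (by
        rw [show (1 - sqrtd : GaussianInt) = -(sqrtd - 1) by ring]
        exact dvd_neg.mpr key)
    · exact not_pp4_dvd_one_add (by
        rw [show (1 + sqrtd : GaussianInt) = -(-sqrtd - 1) by ring]
        exact dvd_neg.mpr key)
  · have key : π^4 ∣ -γ - 1 := by
      have e : -γ - 1 = (γ * Y^2 - 1) - γ * (Y^2 + 1) := by ring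
      rw [e]; exact dvd_sub h1 (Dvd.dvd.mul_left h2 γ)
    rcases hγ with rfl | rfl
    · exact not_pp4_dvd_one_add (by
        rw [show (1 + sqrtd : GaussianInt) = -(-sqrtd - 1) by ring]
        exact dvd_neg.mpr key)
    · exact not_pp4_dvd_one_sub (by
        rw [show (1 - sqrtd : GaussianInt) = -(-(-sqrtd) - 1) by ring]
        exact dvd_neg.mpr key)

/-- kill : `m⁴ + n⁴ = R` with m, n odd and `π³ ∣ R` is impossible. -/
lemma kill_pi3 {m n R : GaussianInt} (hm : ¬ π ∣ m) (hn : ¬ π ∣ n)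
    (h : m^4 + n^4 = R) (hR : π^3 ∣ R) : False := by
  apply not_pp3_dvd_two
  have e : (2 : GaussianInt) = R - (m^4 - 1) - (n^4 - 1) := by rw [← h]; ring
  rw [e]
  exact dvd_sub (dvd_sub hR ((pow_dvd_pow (π:GaussianInt) (by norm_num : 3 ≤ 7)).trans (L1 hm)))
    ((pow_dvd_pow (π:GaussianInt) (by norm_num : 3 ≤ 7)).trans (L1 hn))

/-- Step B : a Shape-B solution yields a Shape-A solution with parameter e+1. -/
lemma stepB {X Y W : GaussianInt} {e : ℕ} (h : ShB X Y W e) :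
    ∃ X' Y' W', ShA X' Y' W' (e+1) := by
  obtain ⟨hX, hY, hW, hcop, he, heq⟩ := h
  obtain ⟨f, rfl⟩ : ∃ f, e = f + 1 := ⟨e - 1, by omega⟩
  have hsq : (sqrtd : GaussianInt)^2 = -1 := by decide
  have hFF : (W + sqrtd * (π^(f+1) * Y)^2) * (W - sqrtd * (π^(f+1) * Y)^2) = X^4 := by
    linear_combination (-1 : GaussianInt) * heq - ((π^(f+1)*Y)^4) * hsq
  have hdvdV : π ∣ sqrtd * (π^(f+1) * Y)^2 := ⟨π^(2*f+1) * (sqrtd * Y^2), by ring⟩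
  have hoddFp : ¬ π ∣ (W + sqrtd * (π^(f+1) * Y)^2) := by
    intro hd
    exact hW (by
      have e2 : W = (W + sqrtd * (π^(f+1) * Y)^2) - sqrtd * (π^(f+1) * Y)^2 := by ring
      rw [e2]; exact dvd_sub hd hdvdV)
  have hoddFm : ¬ π ∣ (W - sqrtd * (π^(f+1) * Y)^2) := by
    intro hd
    exact hW (by
      have e2 : W = (W - sqrtd * (π^(f+1) * Y)^2) + sqrtd * (π^(f+1) * Y)^2 := by ring
      rw [e2]; exact dvd_add hd hdvdV)
  have hcopF : IsCoprime (W + sqrtd * (π^(f+1) * Y)^2) (W - sqrtd * (π^(f+1) * Y)^2) := by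
    apply coprime_of_no_common_prime (odd_ne_zero hoddFp)
    intro p hp hp1 hp2
    have hpπ : ¬ p ∣ π := prime_not_dvd_pp hp hoddFp hp1
    have hpX : p ∣ X := by
      have : p ∣ X^4 := hFF ▸ hp1.mul_right _
      exact hp.dvd_of_dvd_pow this
    have hpW : p ∣ W := by
      have h2W : p ∣ π^2 * (-sqrtd * W) := by
        have e2 : π^2 * (-sqrtd * W) = (W + sqrtd * (π^(f+1) * Y)^2) +
            (W - sqrtd * (π^(f+1) * Y)^2) := by linear_combination (-W) * two_eq
        rw [e2]; exact dvd_add hp1 hp2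
      exact prime_dvd_unit_part hp isUnit_neg_sqrtd (prime_dvd_odd_part hp hpπ h2W)
    have hpY : p ∣ Y := by
      have h2Y : p ∣ π^(2*f+4) * Y^2 := by
        have e2 : π^(2*f+4) * Y^2 = (W + sqrtd * (π^(f+1) * Y)^2) -
            (W - sqrtd * (π^(f+1) * Y)^2) := by
          linear_combination (-(π^(2*f+2) * Y^2)) * two_sqrtd
        rw [e2]; exact dvd_sub hp1 hp2
      exact hp.dvd_of_dvd_pow (prime_dvd_odd_part hp hpπ h2Y)
    exact hp.not_unit (hcop.isUnit_of_dvd' hpX hpY)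
  obtain ⟨μ, m, hμ, hm⟩ := pow4_extract hcopF hFF
  obtain ⟨ν, n, hν, hn⟩ := pow4_extract hcopF.symm (by rw [mul_comm] at hFF; exact hFF)
  have hXeq : X^4 = (μ*ν) * (m*n)^4 := by rw [← hFF, hm, hn]; ring
  obtain ⟨u, hu, hXmn, hμν⟩ := assoc_of_pow_eq (by norm_num : (4:ℕ) ≠ 0)
    (hμ.mul hν) hXeq (odd_ne_zero hX)
  have hμν1 : μ * ν = 1 := by rw [hμν, unit_pow4 hu]
  have hsub : μ*m^4 - ν*n^4 = π^(2*f+4) * Y^2 := by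
    rw [← hm, ← hn]; linear_combination (π^(2*f+2) * Y^2) * two_sqrtd
  have hkey : μ^2*m^4 - n^4 = μ * (π^(2*f+4) * Y^2) := by
    linear_combination μ * hsub + n^4 * hμν1
  -- oddness and coprimality of m, n
  have hoddm : ¬ π ∣ m := by
    intro hd; exact hoddFp (by rw [hm]; exact ((hd.pow (by norm_num)).mul_left μ))
  have hoddn : ¬ π ∣ n := by
    intro hd; exact hoddFm (by rw [hn]; exact ((hd.pow (by norm_num)).mul_left ν))
  have hcopmn : IsCoprime m n := by
    apply coprime_of_no_common_prime (odd_ne_zero hoddm)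
    intro p hp hp1 hp2
    refine hp.not_unit (hcopF.isUnit_of_dvd' ?_ ?_)
    · rw [hm]; exact (hp1.pow (by norm_num)).mul_left μ
    · rw [hn]; exact (hp2.pow (by norm_num)).mul_left ν
  rcases unit_sq hμ with h1 | h1
  · rcases unit_cases_sq_one hμ h1 with rfl | rfl
    · refine ⟨m, n, Y, hoddm, hoddn, hY, hcopmn, ?_⟩
      linear_combination hkey
    · refine ⟨m, n, sqrtd * Y, hoddm, hoddn, odd_mul odd_sqrtd hY, hcopmn, ?_⟩
      linear_combination hkey - (π^(2*f+4)*Y^2) * hsq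
  · -- μ² = -1 : impossible
    exfalso
    have hplus : m^4 + n^4 = -μ * (π^(2*f+4) * Y^2) := by
      linear_combination (-1 : GaussianInt) * hkey + m^4 * h1
    exact kill_pi3 hoddm hoddn hplus ⟨-μ * (π^(2*f+1) * Y^2), by ring⟩

/-- Step C : a Shape-C solution forces v ≥ 2 and yields Shape B or C at v-1. -/
lemma stepC {X Y W : GaussianInt} {v : ℕ} (h : ShC X Y W v) :
    2 ≤ v ∧ ∃ X' Y' W', ShB X' Y' W' (v-1) ∨ ShC X' Y' W' (v-1) := by
  obtain ⟨hX, hY, hW, hcop, hv, heq⟩ := h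
  have hsq : (sqrtd : GaussianInt)^2 = -1 := by decide
  -- factorisation (W + i Y²)(W - i Y²) = π^{4v} X⁴
  have hGG : (W + sqrtd * Y^2) * (W - sqrtd * Y^2) = π^(4*v) * X^4 := by
    linear_combination (-1 : GaussianInt) * heq - Y^4 * hsq
  have hoddY2 : ¬ π ∣ sqrtd * Y^2 := odd_mul odd_sqrtd (odd_pow hY)
  have hGp : π ∣ (W + sqrtd * Y^2) := odd_add hW hoddY2
  have hGm : π ∣ (W - sqrtd * Y^2) := odd_sub hW hoddY2
  have hGpne : (W + sqrtd * Y^2) ≠ 0 := by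
    intro h0
    have : π^(4*v) * X^4 = 0 := by rw [← hGG, h0, zero_mul]
    rcases mul_eq_zero.mp this with h2 | h2
    · exact pp_ne_zero (pow_eq_zero_iff (by omega) |>.mp h2)
    · exact (odd_ne_zero hX) (pow_eq_zero_iff (by norm_num) |>.mp h2)
  have hGmne : (W - sqrtd * Y^2) ≠ 0 := by
    intro h0
    have : π^(4*v) * X^4 = 0 := by rw [← hGG, h0, mul_zero]
    rcases mul_eq_zero.mp this with h2 | h2
    · exact pp_ne_zero (pow_eq_zero_iff (by omega) |>.mp h2)
    · exact (odd_ne_zero hX) (pow_eq_zero_iff (by norm_num) |>.mp h2)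
  obtain ⟨c, C, hoddC, hCdef⟩ := pp_decomp hGpne
  obtain ⟨d, D, hoddD, hDdef⟩ := pp_decomp hGmne
  -- product decomposition
  have hCD : c + d = 4*v ∧ C * D = X^4 := by
    have e2 : π^(c+d) * (C*D) = π^(4*v) * X^4 := by
      rw [← hGG, hCdef, hDdef]; ring
    exact pp_decomp_unique (odd_mul hoddC hoddD) (odd_pow hX) e2
  obtain ⟨hcd, hCDX⟩ := hCD
  -- c, d ≥ 1
  have hc1 : 1 ≤ c := by
    rcases Nat.eq_zero_or_pos c with h0 | h0
    · exfalso; rw [h0, pow_zero, one_mul] at hCdef; exact hoddC (hCdef ▸ hGp)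
    · exact h0
  have hd1 : 1 ≤ d := by
    rcases Nat.eq_zero_or_pos d with h0 | h0
    · exfalso; rw [h0, pow_zero, one_mul] at hDdef; exact hoddD (hDdef ▸ hGm)
    · exact h0
  -- π² ∣ 2W
  have h2W : (2:GaussianInt) * W = π^2 * (-sqrtd * W) := by linear_combination W * two_eq
  -- not both ≥ 3
  have hnot33 : ¬ (3 ≤ c ∧ 3 ≤ d) := by
    rintro ⟨h3c, h3d⟩
    have hp3 : π^3 ∣ π^2 * (-sqrtd * W) := by
      rw [← h2W]
      have e2 : (2:GaussianInt) * W = (W + sqrtd*Y^2) + (W - sqrtd*Y^2) := by ring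
      rw [e2, hCdef, hDdef]
      exact dvd_add ((pow_dvd_pow _ h3c).mul_right C) ((pow_dvd_pow _ h3d).mul_right D)
    have : π^3 ∣ π^2 * (-sqrtd * W) → False := by
      intro hdvd
      have h5 : π ∣ -sqrtd * W := by
        have e3 : (π:GaussianInt)^3 = π^2 * π := by ring
        rw [e3] at hdvd
        exact (mul_dvd_mul_iff_left (pow_ne_zero 2 pp_ne_zero)).mp hdvd
      exact (odd_mul (odd_unit isUnit_neg_sqrtd) hW) h5
    exact this hp3
  -- neither can be 1
  have hc2 : 2 ≤ c := by
    rcases Nat.lt_or_ge c 2 with h0 | h0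
    · exfalso
      have hceq : c = 1 := by omega
      have hd3 : 3 ≤ d := by omega
      have hπ2m : π^2 ∣ (W - sqrtd*Y^2) := by
        rw [hDdef]; exact (pow_dvd_pow _ (by omega)).mul_right D
      have hπ2p : π^2 ∣ (W + sqrtd*Y^2) := by
        have e2 : (W + sqrtd*Y^2) = 2*W - (W - sqrtd*Y^2) := by ring
        rw [e2, h2W]
        exact dvd_sub (Dvd.intro _ rfl) hπ2m
      rw [hCdef, hceq] at hπ2p
      have h15 := pp_pow_le (k := 2) (n := 1) hoddC (by rw [pow_one]; rw [pow_one] at hπ2p; exact hπ2p)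
      omega
    · exact h0
  have hd2 : 2 ≤ d := by
    rcases Nat.lt_or_ge d 2 with h0 | h0
    · exfalso
      have hdeq : d = 1 := by omega
      have hc3 : 3 ≤ c := by omega
      have hπ2p : π^2 ∣ (W + sqrtd*Y^2) := by
        rw [hCdef]; exact (pow_dvd_pow _ (by omega)).mul_right C
      have hπ2m : π^2 ∣ (W - sqrtd*Y^2) := by
        have e2 : (W - sqrtd*Y^2) = 2*W - (W + sqrtd*Y^2) := by ring
        rw [e2, h2W]
        exact dvd_sub (Dvd.intro _ rfl) hπ2p
      rw [hDdef, hdeq] at hπ2m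
      have h15 := pp_pow_le (k := 2) (n := 1) hoddD (by rw [pow_one]; rw [pow_one] at hπ2m; exact hπ2m)
      omega
    · exact h0
  -- coprimality of C D
  have hcopCD : IsCoprime C D := by
    apply coprime_of_no_common_prime (odd_ne_zero hoddC)
    intro p hp hp1 hp2
    have hpπ : ¬ p ∣ π := prime_not_dvd_pp hp hoddC hp1
    have hpGp : p ∣ (W + sqrtd*Y^2) := by rw [hCdef]; exact hp1.mul_left _
    have hpGm : p ∣ (W - sqrtd*Y^2) := by rw [hDdef]; exact hp2.mul_left _
    have hpW : p ∣ W := by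
      have : p ∣ π^2 * (-sqrtd * W) := by
        rw [← h2W]
        have e2 : (2:GaussianInt)*W = (W + sqrtd*Y^2) + (W - sqrtd*Y^2) := by ring
        rw [e2]; exact dvd_add hpGp hpGm
      exact prime_dvd_unit_part hp isUnit_neg_sqrtd (prime_dvd_odd_part hp hpπ this)
    have hpY : p ∣ Y := by
      have h2Y : p ∣ π^2 * Y^2 := by
        have e2 : π^2 * Y^2 = (W + sqrtd*Y^2) - (W - sqrtd*Y^2) := by
          linear_combination (-(Y^2)) * two_sqrtd
        rw [e2]; exact dvd_sub hpGp hpGm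
      exact hp.dvd_of_dvd_pow (prime_dvd_odd_part hp hpπ h2Y)
    have hpX : p ∣ X := hp.dvd_of_dvd_pow (hCDX ▸ hp1.mul_right D)
    exact hp.not_unit (hcop.isUnit_of_dvd' hpX hpY)
  obtain ⟨γ₁, c₁, hγ₁, hc₁⟩ := pow4_extract hcopCD hCDX
  obtain ⟨γ₂, d₁, hγ₂, hd₁⟩ := pow4_extract hcopCD.symm (by rw [mul_comm] at hCDX; exact hCDX)
  have hXeq : X^4 = (γ₁*γ₂) * (c₁*d₁)^4 := by rw [← hCDX, hc₁, hd₁]; ring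
  obtain ⟨u, hu, hXcd, hγγ⟩ := assoc_of_pow_eq (by norm_num : (4:ℕ) ≠ 0)
    (hγ₁.mul hγ₂) hXeq (odd_ne_zero hX)
  have hγγ1 : γ₁ * γ₂ = 1 := by rw [hγγ, unit_pow4 hu]
  have hoddc₁ : ¬ π ∣ c₁ := by
    intro hd0; exact hoddC (by rw [hc₁]; exact ((hd0.pow (by norm_num)).mul_left γ₁))
  have hoddd₁ : ¬ π ∣ d₁ := by
    intro hd0; exact hoddD (by rw [hd₁]; exact ((hd0.pow (by norm_num)).mul_left γ₂))
  have hcopc₁d₁ : IsCoprime c₁ d₁ := by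
    apply coprime_of_no_common_prime (odd_ne_zero hoddc₁)
    intro p hp hp1 hp2
    refine hp.not_unit (hcopCD.isUnit_of_dvd' ?_ ?_)
    · rw [hc₁]; exact (hp1.pow (by norm_num)).mul_left γ₁
    · rw [hd₁]; exact (hp2.pow (by norm_num)).mul_left γ₂
  -- the difference equation : G₊ - G₋ = π² Y²
  have hdiff : π^c * C - π^d * D = π^2 * Y^2 := by
    rw [← hCdef, ← hDdef]; linear_combination (Y^2) * two_sqrtd
  -- two symmetric cases : c = 2 or d = 2
  rcases (by omega : c = 2 ∨ d = 2) with hceq | hdeq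
  · -- c = 2, d = 4(v-1) + 2
    have hdval : d = (v-1)*4 + 2 := by omega
    have hYeq : Y^2 = C - π^((v-1)*4) * D := by
      have e2 : π^2 * Y^2 = π^2 * (C - π^((v-1)*4) * D) := by
        rw [← hdiff, hceq, hdval]; ring
      exact mul_left_cancel₀ (pow_ne_zero 2 pp_ne_zero) e2
    -- multiply by γ₂
    have hkey : γ₂ * Y^2 = c₁^4 - γ₂^2 * (π^(v-1) * d₁)^4 := by
      rw [pow4_mul, hYeq, hc₁, hd₁]
      linear_combination c₁^4 * hγγ1
    rcases unit_sq hγ₂ with h1 | h1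
    · -- γ₂² = 1 : descend
      have hv2 : 2 ≤ v := by
        by_contra hv1
        have hveq : v = 1 := by omega
        have hkey' := hkey
        rw [hveq] at hkey'
        simp only [show (1-1:ℕ) = 0 from rfl, pow_zero, one_mul] at hkey'
        have hcontr : c₁^4 - d₁^4 = γ₂ * Y^2 := by
          linear_combination (-1 : GaussianInt) * hkey' + d₁^4 * h1
        exact kill_diff hoddc₁ hoddd₁ hY hγ₂ hcontr
      refine ⟨hv2, ?_⟩
      rcases unit_cases_sq_one hγ₂ h1 with rfl | rfl
      · -- γ₂ = 1 : ShB (c₁, d₁, Y, v-1)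
        refine ⟨c₁, d₁, Y, Or.inl ⟨hoddc₁, hoddd₁, hY, hcopc₁d₁, by omega, ?_⟩⟩
        linear_combination (-1 : GaussianInt) * hkey
      · -- γ₂ = -1 : ShC (d₁, c₁, Y, v-1)
        refine ⟨d₁, c₁, Y, Or.inr ⟨hoddd₁, hoddc₁, hY, hcopc₁d₁.symm, by omega, ?_⟩⟩
        linear_combination hkey
    · -- γ₂² = -1 : dead
      exfalso
      have hplus : c₁^4 + (π^(v-1) * d₁)^4 = γ₂ * Y^2 := by
        linear_combination (-1 : GaussianInt) * hkey + ((π^(v-1) * d₁)^4) * h1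
      rcases Nat.lt_or_ge v 2 with hv1 | hv2
      · have hveq : v = 1 := by omega
        rw [hveq] at hplus
        simp only [show (1-1:ℕ) = 0 from rfl, pow_zero, one_mul] at hplus
        exact kill_plus hoddc₁ hoddd₁ hY hγ₂ hplus
      · exact kill_mixed hoddc₁ hY (unit_cases_sq_neg_one hγ₂ h1)
          ⟨π^(v-2) * d₁, by rw [show v - 1 = 1 + (v-2) by omega]; ring⟩ hplus
  · -- d = 2, c = 4v - 2
    have hcval : c = (v-1)*4 + 2 := by omega
    have hYeq : Y^2 = π^((v-1)*4) * C - D := by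
      have e2 : π^2 * Y^2 = π^2 * (π^((v-1)*4) * C - D) := by
        rw [← hdiff, hdeq, hcval]; ring
      exact mul_left_cancel₀ (pow_ne_zero 2 pp_ne_zero) e2
    have hkey : γ₁ * Y^2 = γ₁^2 * (π^(v-1) * c₁)^4 - d₁^4 := by
      rw [pow4_mul, hYeq, hc₁, hd₁]
      linear_combination (-(d₁^4)) * hγγ1
    rcases unit_sq hγ₁ with h1 | h1
    · have hv2 : 2 ≤ v := by
        by_contra hv1
        have hveq : v = 1 := by omega
        have hkey' := hkey
        rw [hveq] at hkey'
        simp only [show (1-1:ℕ) = 0 from rfl, pow_zero, one_mul] at hkey'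
        have hcontr : c₁^4 - d₁^4 = γ₁ * Y^2 := by
          linear_combination (-1 : GaussianInt) * hkey' - c₁^4 * h1
        exact kill_diff hoddc₁ hoddd₁ hY hγ₁ hcontr
      refine ⟨hv2, ?_⟩
      rcases unit_cases_sq_one hγ₁ h1 with rfl | rfl
      · -- γ₁ = 1 : ShC (c₁, d₁, Y, v-1)
        refine ⟨c₁, d₁, Y, Or.inr ⟨hoddc₁, hoddd₁, hY, hcopc₁d₁, by omega, ?_⟩⟩
        linear_combination (-1 : GaussianInt) * hkey
      · -- γ₁ = -1 : ShB (d₁, c₁, Y, v-1)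
        refine ⟨d₁, c₁, Y, Or.inl ⟨hoddd₁, hoddc₁, hY, hcopc₁d₁.symm, by omega, ?_⟩⟩
        linear_combination hkey
    · exfalso
      have hplus : d₁^4 + (π^(v-1) * c₁)^4 = -γ₁ * Y^2 := by
        linear_combination hkey + ((π^(v-1) * c₁)^4) * h1
      have hγ₁' : -γ₁ = sqrtd ∨ -γ₁ = -sqrtd := by
        have h1' : (-γ₁)^2 = -1 := by linear_combination h1
        exact unit_cases_sq_neg_one hγ₁.neg h1'
      rcases Nat.lt_or_ge v 2 with hv1 | hv2
      · have hveq : v = 1 := by omega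
        rw [hveq] at hplus
        simp only [show (1-1:ℕ) = 0 from rfl, pow_zero, one_mul] at hplus
        exact kill_plus hoddd₁ hoddc₁ hY hγ₁.neg hplus
      · exact kill_mixed hoddd₁ hY hγ₁'
          ⟨π^(v-2) * c₁, by rw [show v - 1 = 1 + (v-2) by omega]; ring⟩ hplus

lemma pow2_mul (a : GaussianInt) (m : ℕ) : (π^m * a)^2 = π^(m*2) * a^2 := by
  rw [mul_pow, ← pow_mul]

/-- Step A : a Shape-A solution forces t ≥ 4 and yields Shape B or C at t-2. -/
lemma stepA {X Y W : GaussianInt} {t : ℕ} (h : ShA X Y W t) :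
    4 ≤ t ∧ ∃ X' Y' W', ShB X' Y' W' (t-2) ∨ ShC X' Y' W' (t-2) := by
  obtain ⟨hX, hY, hW, hcop, heq⟩ := h
  have hsq : (sqrtd : GaussianInt)^2 = -1 := by decide
  have h7 : π^7 ∣ π^(t*2) * W^2 := by
    rw [← pow2_mul, ← heq, show X^4 - Y^4 = (X^4 - 1) - (Y^4 - 1) by ring]
    exact dvd_sub (L1 hX) (L1 hY)
  have ht4 : 4 ≤ t := by
    have := pp_pow_le (odd_pow hW) h7
    omega
  obtain ⟨k, rfl⟩ : ∃ k, t = k + 2 := ⟨t - 2, by omega⟩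
  have hk2 : 2 ≤ k := by omega
  refine ⟨by omega, ?_⟩
  have hMP : (X^2 - Y^2) * (X^2 + Y^2) = π^((k+2)*2) * W^2 := by
    rw [← pow2_mul, ← heq]; ring
  have hprodne : π^((k+2)*2) * W^2 ≠ 0 :=
    mul_ne_zero (pow_ne_zero _ pp_ne_zero) (pow_ne_zero _ (odd_ne_zero hW))
  have hMne : X^2 - Y^2 ≠ 0 := by
    intro h0; rw [h0, zero_mul] at hMP; exact hprodne hMP.symm
  have hPne : X^2 + Y^2 ≠ 0 := by
    intro h0; rw [h0, mul_zero] at hMP; exact hprodne hMP.symm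
  obtain ⟨a, M₀, hoddM₀, hMdef⟩ := pp_decomp hMne
  obtain ⟨b, P₀, hoddP₀, hPdef⟩ := pp_decomp hPne
  have hab : a + b = (k+2)*2 ∧ M₀ * P₀ = W^2 := by
    have e2 : π^(a+b) * (M₀*P₀) = π^((k+2)*2) * W^2 := by
      rw [← hMP, hMdef, hPdef]; ring
    exact pp_decomp_unique (odd_mul hoddM₀ hoddP₀) (odd_pow hW) e2
  obtain ⟨habsum, hW2⟩ := hab
  have hMdvd : π ∣ (X^2 - Y^2) := odd_sub (odd_pow hX) (odd_pow hY)
  have hPdvd : π ∣ (X^2 + Y^2) := odd_add (odd_pow hX) (odd_pow hY)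
  have ha1 : 1 ≤ a := by
    rcases Nat.eq_zero_or_pos a with h0 | h0
    · exfalso; rw [h0, pow_zero, one_mul] at hMdef; exact hoddM₀ (hMdef ▸ hMdvd)
    · exact h0
  have hb1 : 1 ≤ b := by
    rcases Nat.eq_zero_or_pos b with h0 | h0
    · exfalso; rw [h0, pow_zero, one_mul] at hPdef; exact hoddP₀ (hPdef ▸ hPdvd)
    · exact h0
  have h2X : 2 * X^2 = π^2 * (-sqrtd * X^2) := by linear_combination X^2 * two_eq
  have h2Y : 2 * Y^2 = π^2 * (-sqrtd * Y^2) := by linear_combination Y^2 * two_eq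
  have hnot33 : ¬ (3 ≤ a ∧ 3 ≤ b) := by
    rintro ⟨h3a, h3b⟩
    have hp3 : π^3 ∣ π^2 * (-sqrtd * X^2) := by
      rw [← h2X, show (2:GaussianInt)*X^2 = (X^2 - Y^2) + (X^2 + Y^2) by ring, hMdef, hPdef]
      exact dvd_add ((pow_dvd_pow _ h3a).mul_right M₀) ((pow_dvd_pow _ h3b).mul_right P₀)
    have h5 : π ∣ -sqrtd * X^2 := by
      rw [show (π:GaussianInt)^3 = π^2 * π by ring] at hp3
      exact (mul_dvd_mul_iff_left (pow_ne_zero 2 pp_ne_zero)).mp hp3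
    exact (odd_mul (odd_unit isUnit_neg_sqrtd) (odd_pow hX)) h5
  have ha2 : 2 ≤ a := by
    rcases Nat.lt_or_ge a 2 with h0 | h0
    · exfalso
      have haeq : a = 1 := by omega
      have hπ2P : π^2 ∣ (X^2 + Y^2) := by
        rw [hPdef]; exact (pow_dvd_pow _ (by omega)).mul_right P₀
      have hπ2M : π^2 ∣ (X^2 - Y^2) := by
        rw [show X^2 - Y^2 = 2*X^2 - (X^2 + Y^2) by ring, h2X]
        exact dvd_sub (Dvd.intro _ rfl) hπ2P
      rw [hMdef, haeq] at hπ2M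
      have h15 := pp_pow_le (k := 2) (n := 1) hoddM₀
        (by rw [pow_one]; rw [pow_one] at hπ2M; exact hπ2M)
      omega
    · exact h0
  have hb2 : 2 ≤ b := by
    rcases Nat.lt_or_ge b 2 with h0 | h0
    · exfalso
      have hbeq : b = 1 := by omega
      have hπ2M : π^2 ∣ (X^2 - Y^2) := by
        rw [hMdef]; exact (pow_dvd_pow _ (by omega)).mul_right M₀
      have hπ2P : π^2 ∣ (X^2 + Y^2) := by
        rw [show X^2 + Y^2 = 2*X^2 - (X^2 - Y^2) by ring, h2X]
        exact dvd_sub (Dvd.intro _ rfl) hπ2M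
      rw [hPdef, hbeq] at hπ2P
      have h15 := pp_pow_le (k := 2) (n := 1) hoddP₀
        (by rw [pow_one]; rw [pow_one] at hπ2P; exact hπ2P)
      omega
    · exact h0
  -- coprimality of M₀ P₀
  have hcopMP : IsCoprime M₀ P₀ := by
    apply coprime_of_no_common_prime (odd_ne_zero hoddM₀)
    intro p hp hp1 hp2
    have hpπ : ¬ p ∣ π := prime_not_dvd_pp hp hoddM₀ hp1
    have hpM : p ∣ (X^2 - Y^2) := by rw [hMdef]; exact hp1.mul_left _
    have hpP : p ∣ (X^2 + Y^2) := by rw [hPdef]; exact hp2.mul_left _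
    have hpX : p ∣ X := by
      have h6 : p ∣ π^2 * (-sqrtd * X^2) := by
        rw [← h2X, show (2:GaussianInt)*X^2 = (X^2 - Y^2) + (X^2 + Y^2) by ring]
        exact dvd_add hpM hpP
      exact hp.dvd_of_dvd_pow
        (prime_dvd_unit_part hp isUnit_neg_sqrtd (prime_dvd_odd_part hp hpπ h6))
    have hpY : p ∣ Y := by
      have h6 : p ∣ π^2 * (-sqrtd * Y^2) := by
        rw [← h2Y, show (2:GaussianInt)*Y^2 = (X^2 + Y^2) - (X^2 - Y^2) by ring]
        exact dvd_sub hpP hpM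
      exact hp.dvd_of_dvd_pow
        (prime_dvd_unit_part hp isUnit_neg_sqrtd (prime_dvd_odd_part hp hpπ h6))
    exact hp.not_unit (hcop.isUnit_of_dvd' hpX hpY)
  obtain ⟨α, m, hα, hMα⟩ := sq_extract hcopMP hW2
  obtain ⟨β, p, hβ, hPβ⟩ := sq_extract hcopMP.symm (by rw [mul_comm] at hW2; exact hW2)
  have hW2' : W^2 = (α*β) * (m*p)^2 := by rw [← hW2, hMα, hPβ]; ring
  obtain ⟨u, hu, hWmp, hαβu⟩ := assoc_of_pow_eq (by norm_num : (2:ℕ) ≠ 0)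
    (hα.mul hβ) hW2' (odd_ne_zero hW)
  have hαβsq : (α*β)^2 = 1 := by
    rw [hαβu, show ((u^2)^2 : GaussianInt) = u^4 by ring]; exact unit_pow4 hu
  have hα4 : α^4 = 1 := unit_pow4 hα
  have hβ4 : β^4 = 1 := unit_pow4 hβ
  have hoddm : ¬ π ∣ m := by
    intro hd; exact hoddM₀ (by rw [hMα]; exact ((hd.pow (by norm_num)).mul_left α))
  have hoddp : ¬ π ∣ p := by
    intro hd; exact hoddP₀ (by rw [hPβ]; exact ((hd.pow (by norm_num)).mul_left β))
  have hcopmp : IsCoprime m p := by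
    apply coprime_of_no_common_prime (odd_ne_zero hoddm)
    intro q hq hq1 hq2
    refine hq.not_unit (hcopMP.isUnit_of_dvd' ?_ ?_)
    · rw [hMα]; exact (hq1.pow (by norm_num)).mul_left α
    · rw [hPβ]; exact (hq2.pow (by norm_num)).mul_left β
  rcases (by omega : a = 2 ∨ b = 2) with haeq | hbeq
  · -- a = 2 : ShB (m, p, α*(X*Y), k)
    have hbval : b = k*2 + 2 := by omega
    have eM : X^2 - Y^2 = π^2 * M₀ := by rw [hMdef, haeq]
    have eP : X^2 + Y^2 = π^(k*2+2) * P₀ := by rw [hPdef, hbval]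
    have E1 : -sqrtd * X^2 = M₀ + π^(k*2) * P₀ := by
      apply mul_left_cancel₀ (pow_ne_zero 2 pp_ne_zero)
      rw [← h2X]; linear_combination eM + eP
    have E2 : -sqrtd * Y^2 = π^(k*2) * P₀ - M₀ := by
      apply mul_left_cancel₀ (pow_ne_zero 2 pp_ne_zero)
      rw [← h2Y]; linear_combination eP - eM
    have hprodE := congrArg₂ HMul.hMul E1 E2
    have hE3 : M₀^2 - (π^(k*2) * P₀)^2 = (X*Y)^2 := by
      linear_combination hprodE - (X*Y)^2 * hsq
    rw [hMα, hPβ] at hE3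
    refine ⟨m, p, α*(X*Y), Or.inl ⟨hoddm, hoddp, odd_mul (odd_unit hα) (odd_mul hX hY),
      hcopmp, by omega, ?_⟩⟩
    have : k + 2 - 2 = k := by omega
    rw [this]
    linear_combination α^2 * hE3 + (-(m^4)) * hα4 + (π^k*p)^4 * hαβsq
  · -- b = 2 : ShC (m, p, β*(X*Y), k)
    have haval : a = k*2 + 2 := by omega
    have eM : X^2 - Y^2 = π^(k*2+2) * M₀ := by rw [hMdef, haval]
    have eP : X^2 + Y^2 = π^2 * P₀ := by rw [hPdef, hbeq]
    have E1 : -sqrtd * X^2 = π^(k*2) * M₀ + P₀ := by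
      apply mul_left_cancel₀ (pow_ne_zero 2 pp_ne_zero)
      rw [← h2X]; linear_combination eM + eP
    have E2 : -sqrtd * Y^2 = P₀ - π^(k*2) * M₀ := by
      apply mul_left_cancel₀ (pow_ne_zero 2 pp_ne_zero)
      rw [← h2Y]; linear_combination eP - eM
    have hprodE := congrArg₂ HMul.hMul E1 E2
    have hE3 : (π^(k*2) * M₀)^2 - P₀^2 = (X*Y)^2 := by
      linear_combination hprodE - (X*Y)^2 * hsq
    rw [hMα, hPβ] at hE3
    refine ⟨m, p, β*(X*Y), Or.inr ⟨hoddm, hoddp, odd_mul (odd_unit hβ) (odd_mul hX hY),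
      hcopmp, by omega, ?_⟩⟩
    have : k + 2 - 2 = k := by omega
    rw [this]
    linear_combination β^2 * hE3 + p^4 * hβ4 + (-((π^k*m)^4)) * hαβsq

/-- The master descent : no solution of any shape exists. -/
lemma no_shapes : ∀ n : ℕ,
    (∀ X Y W t, 2*t = n → ¬ ShA X Y W t) ∧
    (∀ X Y W e, 2*e+3 = n → ¬ ShB X Y W e) ∧
    (∀ X Y W v, 2*v+2 = n → ¬ ShC X Y W v) := by
  intro n
  induction n using Nat.strong_induction_on with
  | _ n ih =>
    refine ⟨?_, ?_, ?_⟩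
    · rintro X Y W t rfl hA
      obtain ⟨ht4, X', Y', W', hnext⟩ := stepA hA
      rcases hnext with hB | hC
      · exact (ih (2*(t-2)+3) (by omega)).2.1 X' Y' W' (t-2) rfl hB
      · exact (ih (2*(t-2)+2) (by omega)).2.2 X' Y' W' (t-2) rfl hC
    · rintro X Y W e rfl hB
      obtain ⟨X', Y', W', hA⟩ := stepB hB
      exact (ih (2*(e+1)) (by omega)).1 X' Y' W' (e+1) rfl hA
    · rintro X Y W v rfl hC
      obtain ⟨hv2, X', Y', W', hnext⟩ := stepC hC
      rcases hnext with hB | hC'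
      · exact (ih (2*(v-1)+3) (by omega)).2.1 X' Y' W' (v-1) rfl hB
      · exact (ih (2*(v-1)+2) (by omega)).2.2 X' Y' W' (v-1) rfl hC'

/-- Hilbert's theorem : x⁴ - y⁴ = z² with x, y odd coprime forces z = 0. -/
theorem main_T {X Y Z : GaussianInt} (hX : ¬ π ∣ X) (hY : ¬ π ∣ Y)
    (hcop : IsCoprime X Y) (heq : X^4 - Y^4 = Z^2) : Z = 0 := by
  by_contra h0
  obtain ⟨t, W, hoddW, rfl⟩ := pp_decomp h0
  exact (no_shapes (2*t)).1 X Y W t rfl ⟨hX, hY, hoddW, hcop, heq⟩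

lemma isUnit_of_no_prime {x : GaussianInt} (hx : x ≠ 0)
    (H : ∀ p : GaussianInt, Prime p → p ∣ x → False) : IsUnit x := by
  by_contra h
  obtain ⟨i, hi, hidvd⟩ := WfDvdMonoid.exists_irreducible_factor h hx
  exact H i (UniqueFactorizationMonoid.irreducible_iff_prime.mp hi) hidvd

theorem final_thm (x y z : GaussianInt)
    (hnt : x * y * z ≠ 0)
    (hgcd : ∀ d : GaussianInt, d ∣ x → d ∣ y → d ∣ z → IsUnit d)
    (heq : x ^ 4 + y ^ 4 = sqrtd * z ^ 2) :
    (x = 1 ∨ x = -1 ∨ x = sqrtd ∨ x = -sqrtd) ∧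
    (y = 1 ∨ y = -1 ∨ y = sqrtd ∨ y = -sqrtd) ∧
    (z = sqrtd * (1 + sqrtd) ∨ z = -(sqrtd * (1 + sqrtd))) := by
  have hx0 : x ≠ 0 := by rintro rfl; simp at hnt
  have hy0 : y ≠ 0 := by rintro rfl; simp at hnt
  have hz0 : z ≠ 0 := by rintro rfl; simp at hnt
  have hsq : (sqrtd : GaussianInt)^2 = -1 := by decide
  -- no common primes
  have hxy : ∀ p : GaussianInt, Prime p → p ∣ x → p ∣ y → False := by
    intro p hp hp1 hp2
    have hpz : p ∣ z := by
      have h1 : p ∣ sqrtd * z^2 := by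
        rw [← heq]; exact dvd_add (hp1.pow (by norm_num)) (hp2.pow (by norm_num))
      exact hp.dvd_of_dvd_pow (prime_dvd_unit_part hp isUnit_sqrtd h1)
    exact hp.not_unit (hgcd p hp1 hp2 hpz)
  have hxz : ∀ p : GaussianInt, Prime p → p ∣ x → p ∣ z → False := by
    intro p hp hp1 hpz
    have hpy : p ∣ y := by
      have h1 : p ∣ y^4 := by
        rw [show y^4 = sqrtd * z^2 - x^4 by rw [← heq]; ring]
        exact dvd_sub ((hpz.pow (by norm_num)).mul_left sqrtd) (hp1.pow (by norm_num))
      exact hp.dvd_of_dvd_pow h1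
    exact hp.not_unit (hgcd p hp1 hpy hpz)
  have hyz : ∀ p : GaussianInt, Prime p → p ∣ y → p ∣ z → False := by
    intro p hp hp1 hpz
    have hpx : p ∣ x := by
      have h1 : p ∣ x^4 := by
        rw [show x^4 = sqrtd * z^2 - y^4 by rw [← heq]; ring]
        exact dvd_sub ((hpz.pow (by norm_num)).mul_left sqrtd) (hp1.pow (by norm_num))
      exact hp.dvd_of_dvd_pow h1
    exact hp.not_unit (hgcd p hpx hp1 hpz)
  have hcop : IsCoprime x y := coprime_of_no_common_prime hx0 hxy
  -- parity analysis : x, y must both be odd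
  by_cases hxodd : π ∣ x
  · exfalso
    have hyodd : ¬ π ∣ y := fun hyd => hxy π pp_prime hxodd hyd
    have hzodd : ¬ π ∣ z := by
      intro hd
      apply odd_pow (n := 4) hyodd
      rw [show y^4 = sqrtd * z^2 - x^4 by rw [← heq]; ring]
      exact dvd_sub ((hd.pow (by norm_num)).mul_left sqrtd) (hxodd.pow (by norm_num))
    exact kill_mixed hyodd hzodd (Or.inl rfl) hxodd (by linear_combination heq)
  · by_cases hyodd : π ∣ y
    · exfalso
      have hzodd : ¬ π ∣ z := by
        intro hd
        apply odd_pow (n := 4) hxodd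
        rw [show x^4 = sqrtd * z^2 - y^4 by rw [← heq]; ring]
        exact dvd_sub ((hd.pow (by norm_num)).mul_left sqrtd) (hyodd.pow (by norm_num))
      exact kill_mixed hxodd hzodd (Or.inl rfl) hyodd (by linear_combination heq)
    · -- both odd
      -- π exactly divides z once
      have hzdvd : π ∣ z := by
        have h2 : π^2 ∣ sqrtd * z^2 := by
          rw [← heq, show x^4 + y^4 = (x^4-1) + (y^4-1) + 2 by ring]
          refine dvd_add (dvd_add ((pow_dvd_pow (π:GaussianInt) (by norm_num : 2 ≤ 7)).trans (L1 hxodd))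
            ((pow_dvd_pow (π:GaussianInt) (by norm_num : 2 ≤ 7)).trans (L1 hyodd))) ⟨-sqrtd, by rw [two_eq]; ring⟩
        have h1 : π ∣ sqrtd * z^2 := (dvd_pow_self (π:GaussianInt) (by norm_num : (2:ℕ) ≠ 0)).trans h2
        exact pp_prime.dvd_of_dvd_pow (prime_dvd_unit_part pp_prime isUnit_sqrtd h1)
      obtain ⟨s, w, hwodd, hzdef⟩ := pp_decomp hz0
      have hs1 : 1 ≤ s := by
        rcases Nat.eq_zero_or_pos s with h0 | h0
        · exfalso; rw [h0, pow_zero, one_mul] at hzdef; exact hwodd (hzdef ▸ hzdvd)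
        · exact h0
      have hseq : s = 1 := by
        by_contra hs2'
        have hs2 : 2 ≤ s := by omega
        apply not_pp3_dvd_two
        rw [show (2:GaussianInt) = sqrtd*z^2 - (x^4-1) - (y^4-1) by rw [← heq]; ring]
        refine dvd_sub (dvd_sub ?_ ((pow_dvd_pow (π:GaussianInt) (by norm_num : 3 ≤ 7)).trans (L1 hxodd)))
          ((pow_dvd_pow (π:GaussianInt) (by norm_num : 3 ≤ 7)).trans (L1 hyodd))
        rw [hzdef]
        obtain ⟨r, hr⟩ : ∃ r, s*2 = 3 + r := ⟨s*2 - 3, by omega⟩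
        refine ⟨π^r * (sqrtd * w^2), ?_⟩
        rw [show (π^s*w)^2 = π^(s*2) * w^2 from by rw [mul_pow, ← pow_mul], hr]
        ring
      rw [hseq, pow_one] at hzdef
      -- x⁴ + y⁴ = sqrtd · π² · w²
      have hw : x^4 + y^4 = sqrtd * π^2 * w^2 := by rw [heq, hzdef]; ring
      -- π² divides x⁴ - y⁴
      obtain ⟨η, hη⟩ : π^2 ∣ x^4 - y^4 :=
        (pow_dvd_pow (π:GaussianInt) (by norm_num : 2 ≤ 7)).trans
          (by rw [show x^4 - y^4 = (x^4-1) - (y^4-1) by ring]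
              exact dvd_sub (L1 hxodd) (L1 hyodd))
      have hfour : (π:GaussianInt)^4 = -4 := by decide
      -- key identity : η² = (xy)⁴ - w⁴
      have hkey : η^2 = (x*y)^4 - w^4 := by
        apply mul_left_cancel₀ (pow_ne_zero 4 pp_ne_zero)
        calc π^4 * η^2 = (π^2*η)^2 := by ring
          _ = (x^4-y^4)^2 := by rw [← hη]
          _ = (x^4+y^4)^2 - 4*(x*y)^4 := by ring
          _ = (sqrtd*π^2*w^2)^2 - 4*(x*y)^4 := by rw [hw]
          _ = π^4 * ((x*y)^4 - w^4) := by linear_combination (π:GaussianInt)^4*w^4*hsq - (x*y)^4 * hfour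
      -- coprimality of xy and w
      have hoddxy : ¬ π ∣ x*y := odd_mul hxodd hyodd
      have hcopxyw : IsCoprime (x*y) w := by
        apply coprime_of_no_common_prime (odd_ne_zero hoddxy)
        intro p hp hp1 hp2
        have hpz : p ∣ z := by rw [hzdef]; exact hp2.mul_left π
        rcases hp.dvd_mul.mp hp1 with h1 | h1
        · exact hxz p hp h1 hpz
        · exact hyz p hp h1 hpz
      -- apply Hilbert's theorem
      have hη0 : η = 0 := main_T hoddxy hwodd hcopxyw hkey.symm
      have hx4y4 : x^4 = y^4 := by
        have h0' : x^4 - y^4 = 0 := by rw [hη, hη0, mul_zero]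
        exact sub_eq_zero.mp h0'
      -- x and y are units
      have hxunit : IsUnit x := by
        apply isUnit_of_no_prime hx0
        intro p hp hpx
        exact hxy p hp hpx (hp.dvd_of_dvd_pow (hx4y4 ▸ (hpx.pow (by norm_num : (4:ℕ) ≠ 0))))
      have hyunit : IsUnit y := by
        apply isUnit_of_no_prime hy0
        intro p hp hpy
        exact hxy p hp (hp.dvd_of_dvd_pow (hx4y4.symm ▸ (hpy.pow (by norm_num : (4:ℕ) ≠ 0)))) hpy
      have h14 : x^4 = 1 := unit_pow4 hxunit
      have h24 : y^4 = 1 := unit_pow4 hyunit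
      have h2eq : (2:GaussianInt) = sqrtd * z^2 := by
        have htmp := heq
        rw [h14, h24] at htmp
        linear_combination htmp
      have hfact : (z - (1 - sqrtd)) * (z + (1 - sqrtd)) = 0 := by
        linear_combination sqrtd * h2eq + (z^2 - 1) * hsq
      refine ⟨unit_enum hxunit, unit_enum hyunit, ?_⟩
      rcases mul_eq_zero.mp hfact with h0' | h0'
      · right
        rw [sub_eq_zero] at h0'
        rw [h0']; decide
      · left
        have : z = -(1 - sqrtd) := by linear_combination h0'
        rw [this]; decide

end GD

/-- The only nontrivial primitive solutions in Gaussian integers of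
`x⁴ + y⁴ = i·z²` have `x, y ∈ {1, -1, i, -i}` and `z = ±i(1+i)`. -/
theorem stmt_1 (x y z : GaussianInt)
    (hnt : x * y * z ≠ 0)
    (hgcd : ∀ d : GaussianInt, d ∣ x → d ∣ y → d ∣ z → IsUnit d)
    (heq : x ^ 4 + y ^ 4 = I * z ^ 2) :
    (x = 1 ∨ x = -1 ∨ x = I ∨ x = -I) ∧
    (y = 1 ∨ y = -1 ∨ y = I ∨ y = -I) ∧
    (z = I * (1 + I) ∨ z = -(I * (1 + I))) := by
  exact GD.final_thm x y z hnt hgcd heq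
end

section
/- There are no Gaussian integers x, y, z with xyz ≠ 0 satisfying x^4 + y^4 = z^2. -/
open GaussianInt Zsqrtd

namespace HilbertAux
local notation "G" => GaussianInt

def J : G := ⟨0,1⟩
def lam : G := ⟨1,1⟩

lemma JJ : J * J = -1 := by decide
lemma lam4 : lam ^ 4 = -4 := by decide
lemma two_eq : (2 : G) = -J * lam ^ 2 := by decide
lemma hJu : IsUnit J := IsUnit.of_mul_eq_one (-J) (by decide)
lemma hJu' : IsUnit (-J) := IsUnit.of_mul_eq_one J (by decide)

lemma lam_prime : Prime lam := by
  rw [← UniqueFactorizationMonoid.irreducible_iff_prime]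
  constructor
  · intro hu
    have := (Zsqrtd.norm_eq_one_iff' (by norm_num) lam).2 hu
    simp [Zsqrtd.norm, lam] at this
  · intro a b hab
    by_contra hc
    push_neg at hc
    obtain ⟨ha, hb⟩ := hc
    have h2 : lam.norm = a.norm * b.norm := by rw [hab, Zsqrtd.norm_mul]
    have hla : lam.norm = 2 := by decide
    have hna : a.norm ≠ 1 := fun h => ha ((Zsqrtd.norm_eq_one_iff' (by norm_num) a).1 h)
    have hnb : b.norm ≠ 1 := fun h => hb ((Zsqrtd.norm_eq_one_iff' (by norm_num) b).1 h)
    have h0a : 0 ≤ a.norm := Zsqrtd.norm_nonneg (by norm_num) a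
    have h0b : 0 ≤ b.norm := Zsqrtd.norm_nonneg (by norm_num) b
    rw [hla] at h2
    rcases lt_or_ge a.norm 2 with h | h
    · have : a.norm = 0 := by omega
      rw [this] at h2; simp at h2
    · rcases lt_or_ge b.norm 2 with h' | h'
      · have : b.norm = 0 := by omega
        rw [this] at h2; simp at h2
      · nlinarith

lemma lam_ne_zero : lam ≠ 0 := lam_prime.ne_zero

lemma isUnit_iff {u : G} : IsUnit u ↔ u = 1 ∨ u = -1 ∨ u = J ∨ u = -J := by
  constructor
  · intro hu
    have h1 := (Zsqrtd.norm_eq_one_iff' (by norm_num) u).2 hu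
    simp [Zsqrtd.norm] at h1
    have hre : -1 ≤ u.re ∧ u.re ≤ 1 := by constructor <;> nlinarith
    have him : -1 ≤ u.im ∧ u.im ≤ 1 := by constructor <;> nlinarith
    rcases hre with ⟨h3, h4⟩
    rcases him with ⟨h5, h6⟩
    simp only [Zsqrtd.ext_iff, J]
    interval_cases u.re <;> interval_cases u.im <;> simp_all <;> omega
  · rintro (rfl | rfl | rfl | rfl)
    · exact isUnit_one
    · exact IsUnit.neg isUnit_one
    · exact hJu
    · exact hJu'

lemma lam_not_dvd_unit {u : G} (hu : IsUnit u) : ¬ lam ∣ u :=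
  fun h => lam_prime.not_unit (isUnit_of_dvd_unit h hu)

lemma lam_dvd_iff (x : G) : lam ∣ x ↔ (2:ℤ) ∣ x.re + x.im := by
  constructor
  · rintro ⟨w, rfl⟩
    simp only [lam, Zsqrtd.re_mul, Zsqrtd.im_mul]
    ring_nf
    omega
  · rintro ⟨k, hk⟩
    exact ⟨⟨k, x.im - k⟩, by ext <;> simp [lam, Zsqrtd.re_mul, Zsqrtd.im_mul] <;> omega⟩

lemma lam_dvd_sub {u w : G} (hu : ¬ lam ∣ u) (hw : ¬ lam ∣ w) : lam ∣ u - w := by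
  rw [lam_dvd_iff] at *
  simp only [Zsqrtd.re_sub, Zsqrtd.im_sub]
  omega

lemma lam_dvd_add {u w : G} (hu : ¬ lam ∣ u) (hw : ¬ lam ∣ w) : lam ∣ u + w := by
  rw [lam_dvd_iff] at *
  simp only [Zsqrtd.re_add, Zsqrtd.im_add]
  omega

lemma four_dvd_iff (c : G) : (4 : G) ∣ c ↔ (4 ∣ c.re ∧ 4 ∣ c.im) := by
  have : (4 : G) = ((4:ℤ) : G) := by norm_cast
  rw [this, Zsqrtd.intCast_dvd]

lemma sq_re (x : G) : (x^2).re = x.re*x.re - x.im*x.im := by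
  rw [pow_two]; simp [Zsqrtd.re_mul]; ring

lemma sq_im (x : G) : (x^2).im = 2*(x.re*x.im) := by
  rw [pow_two]; simp [Zsqrtd.im_mul]; ring

/-- odd squares are ±1 mod 4 -/
lemma sq_mod_four {x : G} (h : ¬ lam ∣ x) : (4:G) ∣ x^2 - 1 ∨ (4:G) ∣ x^2 + 1 := by
  rw [lam_dvd_iff] at h
  rcases Int.even_or_odd x.re with ⟨k, hk⟩ | ⟨k, hk⟩
  · right
    obtain ⟨j, hj⟩ : Odd x.im := by
      rcases Int.even_or_odd x.im with ⟨j, hj⟩ | ho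
      · exfalso; omega
      · exact ho
    rw [four_dvd_iff]
    constructor
    · simp only [Zsqrtd.re_add, Zsqrtd.re_one, sq_re]
      exact ⟨k*k - j*j - j, by rw [hk, hj]; ring⟩
    · simp only [Zsqrtd.im_add, Zsqrtd.im_one, sq_im, add_zero]
      exact ⟨k*x.im, by rw [hk]; ring⟩
  · left
    obtain ⟨j, hj⟩ : Even x.im := by
      rcases Int.even_or_odd x.im with he | ⟨j, hj⟩
      · exact he
      · exfalso; omega
    rw [four_dvd_iff]
    constructor
    · simp only [Zsqrtd.re_sub, Zsqrtd.re_one, sq_re]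
      exact ⟨k*k + k - j*j, by rw [hk, hj]; ring⟩
    · simp only [Zsqrtd.im_sub, Zsqrtd.im_one, sq_im, sub_zero]
      exact ⟨x.re*j, by rw [hj]; ring⟩

/-- odd fourth powers are 1 mod 4 -/
lemma pow4_mod_four {x : G} (h : ¬ lam ∣ x) : (4:G) ∣ x^4 - 1 := by
  rcases sq_mod_four h with ⟨c, hc⟩ | ⟨c, hc⟩
  · exact ⟨c * (x^2+1), by linear_combination (x^2+1) * hc⟩
  · exact ⟨c * (x^2-1), by linear_combination (x^2-1) * hc⟩

lemma unit_eq_one {η : G} (h : IsUnit η) (hd : (4:G) ∣ η - 1) : η = 1 := by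
  rcases isUnit_iff.1 h with rfl|rfl|rfl|rfl
  · rfl
  all_goals (rw [four_dvd_iff] at hd; simp [J] at hd) <;> omega

lemma unit_eq_neg_one {η : G} (h : IsUnit η) (hd : (4:G) ∣ η + 1) : η = -1 := by
  rcases isUnit_iff.1 h with rfl|rfl|rfl|rfl
  · rw [four_dvd_iff] at hd; simp [J] at hd
  · rfl
  all_goals (rw [four_dvd_iff] at hd; simp [J] at hd) <;> omega

lemma unit_sum_ne {η₁ η₂ s : G} (h₁ : IsUnit η₁) (h₂ : IsUnit η₂) (hs : s = 1 ∨ s = -1)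
    (h : (4:G) ∣ η₁ + η₂ - s) : False := by
  rcases isUnit_iff.1 h₁ with rfl|rfl|rfl|rfl <;> rcases isUnit_iff.1 h₂ with rfl|rfl|rfl|rfl <;>
      rcases hs with rfl|rfl <;>
    (rw [four_dvd_iff] at h; simp [J] at h) <;> omega

lemma pow_cancel {p : G} (hp : Prime p) {s t : ℕ} {c d : G} (hc : ¬ p ∣ c) (hd : ¬ p ∣ d)
    (h : p ^ s * c = p ^ t * d) : s = t ∧ c = d := by
  have key : ∀ {s t : ℕ} {c d : G}, ¬ p ∣ c → ¬ p ∣ d → p ^ s * c = p ^ t * d → s ≤ t →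
      s = t ∧ c = d := by
    intro s t c d hc _ h hst
    obtain ⟨k, rfl⟩ := Nat.le.dest hst
    have hcd : c = p ^ k * d := by
      apply mul_left_cancel₀ (pow_ne_zero s hp.ne_zero)
      rw [h, pow_add]; ring
    rcases Nat.eq_zero_or_pos k with rfl | hk
    · exact ⟨rfl, by simpa using hcd⟩
    · exfalso
      obtain ⟨k', rfl⟩ : ∃ k', k = k' + 1 := ⟨k - 1, by omega⟩
      exact hc ⟨p ^ k' * d, by rw [hcd, pow_succ]; ring⟩
  rcases le_total s t with hst | hst
  · exact key hc hd h hst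
  · obtain ⟨h1, h2⟩ := key hd hc h.symm hst
    exact ⟨h1.symm, h2.symm⟩

/-- The generalized equation for the descent. -/
def Sol (m : ℕ) : Prop :=
  ∃ x y z ε : G, IsUnit ε ∧ ¬ lam ∣ x ∧ ¬ lam ∣ y ∧ ¬ lam ∣ z ∧ IsCoprime x y ∧
    x ^ 4 + ε * lam ^ (4*m) * y ^ 4 = z ^ 2

/-- The key factorization/descent step. -/
lemma step (m : ℕ) (h : Sol (m+1)) :
    ∃ (X u v η₁ η₂ : G), IsUnit η₁ ∧ IsUnit η₂ ∧ ¬ lam ∣ X ∧ ¬ lam ∣ u ∧ ¬ lam ∣ v ∧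
      IsCoprime u v ∧ X ^ 2 = η₁ * u ^ 4 + η₂ * lam ^ (4*m) * v ^ 4 := by
  obtain ⟨x, y, z, ε, hε, hlx, hly, hlz, hco, heq⟩ := h
  have hlp := lam_prime
  have hy0 : y ≠ 0 := fun h => hly (h ▸ dvd_zero _)
  have hfac : (z - x^2) * (z + x^2) = ε * lam ^ (4*(m+1)) * y ^ 4 := by
    linear_combination -heq
  have hEy0 : ε * lam ^ (4*(m+1)) * y ^ 4 ≠ 0 :=
    mul_ne_zero (mul_ne_zero hε.ne_zero (pow_ne_zero _ lam_ne_zero)) (pow_ne_zero _ hy0)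
  have hA0 : z - x^2 ≠ 0 := fun h => hEy0 (by rw [← hfac, h, zero_mul])
  have hB0 : z + x^2 ≠ 0 := fun h => hEy0 (by rw [← hfac, h, mul_zero])
  obtain ⟨p, a, hla, hAa⟩ := WfDvdMonoid.max_power_factor hA0 hlp.irreducible
  obtain ⟨q, b, hlb, hBb⟩ := WfDvdMonoid.max_power_factor hB0 hlp.irreducible
  have hlx2 : ¬ lam ∣ x^2 := fun h => hlx (hlp.dvd_of_dvd_pow h)
  have hndab : ¬ lam ∣ a * b := fun h => (hlp.dvd_mul.mp h).elim hla hlb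
  have hndey : ¬ lam ∣ ε * y^4 := by
    intro h
    rcases hlp.dvd_mul.mp h with h | h
    · exact lam_not_dvd_unit hε h
    · exact hly (hlp.dvd_of_dvd_pow h)
  have hprod : lam ^ (p+q) * (a*b) = lam ^ (4*(m+1)) * (ε * y^4) := by
    rw [pow_add]
    calc lam^p * lam^q * (a*b) = (lam^p * a) * (lam^q * b) := by ring
    _ = (z - x^2) * (z + x^2) := by rw [← hAa, ← hBb]
    _ = ε * lam ^ (4*(m+1)) * y ^ 4 := hfac
    _ = lam ^ (4*(m+1)) * (ε * y^4) := by ring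
  obtain ⟨hpq, hab⟩ := pow_cancel hlp hndab hndey hprod
  -- the sum and difference equations
  have hsum : lam^p * a + lam^q * b = -J * lam^2 * z := by
    rw [← hAa, ← hBb]
    linear_combination z * two_eq
  have hdiff : lam^q * b - lam^p * a = -J * lam^2 * x^2 := by
    rw [← hAa, ← hBb]
    linear_combination x^2 * two_eq
  -- p ≥ 1 and q ≥ 1
  have hp1 : 1 ≤ p := by
    rcases Nat.eq_zero_or_pos p with rfl | h
    · exfalso
      apply hla
      have : lam ∣ z - x^2 := lam_dvd_sub hlz hlx2
      rwa [hAa, pow_zero, one_mul] at this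
    · exact h
  have hq1 : 1 ≤ q := by
    rcases Nat.eq_zero_or_pos q with rfl | h
    · exfalso
      apply hlb
      have : lam ∣ z + x^2 := lam_dvd_add hlz hlx2
      rwa [hBb, pow_zero, one_mul] at this
    · exact h
  -- p ≥ 2
  have hp2 : 2 ≤ p := by
    by_contra hc
    have hp : p = 1 := by omega
    subst hp
    obtain ⟨q', rfl⟩ : ∃ q', q = q' + 3 := ⟨q - 3, by omega⟩
    apply hla
    refine ⟨-J * z - lam^(q'+1) * b, ?_⟩
    apply mul_left_cancel₀ lam_ne_zero
    linear_combination hsum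
  have hq2 : 2 ≤ q := by
    by_contra hc
    have hq : q = 1 := by omega
    subst hq
    obtain ⟨p', rfl⟩ : ∃ p', p = p' + 3 := ⟨p - 3, by omega⟩
    apply hlb
    refine ⟨-J * z - lam^(p'+1) * a, ?_⟩
    apply mul_left_cancel₀ lam_ne_zero
    linear_combination hsum
  -- not both ≥ 3
  have hnb : ¬ (3 ≤ p ∧ 3 ≤ q) := by
    rintro ⟨h3p, h3q⟩
    obtain ⟨p', rfl⟩ : ∃ p', p = p' + 3 := ⟨p - 3, by omega⟩
    obtain ⟨q', rfl⟩ : ∃ q', q = q' + 3 := ⟨q - 3, by omega⟩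
    have h5 : -J * x^2 = lam * (lam^(q') * b - lam^(p') * a) := by
      apply mul_left_cancel₀ (pow_ne_zero 2 lam_ne_zero)
      linear_combination -hdiff
    apply hlx2
    refine ⟨J * (lam^(q') * b - lam^(p') * a), ?_⟩
    linear_combination J * h5 + x^2 * JJ
  have hcases : (p = 2 ∧ q = 4*m + 2) ∨ (q = 2 ∧ p = 4*m + 2) := by omega
  -- a, b have no common prime factor
  have ha0 : a ≠ 0 := fun h => hA0 (by rw [hAa, h, mul_zero])
  have hrel : IsRelPrime a b := by
    intro e hea heb
    by_contra heu
    have he0 : e ≠ 0 := fun h => ha0 (zero_dvd_iff.mp (h ▸ hea))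
    obtain ⟨π, hπirr, hπe⟩ := WfDvdMonoid.exists_irreducible_factor heu he0
    have hπ : Prime π := UniqueFactorizationMonoid.irreducible_iff_prime.mp hπirr
    have hπa : π ∣ a := hπe.trans hea
    have hπb : π ∣ b := hπe.trans heb
    have hπlam : ¬ π ∣ lam := by
      intro hd
      obtain ⟨t, ht⟩ := hd
      rcases hlp.irreducible.isUnit_or_isUnit ht with h | h
      · exact hπ.not_unit h
      · obtain ⟨tu, rfl⟩ := h
        apply hla
        have : lam ∣ π := ⟨(tu⁻¹ : Gˣ), by rw [ht]; simp⟩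
        exact this.trans hπa
    have hπx : π ∣ x := by
      have h6 : π ∣ -J * lam^2 * x^2 := by
        rw [← hdiff]
        exact dvd_sub (Dvd.dvd.mul_left hπb _) (Dvd.dvd.mul_left hπa _)
      have h7 : π ∣ lam^2 * x^2 := by
        rcases hπ.dvd_mul.mp (show π ∣ -J * (lam^2 * x^2) by rwa [← mul_assoc]) with h | h
        · exact absurd (isUnit_of_dvd_unit h hJu') hπ.not_unit
        · exact h
      rcases hπ.dvd_mul.mp h7 with h | h
      · exact absurd (hπ.dvd_of_dvd_pow h) hπlam
      · exact hπ.dvd_of_dvd_pow h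
    have hπy : π ∣ y := by
      have h8 : π ∣ ε * y^4 := by rw [← hab]; exact Dvd.dvd.mul_right hπa b
      rcases hπ.dvd_mul.mp h8 with h | h
      · exact absurd (isUnit_of_dvd_unit h hε) hπ.not_unit
      · exact hπ.dvd_of_dvd_pow h
    exact hπ.not_unit (hco.isRelPrime hπx hπy)
  -- extract fourth powers
  set ε' := hε.unit with hε'
  have hεs : (ε' : G) = ε := IsUnit.unit_spec hε
  have hab2 : a * ((ε'⁻¹ : Gˣ) * b) = y^4 := by
    have : (ε : G) * (a * ((ε'⁻¹ : Gˣ) * b)) = ε * y^4 := by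
      rw [← hab]
      calc (ε : G) * (a * ((ε'⁻¹:Gˣ) * b)) = ((ε'⁻¹:Gˣ) * ε') * (a * b) := by
            rw [hεs]; ring
      _ = a * b := by rw [Units.inv_mul, one_mul]
    exact mul_left_cancel₀ hε.ne_zero this
  have hco2 : IsCoprime a ((ε'⁻¹ : Gˣ) * b) := by
    rw [mul_comm]
    exact (isCoprime_mul_unit_right_right (ε'⁻¹ : Gˣ).isUnit a b).mpr hrel.isCoprime
  obtain ⟨u, hu⟩ := exists_associated_pow_of_mul_eq_pow' hco2 hab2
  obtain ⟨v, hv⟩ := exists_associated_pow_of_mul_eq_pow' hco2.symm (by rw [mul_comm]; exact hab2)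
  obtain ⟨wu, hwu⟩ := hu   -- u^4 * wu = a
  obtain ⟨wv, hwv⟩ := hv   -- v^4 * wv = ε'⁻¹ * b
  have hbv : b = v^4 * (ε * wv) := by
    have : (ε'⁻¹ : Gˣ) * b = v^4 * wv := hwv.symm
    calc b = (ε' : G) * ((ε'⁻¹ : Gˣ) * b) := by rw [← mul_assoc, Units.mul_inv, one_mul]
    _ = (ε' : G) * (v^4 * wv) := by rw [this]
    _ = v^4 * (ε * wv) := by rw [hεs]; ring
  have hau : a = u^4 * (wu : G) := hwu.symm
  have hlu : ¬ lam ∣ u := by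
    intro h
    exact hla (hau ▸ (Dvd.dvd.mul_right (h.trans (dvd_pow_self u (by norm_num))) _))
  have hlv : ¬ lam ∣ v := by
    intro h
    exact hlb (hbv ▸ (Dvd.dvd.mul_right (h.trans (dvd_pow_self v (by norm_num))) _))
  have hcouv : IsCoprime u v := by
    apply IsRelPrime.isCoprime
    intro e heu hev
    exact hrel (heu.trans (hau ▸ (Dvd.dvd.mul_right (dvd_pow_self u (by norm_num)) _)))
      (hev.trans (hbv ▸ (Dvd.dvd.mul_right (dvd_pow_self v (by norm_num)) _)))
  -- the two cases
  rcases hcases with ⟨hp, hq⟩ | ⟨hq, hp⟩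
  · subst hp; subst hq
    have h7 : -J * x^2 = lam^(4*m) * b - a := by
      apply mul_left_cancel₀ (pow_ne_zero 2 lam_ne_zero)
      rw [mul_sub]
      linear_combination -hdiff
    have hJ7 : x^2 = J * (lam^(4*m) * b) - J * a := by
      linear_combination J * h7 + x^2 * JJ
    have hkey : x^2 = (-J * wu) * u^4 + (J * (ε * wv)) * lam^(4*m) * v^4 := by
      rw [hau, hbv] at hJ7
      linear_combination hJ7
    exact ⟨x, u, v, -J * wu, J * (ε * wv), (hJu'.mul wu.isUnit),
      (hJu.mul (hε.mul wv.isUnit)), hlx, hlu, hlv, hcouv, hkey⟩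
  · subst hq; subst hp
    have h7 : -J * x^2 = b - lam^(4*m) * a := by
      apply mul_left_cancel₀ (pow_ne_zero 2 lam_ne_zero)
      rw [mul_sub]
      linear_combination -hdiff
    have hJ7 : x^2 = J * b - J * (lam^(4*m) * a) := by
      linear_combination J * h7 + x^2 * JJ
    have hkey : x^2 = (J * (ε * wv)) * v^4 + (-J * wu) * lam^(4*m) * u^4 := by
      rw [hau, hbv] at hJ7
      linear_combination hJ7
    exact ⟨x, v, u, J * (ε * wv), -J * wu, (hJu.mul (hε.mul wv.isUnit)),
      (hJu'.mul wu.isUnit), hlx, hlv, hlu, hcouv.symm, hkey⟩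

lemma noSol : ∀ m : ℕ, ¬ Sol (m+1) := by
  intro m
  induction m with
  | zero =>
    intro h
    obtain ⟨X, u, v, η₁, η₂, hη₁, hη₂, hlX, hlu, hlv, _, hkey⟩ := step 0 h
    rw [show (4*0 : ℕ) = 0 by rfl, pow_zero, mul_one] at hkey
    obtain ⟨β, hβ⟩ := pow4_mod_four hlu
    obtain ⟨γ, hγ⟩ := pow4_mod_four hlv
    rcases sq_mod_four hlX with ⟨α, hα⟩ | ⟨α, hα⟩
    · exact unit_sum_ne hη₁ hη₂ (Or.inl rfl)
        ⟨α - η₁ * β - η₂ * γ, by linear_combination hα - hkey - η₁ * hβ - η₂ * hγ⟩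
    · exact unit_sum_ne hη₁ hη₂ (Or.inr rfl)
        ⟨α - η₁ * β - η₂ * γ, by linear_combination hα - hkey - η₁ * hβ - η₂ * hγ⟩
  | succ k ih =>
    intro h
    obtain ⟨X, u, v, η₁, η₂, hη₁, hη₂, hlX, hlu, hlv, hcouv, hkey⟩ := step (k+1) h
    have h4d : (4:G) ∣ lam ^ (4*(k+1)) :=
      ⟨-lam^(4*k), by rw [show 4*(k+1) = 4*k + 4 by ring, pow_add, lam4]; ring⟩
    obtain ⟨δ, hδ⟩ := h4d
    obtain ⟨β, hβ⟩ := pow4_mod_four hlu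
    have hη₁val : η₁ = 1 ∨ η₁ = -1 := by
      rcases sq_mod_four hlX with ⟨α, hα⟩ | ⟨α, hα⟩
      · left
        exact unit_eq_one hη₁
          ⟨α - η₁ * β - η₂ * δ * v^4, by
            linear_combination hα - hkey - η₁ * hβ - η₂ * v^4 * hδ⟩
      · right
        exact unit_eq_neg_one hη₁
          ⟨α - η₁ * β - η₂ * δ * v^4, by
            linear_combination hα - hkey - η₁ * hβ - η₂ * v^4 * hδ⟩
    apply ih
    rcases hη₁val with rfl | rfl
    · exact ⟨u, v, X, η₂, hη₂, hlu, hlv, hlX, hcouv, by linear_combination -hkey⟩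
    · refine ⟨u, v, J * X, -η₂, hη₂.neg, hlu, hlv, ?_, hcouv, ?_⟩
      · intro hd
        rcases lam_prime.dvd_mul.mp hd with hd | hd
        · exact lam_not_dvd_unit hJu hd
        · exact hlX hd
      · linear_combination hkey - X^2 * JJ


lemma not_four_dvd_re {c : G} (h2 : ¬ (4:ℤ) ∣ c.re) : ¬ (4:G) ∣ c := by
  rw [four_dvd_iff]
  rintro ⟨h, -⟩
  exact h2 h

/-- no solutions with both x and y odd -/
lemma both_odd {x y z : G} (hlx : ¬ lam ∣ x) (hly : ¬ lam ∣ y)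
    (heq : x ^ 4 + y ^ 4 = z ^ 2) : False := by
  obtain ⟨β, hβ⟩ := pow4_mod_four hlx
  obtain ⟨γ, hγ⟩ := pow4_mod_four hly
  by_cases hlz : lam ∣ z
  · obtain ⟨w, rfl⟩ := hlz
    by_cases hlw : lam ∣ w
    · obtain ⟨t, rfl⟩ := hlw
      apply not_four_dvd_re (c := (2:G)) (by decide)
      have h4 : (lam*(lam*t))^2 = -4 * t^2 := by linear_combination t^2 * lam4
      exact ⟨-t^2 - β - γ, by linear_combination heq - hβ - hγ + h4⟩
    · rcases sq_mod_four hlw with ⟨δ, hδ⟩ | ⟨δ, hδ⟩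
      · apply not_four_dvd_re (c := (2:G) - lam^2) (by decide)
        refine ⟨lam^2 * δ - β - γ, ?_⟩
        have hz2 : (lam*w)^2 = lam^2 + 4 * (lam^2 * δ) := by
          linear_combination lam^2 * hδ
        linear_combination heq - hβ - hγ + hz2
      · apply not_four_dvd_re (c := (2:G) + lam^2) (by decide)
        refine ⟨lam^2 * δ - β - γ, ?_⟩
        have hz2 : (lam*w)^2 = -lam^2 + 4 * (lam^2 * δ) := by
          linear_combination lam^2 * hδ
        linear_combination heq - hβ - hγ + hz2
  · rcases sq_mod_four hlz with ⟨α, hα⟩ | ⟨α, hα⟩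
    · apply not_four_dvd_re (c := (1:G) - 2) (by decide)
      exact ⟨β + γ - α, by linear_combination hβ + hγ - hα - heq⟩
    · apply not_four_dvd_re (c := -(1:G) - 2) (by decide)
      exact ⟨β + γ - α, by linear_combination hβ + hγ - hα - heq⟩

/-- no solutions with x odd, y even -/
lemma final {x y z : G} (hlx : ¬ lam ∣ x) (hy0 : y ≠ 0) (hco : IsCoprime x y)
    (hly : lam ∣ y) (heq : x ^ 4 + y ^ 4 = z ^ 2) : False := by
  obtain ⟨n, y₁, hly₁, hy₁⟩ := WfDvdMonoid.max_power_factor hy0 lam_prime.irreducible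
  have hn1 : 1 ≤ n := by
    rcases Nat.eq_zero_or_pos n with rfl | h
    · exfalso; apply hly₁; rwa [hy₁, pow_zero, one_mul] at hly
    · exact h
  obtain ⟨n', rfl⟩ : ∃ n', n = n' + 1 := ⟨n - 1, by omega⟩
  have hlz : ¬ lam ∣ z := by
    intro hd
    apply hlx
    apply lam_prime.dvd_of_dvd_pow (n := 4)
    have hx4 : x^4 = z^2 - y^4 := by linear_combination heq
    rw [hx4]
    exact dvd_sub (hd.trans (dvd_pow_self z two_ne_zero)) (hly.trans (dvd_pow_self y (by norm_num)))
  apply noSol n'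
  refine ⟨x, y₁, z, 1, isUnit_one, hlx, hly₁, hlz,
    hco.of_isCoprime_of_dvd_right ⟨lam^(n'+1), by rw [hy₁]; ring⟩, ?_⟩
  rw [one_mul]
  have hw : y = lam^(n'+1) * y₁ := hy₁
  have hpow : y^4 = lam^(4*(n'+1)) * y₁^4 := by
    rw [hw, mul_pow, ← pow_mul, mul_comm (n'+1) 4]
  linear_combination heq - hpow

end HilbertAux

open HilbertAux

/-- Hilbert's result: the equation `x⁴ + y⁴ = z²` has only trivial solutions
in the Gaussian integers `ℤ[i]`. -/
theorem stmt_2 :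
    ¬ ∃ x y z : GaussianInt, x * y * z ≠ 0 ∧ x ^ 4 + y ^ 4 = z ^ 2 := by
  rintro ⟨x, y, z, hne, heq⟩
  have hx0 : x ≠ 0 := fun h => hne (by rw [h]; ring)
  have hy0 : y ≠ 0 := fun h => hne (by rw [h]; ring)
  have hz0 : z ≠ 0 := fun h => hne (by rw [h]; ring)
  obtain ⟨x', y', c, hrel, hcx, hcy⟩ :=
    UniqueFactorizationMonoid.exists_reduced_factors x hx0 y
  subst hcx; subst hcy
  have hc0 : c ≠ 0 := fun h => hx0 (by rw [h, zero_mul])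
  have hx'0 : x' ≠ 0 := fun h => hx0 (by rw [h, mul_zero])
  have hy'0 : y' ≠ 0 := fun h => hy0 (by rw [h, mul_zero])
  have hdz : (c^2)^2 ∣ z^2 := ⟨x'^4 + y'^4, by linear_combination -heq⟩
  obtain ⟨z₁, hz₁⟩ := (IsIntegrallyClosed.pow_dvd_pow_iff two_ne_zero).mp hdz
  have heq₁ : x' ^ 4 + y' ^ 4 = z₁ ^ 2 := by
    apply mul_left_cancel₀ (pow_ne_zero 4 hc0)
    rw [mul_add]
    linear_combination heq + (z + c^2*z₁) * hz₁
  have hco : IsCoprime x' y' := hrel.isCoprime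
  by_cases hlx : lam ∣ x' <;> by_cases hly : lam ∣ y'
  · exact lam_prime.not_unit (hrel hlx hly)
  · exact final (z := z₁) hly hx'0 hco.symm hlx (by linear_combination heq₁)
  · exact final hlx hy'0 hco hly heq₁
  · exact both_odd hlx hly heq₁
end

section
/- There are no Gaussian integers x, y, z with xyz ≠ 0 satisfying x^4 - y^4 = z^2. -/
open GaussianInt
local notation "π" => (⟨1,1⟩ : GaussianInt)
local notation "I" => (⟨0,1⟩ : GaussianInt)

theorem gi_pi_ne : (π : GaussianInt) ≠ 0 := by decide

theorem gi_irred : Irreducible (π : GaussianInt) := by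
  constructor
  · rw [Zsqrtd.isUnit_iff_norm_isUnit]
    decide
  · intro a b hab
    have h2 : a.norm * b.norm = 2 := by
      rw [← Zsqrtd.norm_mul, ← hab]; decide
    rcases Int.prime_two.irreducible.isUnit_or_isUnit h2.symm with h | h
    · exact Or.inl ((Zsqrtd.isUnit_iff_norm_isUnit a).mpr h)
    · exact Or.inr ((Zsqrtd.isUnit_iff_norm_isUnit b).mpr h)

set_option synthInstance.maxHeartbeats 400000 in
theorem gi_prime : Prime (π : GaussianInt) :=
  (UniqueFactorizationMonoid.irreducible_iff_prime).mp gi_irred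

theorem gi_units {u : GaussianInt} (hu : IsUnit u) :
    u = 1 ∨ u = -1 ∨ u = I ∨ u = -I := by
  have h1 : u.norm = 1 := (Zsqrtd.norm_eq_one_iff' (by norm_num) u).mpr hu
  rw [Zsqrtd.norm_def] at h1
  have h2 : u.re * u.re + u.im * u.im = 1 := by linarith
  have hr1 : u.re ≤ 1 := by nlinarith
  have hr2 : -1 ≤ u.re := by nlinarith
  have hi1 : u.im ≤ 1 := by nlinarith
  have hi2 : -1 ≤ u.im := by nlinarith
  interval_cases h : u.re <;> interval_cases h' : u.im <;>
    first
      | (rw [show u = (⟨u.re, u.im⟩ : GaussianInt) from rfl, h, h']; decide)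
      | (exfalso; norm_num at h2)

theorem gi_pi3_dvd_iff (z : GaussianInt) : π^3 ∣ z ↔ (4:ℤ) ∣ z.re + z.im ∧ (4:ℤ) ∣ z.re - z.im := by
  have h3 : π^3 = (⟨-2,2⟩ : GaussianInt) := by decide
  rw [h3]; constructor
  · rintro ⟨w, rfl⟩
    constructor
    · exact ⟨-w.im, by simp [Zsqrtd.re_mul, Zsqrtd.im_mul] <;> ring⟩
    · exact ⟨-w.re, by simp [Zsqrtd.re_mul, Zsqrtd.im_mul] <;> ring⟩
  · rintro ⟨⟨k, hk⟩, ⟨l, hl⟩⟩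
    exact ⟨⟨-l, -k⟩, by ext <;> simp [Zsqrtd.re_mul, Zsqrtd.im_mul] <;> omega⟩

theorem gi_pi4_dvd_iff (z : GaussianInt) : π^4 ∣ z ↔ (4:ℤ) ∣ z.re ∧ (4:ℤ) ∣ z.im := by
  have h4 : π^4 = (⟨-4,0⟩ : GaussianInt) := by decide
  rw [h4]; constructor
  · rintro ⟨w, rfl⟩
    exact ⟨⟨-w.re, by simp [Zsqrtd.re_mul, Zsqrtd.im_mul] <;> ring⟩,
           ⟨-w.im, by simp [Zsqrtd.re_mul, Zsqrtd.im_mul] <;> ring⟩⟩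
  · rintro ⟨⟨k, hk⟩, ⟨l, hl⟩⟩
    exact ⟨⟨-k, -l⟩, by ext <;> simp [Zsqrtd.re_mul, Zsqrtd.im_mul] <;> omega⟩

theorem gi_pi5_dvd_iff (z : GaussianInt) : π^5 ∣ z ↔ (8:ℤ) ∣ z.re + z.im ∧ (8:ℤ) ∣ z.re - z.im := by
  have h5 : π^5 = (⟨-4,-4⟩ : GaussianInt) := by decide
  rw [h5]; constructor
  · rintro ⟨w, rfl⟩
    constructor
    · exact ⟨-w.re, by simp [Zsqrtd.re_mul, Zsqrtd.im_mul] <;> ring⟩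
    · exact ⟨w.im, by simp [Zsqrtd.re_mul, Zsqrtd.im_mul] <;> ring⟩
  · rintro ⟨⟨k, hk⟩, ⟨l, hl⟩⟩
    exact ⟨⟨-k, l⟩, by ext <;> simp [Zsqrtd.re_mul, Zsqrtd.im_mul] <;> omega⟩

theorem gi_pi7_dvd_iff (z : GaussianInt) : π^7 ∣ z ↔ (16:ℤ) ∣ z.re + z.im ∧ (16:ℤ) ∣ z.re - z.im := by
  have h7 : π^7 = (⟨8,-8⟩ : GaussianInt) := by decide
  rw [h7]; constructor
  · rintro ⟨w, rfl⟩
    constructor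
    · exact ⟨w.im, by simp [Zsqrtd.re_mul, Zsqrtd.im_mul] <;> ring⟩
    · exact ⟨w.re, by simp [Zsqrtd.re_mul, Zsqrtd.im_mul] <;> ring⟩
  · rintro ⟨⟨k, hk⟩, ⟨l, hl⟩⟩
    exact ⟨⟨l, k⟩, by ext <;> simp [Zsqrtd.re_mul, Zsqrtd.im_mul] <;> omega⟩

theorem gi_pi_dvd_iff (z : GaussianInt) : π ∣ z ↔ (2:ℤ) ∣ z.re + z.im := by
  constructor
  · rintro ⟨w, rfl⟩
    exact ⟨w.re, by simp [Zsqrtd.re_mul, Zsqrtd.im_mul]; ring⟩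
  · rintro ⟨k, hk⟩
    exact ⟨⟨k, z.im - k⟩, by ext <;> simp [Zsqrtd.re_mul, Zsqrtd.im_mul] <;> omega⟩

theorem gi_sq (a b : ℤ) : (⟨a,b⟩ : GaussianInt)^2 = ⟨a^2-b^2, 2*a*b⟩ := by
  ext <;> simp [pow_two, Zsqrtd.re_mul, Zsqrtd.im_mul] <;> ring

theorem gi_pow4 (a b : ℤ) : (⟨a,b⟩ : GaussianInt)^4
    = ⟨a^4-6*a^2*b^2+b^4, 4*a^3*b-4*a*b^3⟩ := by
  rw [show (4:ℕ) = 2*2 from rfl, pow_mul, gi_sq, gi_sq]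
  ext <;> simp <;> ring

theorem int16_of_zmod {X : ℤ} (h : ((X : ℤ) : ZMod 16) = 0) : (16:ℤ) ∣ X := by
  exact_mod_cast (ZMod.intCast_zmod_eq_zero_iff_dvd X 16).mp h
theorem int8_of_zmod {X : ℤ} (h : ((X : ℤ) : ZMod 8) = 0) : (8:ℤ) ∣ X := by
  exact_mod_cast (ZMod.intCast_zmod_eq_zero_iff_dvd X 8).mp h
theorem zmod16_of_int {X : ℤ} (h : (16:ℤ) ∣ X) : ((X : ℤ) : ZMod 16) = 0 :=
  (ZMod.intCast_zmod_eq_zero_iff_dvd X 16).mpr (by exact_mod_cast h)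

set_option maxHeartbeats 1000000 in
theorem zmod_key1 : ∀ x y : ZMod 16,
    (ZMod.castHom (show (2:ℕ)∣16 by norm_num) (ZMod 2) x +
     ZMod.castHom (show (2:ℕ)∣16 by norm_num) (ZMod 2) y ≠ 0) →
    (x^4-6*x^2*y^2+y^4-1) + (4*x^3*y-4*x*y^3) = 0 ∧
    (x^4-6*x^2*y^2+y^4-1) - (4*x^3*y-4*x*y^3) = 0 := by decide

set_option maxHeartbeats 1000000 in
theorem zmod_key2 : ∀ x y : ZMod 8,
    (ZMod.castHom (show (2:ℕ)∣8 by norm_num) (ZMod 2) x +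
     ZMod.castHom (show (2:ℕ)∣8 by norm_num) (ZMod 2) y ≠ 0) →
    ((x^2-y^2-1) + 2*x*y = 0 ∧ (x^2-y^2-1) - 2*x*y = 0) ∨
    ((x^2-y^2+1) + 2*x*y = 0 ∧ (x^2-y^2+1) - 2*x*y = 0) := by decide

set_option maxHeartbeats 4000000 in
theorem zmod_key4 : ∀ x y : ZMod 16,
    (ZMod.castHom (show (2:ℕ)∣16 by norm_num) (ZMod 2) x +
     ZMod.castHom (show (2:ℕ)∣16 by norm_num) (ZMod 2) y ≠ 0) →
    (¬((x^2-y^2+3) + 2*x*y = 0 ∧ (x^2-y^2+3) - 2*x*y = 0)) ∧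
    (¬((x^2-y^2-5) + 2*x*y = 0 ∧ (x^2-y^2-5) - 2*x*y = 0)) ∧
    (¬((x^2-y^2-1) + (2*x*y+4) = 0 ∧ (x^2-y^2-1) - (2*x*y+4) = 0)) ∧
    (¬((x^2-y^2-1) + (2*x*y-4) = 0 ∧ (x^2-y^2-1) - (2*x*y-4) = 0)) := by decide

theorem odd_trans {a b : ℤ} (h : ¬(2:ℤ)∣(a+b)) :
    (ZMod.castHom (show (2:ℕ)∣16 by norm_num) (ZMod 2) (a : ZMod 16) +
     ZMod.castHom (show (2:ℕ)∣16 by norm_num) (ZMod 2) (b : ZMod 16) ≠ 0) := by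
  have h2 : ((a+b : ℤ) : ZMod 2) ≠ 0 := by
    rwa [Ne, ZMod.intCast_zmod_eq_zero_iff_dvd]
  rw [map_intCast, map_intCast]; push_cast at h2 ⊢; exact h2

theorem odd_trans8 {a b : ℤ} (h : ¬(2:ℤ)∣(a+b)) :
    (ZMod.castHom (show (2:ℕ)∣8 by norm_num) (ZMod 2) (a : ZMod 8) +
     ZMod.castHom (show (2:ℕ)∣8 by norm_num) (ZMod 2) (b : ZMod 8) ≠ 0) := by
  have h2 : ((a+b : ℤ) : ZMod 2) ≠ 0 := by
    rwa [Ne, ZMod.intCast_zmod_eq_zero_iff_dvd]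
  rw [map_intCast, map_intCast]; push_cast at h2 ⊢; exact h2

theorem gi_F1 {z : GaussianInt} (h : ¬ π ∣ z) : π^7 ∣ z^4 - 1 := by
  obtain ⟨a, b⟩ := z
  rw [gi_pi_dvd_iff] at h
  have H := zmod_key1 (a : ZMod 16) (b : ZMod 16) (odd_trans h)
  have e : (⟨a,b⟩ : GaussianInt)^4 - 1
      = (⟨a^4-6*a^2*b^2+b^4-1, 4*a^3*b-4*a*b^3⟩ : GaussianInt) := by
    rw [gi_pow4]; ext <;> simp
  rw [e, gi_pi7_dvd_iff]
  constructor
  · apply int16_of_zmod; push_cast; linear_combination H.1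
  · apply int16_of_zmod; push_cast; linear_combination H.2

theorem gi_F2 {z : GaussianInt} (h : ¬ π ∣ z) : π^5 ∣ z^2 - 1 ∨ π^5 ∣ z^2 + 1 := by
  obtain ⟨a, b⟩ := z
  rw [gi_pi_dvd_iff] at h
  have e1 : (⟨a,b⟩ : GaussianInt)^2 - 1 = (⟨a^2-b^2-1, 2*a*b⟩ : GaussianInt) := by
    rw [gi_sq]; ext <;> simp
  have e2 : (⟨a,b⟩ : GaussianInt)^2 + 1 = (⟨a^2-b^2+1, 2*a*b⟩ : GaussianInt) := by
    rw [gi_sq]; ext <;> simp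
  rw [e1, e2, gi_pi5_dvd_iff, gi_pi5_dvd_iff]
  rcases zmod_key2 (a : ZMod 8) (b : ZMod 8) (odd_trans8 h) with ⟨H1, H2⟩ | ⟨H1, H2⟩
  · exact Or.inl ⟨int8_of_zmod (by push_cast; linear_combination H1),
                  int8_of_zmod (by push_cast; linear_combination H2)⟩
  · exact Or.inr ⟨int8_of_zmod (by push_cast; linear_combination H1),
                  int8_of_zmod (by push_cast; linear_combination H2)⟩

theorem gi_base {c u : GaussianInt} (hc : ¬ π ∣ c) (hu : IsUnit u) :
    ¬ π^7 ∣ (c^2 - 1 - u * π^4) := by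
  obtain ⟨a, b⟩ := c
  rw [gi_pi_dvd_iff] at hc
  have H := zmod_key4 (a : ZMod 16) (b : ZMod 16) (odd_trans hc)
  intro hdvd
  rcases gi_units hu with rfl | rfl | rfl | rfl
  · have e : (⟨a,b⟩ : GaussianInt)^2 - 1 - 1 * π^4
        = (⟨a^2-b^2+3, 2*a*b⟩ : GaussianInt) := by
      rw [gi_sq, show π^4 = (⟨-4,0⟩ : GaussianInt) from by decide]; ext <;> simp [Zsqrtd.re_mul, Zsqrtd.im_mul] <;> ring
    rw [e, gi_pi7_dvd_iff] at hdvd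
    have h1 := zmod16_of_int hdvd.1; have h2 := zmod16_of_int hdvd.2
    push_cast at h1 h2
    exact H.1 ⟨by linear_combination h1, by linear_combination h2⟩
  · have e : (⟨a,b⟩ : GaussianInt)^2 - 1 - (-1) * π^4
        = (⟨a^2-b^2-5, 2*a*b⟩ : GaussianInt) := by
      rw [gi_sq, show π^4 = (⟨-4,0⟩ : GaussianInt) from by decide]; ext <;> simp [Zsqrtd.re_mul, Zsqrtd.im_mul] <;> ring
    rw [e, gi_pi7_dvd_iff] at hdvd
    have h1 := zmod16_of_int hdvd.1; have h2 := zmod16_of_int hdvd.2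
    push_cast at h1 h2
    exact H.2.1 ⟨by linear_combination h1, by linear_combination h2⟩
  · have e : (⟨a,b⟩ : GaussianInt)^2 - 1 - I * π^4
        = (⟨a^2-b^2-1, 2*a*b+4⟩ : GaussianInt) := by
      rw [gi_sq, show π^4 = (⟨-4,0⟩ : GaussianInt) from by decide]; ext <;> simp [Zsqrtd.re_mul, Zsqrtd.im_mul] <;> ring
    rw [e, gi_pi7_dvd_iff] at hdvd
    have h1 := zmod16_of_int hdvd.1; have h2 := zmod16_of_int hdvd.2
    push_cast at h1 h2
    exact H.2.2.1 ⟨by linear_combination h1, by linear_combination h2⟩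
  · have e : (⟨a,b⟩ : GaussianInt)^2 - 1 - (-I) * π^4
        = (⟨a^2-b^2-1, 2*a*b-4⟩ : GaussianInt) := by
      rw [gi_sq, show π^4 = (⟨-4,0⟩ : GaussianInt) from by decide]; ext <;> simp [Zsqrtd.re_mul, Zsqrtd.im_mul] <;> ring
    rw [e, gi_pi7_dvd_iff] at hdvd
    have h1 := zmod16_of_int hdvd.1; have h2 := zmod16_of_int hdvd.2
    push_cast at h1 h2
    exact H.2.2.2 ⟨by linear_combination h1, by linear_combination h2⟩

theorem gi_not_dvd_unit {u : GaussianInt} (hu : IsUnit u) : ¬ π ∣ u :=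
  fun h => gi_prime.not_unit (isUnit_of_dvd_unit h hu)

theorem gi_odd_ne_zero {a : GaussianInt} (ha : ¬ π ∣ a) : a ≠ 0 :=
  fun h => ha (h ▸ dvd_zero _)

theorem gi_odd_mul {a b : GaussianInt} (ha : ¬ π ∣ a) (hb : ¬ π ∣ b) : ¬ π ∣ a * b := by
  intro h
  rcases gi_prime.dvd_mul.mp h with h | h
  exacts [ha h, hb h]

theorem gi_odd_pow {a : GaussianInt} (ha : ¬ π ∣ a) (n : ℕ) : ¬ π ∣ a ^ n := by
  intro h
  exact ha (gi_prime.dvd_of_dvd_pow h)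

/-- If `π^j ∣ π^k * e` with `e` odd then `j ≤ k`. -/
theorem gi_le_of_dvd {j k : ℕ} {e : GaussianInt} (he : ¬ π ∣ e)
    (h : π^j ∣ π^k * e) : j ≤ k := by
  by_contra hlt
  push_neg at hlt
  have h1 : π^(k+1) ∣ π^k * e := dvd_trans (pow_dvd_pow _ hlt) h
  obtain ⟨w, hw⟩ := h1
  have h2 : π^k * e = π^k * (π * w) := by rw [hw]; ring
  exact he ⟨w, mul_left_cancel₀ (pow_ne_zero k gi_pi_ne) h2⟩

/-- Two `π`-power factorizations with odd cofactors agree. -/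
theorem gi_pow_cancel {k m : ℕ} {e f : GaussianInt} (he : ¬ π ∣ e) (hf : ¬ π ∣ f)
    (h : π^k * e = π^m * f) : k = m ∧ e = f := by
  have hkm : k = m := by
    have h1 : k ≤ m := gi_le_of_dvd hf (h ▸ Dvd.intro e rfl)
    have h2 : m ≤ k := gi_le_of_dvd he (h.symm ▸ Dvd.intro f rfl)
    omega
  subst hkm
  exact ⟨rfl, mul_left_cancel₀ (pow_ne_zero k gi_pi_ne) h⟩

theorem gi_factor_out {z : GaussianInt} (hz : z ≠ 0) :
    ∃ (k : ℕ) (z₀ : GaussianInt), ¬ π ∣ z₀ ∧ z = π^k * z₀ := by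
  obtain ⟨n, a, ha, hfa⟩ := WfDvdMonoid.max_power_factor hz gi_irred
  exact ⟨n, a, ha, hfa⟩

/-- `ω` a unit with `π⁴ ∣ ω - 1` forces `ω = 1`. -/
theorem gi_unit_pin {ω : GaussianInt} (hω : IsUnit ω) (h : π^4 ∣ ω - 1) : ω = 1 := by
  rcases gi_units hω with rfl | rfl | rfl | rfl
  · rfl
  · rw [gi_pi4_dvd_iff] at h
    have := h.1; simp [Zsqrtd.re_sub, Zsqrtd.re_neg, Zsqrtd.re_one] at this
  · rw [gi_pi4_dvd_iff] at h
    have := h.1; simp [Zsqrtd.re_sub, Zsqrtd.re_one] at this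
  · rw [gi_pi4_dvd_iff] at h
    have := h.1; simp [Zsqrtd.re_sub, Zsqrtd.re_neg, Zsqrtd.re_one] at this

/-- Pin a unit `v` to `±1` from `π⁴ ∣ v*b² - 1` with `b` odd. -/
theorem gi_pin_pm {v b : GaussianInt} (hv : IsUnit v) (hb : ¬ π ∣ b)
    (h : π^4 ∣ v * b^2 - 1) : v = 1 ∨ v = -1 := by
  have h45 : (π^4 : GaussianInt) ∣ π^5 := pow_dvd_pow _ (by norm_num)
  rcases gi_F2 hb with hσ | hσ
  · -- b² ≡ 1
    left
    have h2 : π^4 ∣ v * (b^2 - 1) := Dvd.dvd.mul_left (h45.trans hσ) v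
    have h3 : π^4 ∣ v - 1 := by
      have : v - 1 = (v * b^2 - 1) - v * (b^2 - 1) := by ring
      rw [this]; exact dvd_sub h h2
    exact gi_unit_pin hv h3
  · -- b² ≡ -1
    right
    have h2 : π^4 ∣ v * (b^2 + 1) := Dvd.dvd.mul_left (h45.trans hσ) v
    have h3 : π^4 ∣ -v - 1 := by
      have : -v - 1 = (v * b^2 - 1) - v * (b^2 + 1) := by ring
      rw [this]; exact dvd_sub h h2
    have := gi_unit_pin hv.neg h3
    linear_combination -this

/-- units squared are `±1`. -/
theorem gi_unit_sq {v : GaussianInt} (hv : IsUnit v) : v^2 = 1 ∨ v^2 = -1 := by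
  rcases gi_units hv with rfl | rfl | rfl | rfl
  · left; ring
  · left; ring
  · right; decide
  · right; decide

/-- The descent statement. -/
def GSol (n : ℕ) : Prop :=
  ∃ a b c u : GaussianInt, IsUnit u ∧ ¬ π ∣ a ∧ ¬ π ∣ b ∧ IsCoprime a b ∧
    b^4 + u * π^(4*n) * a^4 = c^2

theorem gi_mk_sol {m : ℕ} {s t c v u₃ : GaussianInt} (hu₃ : IsUnit u₃)
    (hv : v = 1 ∨ v = -1) (hs : ¬ π ∣ s) (ht : ¬ π ∣ t) (hst : IsCoprime t s)
    (heq : s^4 + u₃ * π^(4*(m+1)) * t^4 = v * c^2) : GSol (m+1) := by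
  rcases hv with rfl | rfl
  · exact ⟨t, s, c, u₃, hu₃, ht, hs, hst, by linear_combination heq⟩
  · refine ⟨t, s, I * c, u₃, hu₃, ht, hs, hst, ?_⟩
    have hI : (I : GaussianInt)^2 = -1 := by decide
    calc s^4 + u₃ * π^(4*(m+1)) * t^4 = -1 * c^2 := heq
    _ = (I * c)^2 := by rw [mul_pow, hI]

theorem gi_sol_c_odd {n : ℕ} {a b c u : GaussianInt} (hn : 1 ≤ n) (ha : ¬ π ∣ a)
    (hb : ¬ π ∣ b) (heq : b^4 + u * π^(4*n) * a^4 = c^2) : ¬ π ∣ c := by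
  intro hc
  apply hb
  have h1 : π ∣ c^2 := hc.pow (by norm_num)
  have h2 : π ∣ u * π^(4*n) * a^4 := by
    have : π ∣ π^(4*n) := dvd_pow_self _ (by omega)
    exact (this.mul_left u).mul_right _
  have h3 : π ∣ b^4 := by
    have : (b:GaussianInt)^4 = c^2 - u * π^(4*n) * a^4 := by linear_combination heq
    rw [this]; exact dvd_sub h1 h2
  exact gi_prime.dvd_of_dvd_pow h3

/-- Base case : no solution with exponent `π⁴`. -/
theorem gi_sol_base : ¬ GSol 1 := by
  rintro ⟨a, b, c, u, hu, ha, hb, hab, heq⟩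
  have hc : ¬ π ∣ c := gi_sol_c_odd le_rfl ha hb heq
  have h1 : π^7 ∣ b^4 - 1 := gi_F1 hb
  have h2 : π^7 ∣ u * π^4 * (a^4 - 1) := by
    have h3 : (π^3 : GaussianInt) ∣ a^4 - 1 := (pow_dvd_pow _ (by norm_num)).trans (gi_F1 ha)
    obtain ⟨w, hw⟩ := h3
    exact ⟨u * w, by rw [hw]; ring⟩
  apply gi_base hc hu
  have : c^2 - 1 - u * π^4 = (b^4 - 1) + u * π^4 * (a^4 - 1) := by
    have h4 : (4 : ℕ) * 1 = 4 := by norm_num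
    rw [h4] at heq
    linear_combination -heq
  rw [this]
  exact dvd_add h1 h2

theorem gi_I_unit : IsUnit (I : GaussianInt) :=
  IsUnit.of_mul_eq_one (a := I) (-I) (by decide)

theorem gi_two_eq : (2 : GaussianInt) = π^2 * (-I) := by decide

/-- `π ∣ p` for any prime `p` dividing `π`. -/
theorem gi_pi_dvd_of_dvd {p : GaussianInt} (hp : Prime p) (h : p ∣ π) : π ∣ p := by
  obtain ⟨q, hq⟩ := h
  rcases gi_irred.isUnit_or_isUnit hq with h1 | h1
  · exact absurd h1 hp.not_unit
  · obtain ⟨Q, rfl⟩ := h1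
    exact ⟨↑Q⁻¹, by rw [hq]; rw [mul_assoc, Units.mul_inv, mul_one]⟩

/-- common helper: a prime dividing `u * π^k * a^4` with the right coprimality is impossible. -/
theorem gi_no_common {p a b u : GaussianInt} {k : ℕ} (hp : Prime p) (hu : IsUnit u)
    (ha : ¬ π ∣ a) (hb : ¬ π ∣ b) (hab : IsCoprime a b) (hpb : p ∣ b)
    (h : p ∣ u * π^k * a^4) : False := by
  have h1 : p ∣ π^k * a^4 := by
    obtain ⟨U, rfl⟩ := hu
    obtain ⟨w, hw⟩ := h
    exact ⟨↑U⁻¹ * w, by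
      have := congrArg (fun z => (↑U⁻¹ : GaussianInt) * z) hw
      try simp only at this
      calc π^k * a^4 = ↑U⁻¹ * (↑U * π^k * a^4) := by
            rw [← mul_assoc, ← mul_assoc, Units.inv_mul, one_mul]
      _ = ↑U⁻¹ * (p * w) := by rw [hw]
      _ = p * (↑U⁻¹ * w) := by ring⟩
  rcases hp.dvd_mul.mp h1 with h2 | h2
  · have h3 := gi_pi_dvd_of_dvd hp (hp.dvd_of_dvd_pow h2)
    exact hb (h3.trans hpb)
  · have h3 : p ∣ a := hp.dvd_of_dvd_pow h2
    exact hp.not_unit (hab.isUnit_of_dvd' h3 hpb)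

/-- The core of the descent step. -/
theorem gi_descend_core (n : ℕ) {s t b w₁ w₂ : GaussianInt}
    (hw₁ : IsUnit w₁) (hw₂ : IsUnit w₂) (hs : ¬ π ∣ s) (ht : ¬ π ∣ t) (hb : ¬ π ∣ b)
    (hst : IsCoprime s t)
    (hkey : π^(4*n+6) * (w₂ * t^4) - π^2 * (w₁ * s^4) = 2 * b^2) : GSol (n+1) := by
  obtain ⟨W₁, hW₁⟩ := hw₁
  -- cancel π²
  have h2b : (2 : GaussianInt) * b^2 = π^2 * ((-I) * b^2) := by
    rw [gi_two_eq]; ring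
  have hcan : π^(4*n+4) * (w₂ * t^4) - w₁ * s^4 = (-I) * b^2 := by
    apply mul_left_cancel₀ (pow_ne_zero 2 gi_pi_ne)
    calc π^2 * (π^(4*n+4) * (w₂ * t^4) - w₁ * s^4)
        = π^(4*n+6) * (w₂ * t^4) - π^2 * (w₁ * s^4) := by
          rw [show 4*n+6 = 2 + (4*n+4) from by omega, pow_add]; ring
    _ = 2 * b^2 := hkey
    _ = π^2 * ((-I) * b^2) := h2b
  have hinv : (↑W₁⁻¹ : GaussianInt) * w₁ = 1 := by rw [← hW₁]; exact W₁.inv_mul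
  set v : GaussianInt := I * ↑W₁⁻¹ with hv_def
  set u₃ : GaussianInt := -(↑W₁⁻¹ * w₂) with hu₃_def
  have heq' : s^4 + u₃ * π^(4*(n+1)) * t^4 = v * b^2 := by
    rw [hu₃_def, hv_def]
    have hII : (I : GaussianInt) * I = -1 := by decide
    calc s^4 + -(↑W₁⁻¹ * w₂) * π^(4*(n+1)) * t^4
        = (↑W₁⁻¹ * w₁) * s^4 + -(↑W₁⁻¹ * w₂) * π^(4*n+4) * t^4 := by
          rw [hinv, show 4*(n+1) = 4*n+4 from by omega]; ring
    _ = -↑W₁⁻¹ * (π^(4*n+4) * (w₂ * t^4) - w₁ * s^4) := by ring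
    _ = -↑W₁⁻¹ * ((-I) * b^2) := by rw [hcan]
    _ = I * ↑W₁⁻¹ * b^2 := by ring
  have hu₃ : IsUnit u₃ := ((W₁⁻¹.isUnit.mul hw₂).neg)
  have hv : IsUnit v := gi_I_unit.mul W₁⁻¹.isUnit
  have hvb : π^4 ∣ v * b^2 - 1 := by
    have e1 : v * b^2 - 1 = (s^4 - 1) + u₃ * π^(4*(n+1)) * t^4 := by
      linear_combination -heq'
    rw [e1]
    apply dvd_add
    · exact (pow_dvd_pow _ (by norm_num)).trans (gi_F1 hs)
    · exact ((pow_dvd_pow _ (by omega : 4 ≤ 4*(n+1))).mul_left u₃).mul_right _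
  exact gi_mk_sol hu₃ (gi_pin_pm hv hb hvb) hs ht hst.symm heq'

/-- Descent: a solution at level `n+2` yields one at level `n+1`. -/
theorem gi_sol_descend (n : ℕ) (h : GSol (n+2)) : GSol (n+1) := by
  obtain ⟨a, b, c, u, hu, ha, hb, hab, heq⟩ := h
  have hc : ¬ π ∣ c := gi_sol_c_odd (by omega) ha hb heq
  have hbc : IsCoprime b c := by
    apply isCoprime_of_prime_dvd
    · rintro ⟨hb0, -⟩; exact gi_odd_ne_zero hb hb0
    · intro p hp hpb hpc
      have h1 : p ∣ u * π^(4*(n+2)) * a^4 := by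
        have e : u * π^(4*(n+2)) * a^4 = c^2 - b^4 := by linear_combination heq
        rw [e]
        exact dvd_sub (dvd_pow hpc (by norm_num)) (dvd_pow hpb (by norm_num))
      exact gi_no_common hp hu ha hb hab hpb h1
  -- the two factors
  have hprod : (c - b^2) * (c + b^2) = u * π^(4*(n+2)) * a^4 := by
    linear_combination -heq
  have hRHSne : u * π^(4*(n+2)) * a^4 ≠ 0 :=
    mul_ne_zero (mul_ne_zero hu.ne_zero (pow_ne_zero _ gi_pi_ne))
      (pow_ne_zero _ (gi_odd_ne_zero ha))
  have hd₁ : c - b^2 ≠ 0 := fun h0 => hRHSne (by rw [← hprod, h0, zero_mul])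
  have hd₂ : c + b^2 ≠ 0 := fun h0 => hRHSne (by rw [← hprod, h0, mul_zero])
  obtain ⟨k₁, e₁, he₁, hfe₁⟩ := gi_factor_out hd₁
  obtain ⟨k₂, e₂, he₂, hfe₂⟩ := gi_factor_out hd₂
  have hkey : π^(k₁+k₂) * (e₁*e₂) = π^(4*(n+2)) * (u * a^4) := by
    rw [pow_add]
    calc π^k₁ * π^k₂ * (e₁*e₂) = (π^k₁*e₁) * (π^k₂*e₂) := by ring
    _ = u * π^(4*(n+2)) * a^4 := by rw [← hfe₁, ← hfe₂]; exact hprod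
    _ = π^(4*(n+2)) * (u * a^4) := by ring
  obtain ⟨hsum, hee⟩ := gi_pow_cancel (gi_odd_mul he₁ he₂)
    (gi_odd_mul (gi_not_dvd_unit hu) (gi_odd_pow ha 4)) hkey
  -- 2 b² = d₂ - d₁
  have hdiff : π^k₂ * e₂ - π^k₁ * e₁ = 2 * b^2 := by
    rw [← hfe₁, ← hfe₂]; ring
  have h2b : (2 : GaussianInt) * b^2 = π^2 * ((-I) * b^2) := by rw [gi_two_eq]; ring
  have h2bodd : ¬ π ∣ (-I) * b^2 :=
    gi_odd_mul (gi_not_dvd_unit gi_I_unit.neg) (gi_odd_pow hb 2)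
  -- k₁, k₂ ≥ 2
  have hk₁2 : 2 ≤ k₁ := by
    by_contra hlt
    push_neg at hlt
    have hd : π^(k₁+1) ∣ π^k₁ * e₁ := by
      have h1 : π^(k₁+1) ∣ π^k₂ * e₂ :=
        dvd_mul_of_dvd_left (pow_dvd_pow _ (by omega)) _
      have h2 : π^(k₁+1) ∣ 2 * b^2 := by
        rw [h2b]; exact dvd_mul_of_dvd_left (pow_dvd_pow _ (by omega)) _
      have e : π^k₁ * e₁ = π^k₂ * e₂ - 2 * b^2 := by linear_combination -hdiff
      rw [e]; exact dvd_sub h1 h2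
    have := gi_le_of_dvd he₁ hd
    omega
  have hk₂2 : 2 ≤ k₂ := by
    by_contra hlt
    push_neg at hlt
    have hd : π^(k₂+1) ∣ π^k₂ * e₂ := by
      have h1 : π^(k₂+1) ∣ π^k₁ * e₁ :=
        dvd_mul_of_dvd_left (pow_dvd_pow _ (by omega)) _
      have h2 : π^(k₂+1) ∣ 2 * b^2 := by
        rw [h2b]; exact dvd_mul_of_dvd_left (pow_dvd_pow _ (by omega)) _
      have e : π^k₂ * e₂ = π^k₁ * e₁ + 2 * b^2 := by linear_combination hdiff
      rw [e]; exact dvd_add h1 h2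
    have := gi_le_of_dvd he₂ hd
    omega
  have hnot33 : ¬ (3 ≤ k₁ ∧ 3 ≤ k₂) := by
    rintro ⟨h3, h4⟩
    have h1 : π^3 ∣ π^k₁ * e₁ := dvd_mul_of_dvd_left (pow_dvd_pow _ h3) _
    have h2 : π^3 ∣ π^k₂ * e₂ := dvd_mul_of_dvd_left (pow_dvd_pow _ h4) _
    have h5 : π^3 ∣ π^2 * ((-I) * b^2) := by
      rw [← h2b, ← hdiff]; exact dvd_sub h2 h1
    have := gi_le_of_dvd h2bodd h5
    omega
  -- coprimality of e₁ e₂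
  have hcop : IsCoprime e₁ e₂ := by
    apply isCoprime_of_prime_dvd
    · rintro ⟨h0, -⟩; exact he₁ (h0 ▸ dvd_zero _)
    · intro p hp hp1 hp2
      have hpd₁ : p ∣ c - b^2 := hfe₁ ▸ Dvd.dvd.mul_left hp1 _
      have hpd₂ : p ∣ c + b^2 := hfe₂ ▸ Dvd.dvd.mul_left hp2 _
      have hpodd : ¬ π ∣ p := fun hπp => he₁ ((hπp.trans hp1))
      have hp2c : p ∣ π^2 * ((-I) * c) := by
        have e : π^2 * ((-I) * c) = (c - b^2) + (c + b^2) := by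
          rw [show (π:GaussianInt)^2 * ((-I) * c) = (π^2 * (-I)) * c from by ring,
              show ((⟨1,1⟩:GaussianInt)^2 * (-I)) = 2 from by decide]
          ring
        rw [e]; exact dvd_add hpd₁ hpd₂
      have hp2b : p ∣ π^2 * ((-I) * b^2) := by
        have e2b : (π:GaussianInt)^2 * ((-I) * b^2) = (c + b^2) - (c - b^2) := by
          rw [show (π:GaussianInt)^2 * ((-I) * b^2) = (π^2 * (-I)) * b^2 from by ring,
              show ((⟨1,1⟩:GaussianInt)^2 * (-I)) = 2 from by decide]
          ring
        rw [e2b]; exact dvd_sub hpd₂ hpd₁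
      have hppi : ¬ p ∣ π := fun h => hpodd (gi_pi_dvd_of_dvd hp h)
      have hpc : p ∣ c := by
        rcases hp.dvd_mul.mp hp2c with h1 | h1
        · exact absurd (hp.dvd_of_dvd_pow h1) hppi
        · rcases hp.dvd_mul.mp h1 with h2 | h2
          · exact absurd (isUnit_of_dvd_unit h2 gi_I_unit.neg) hp.not_unit
          · exact h2
      have hpb : p ∣ b := by
        rcases hp.dvd_mul.mp hp2b with h1 | h1
        · exact absurd (hp.dvd_of_dvd_pow h1) hppi
        · rcases hp.dvd_mul.mp h1 with h2 | h2
          · exact absurd (isUnit_of_dvd_unit h2 gi_I_unit.neg) hp.not_unit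
          · exact hp.dvd_of_dvd_pow h2
      exact hp.not_unit (hbc.isUnit_of_dvd' hpb hpc)
  -- extract fourth powers
  obtain ⟨U, hU⟩ := hu
  have hcop' : IsCoprime e₁ (↑U⁻¹ * e₂) := by
    apply IsCoprime.mul_right _ hcop
    exact ⟨0, ↑U, by rw [zero_mul, zero_add, Units.mul_inv]⟩
  have hmul4 : e₁ * (↑U⁻¹ * e₂) = a^4 := by
    have e : (↑U⁻¹ : GaussianInt) * (u * a^4) = a^4 := by
      rw [← hU, ← mul_assoc, Units.inv_mul, one_mul]
    calc e₁ * (↑U⁻¹ * e₂) = ↑U⁻¹ * (e₁ * e₂) := by ring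
    _ = ↑U⁻¹ * (u * a^4) := by rw [hee]
    _ = a^4 := e
  obtain ⟨s, W₁, hW₁⟩ := exists_associated_pow_of_mul_eq_pow' hcop' hmul4
  obtain ⟨t, W₂, hW₂⟩ := exists_associated_pow_of_mul_eq_pow' hcop'.symm
    (by rw [mul_comm]; exact hmul4)
  -- e₁ = s⁴ * W₁ ; ↑U⁻¹ e₂ = t⁴ W₂ hence e₂ = t⁴ * (W₂ * U)
  have he₁' : e₁ = s^4 * ↑W₁ := hW₁.symm
  have he₂' : e₂ = t^4 * (↑W₂ * ↑U) := by
    have := hW₂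
    calc e₂ = ↑U * (↑U⁻¹ * e₂) := by rw [← mul_assoc, Units.mul_inv, one_mul]
    _ = ↑U * (t^4 * ↑W₂) := by rw [this]
    _ = t^4 * (↑W₂ * ↑U) := by ring
  have hs : ¬ π ∣ s := by
    intro h
    exact he₁ (he₁' ▸ (dvd_mul_of_dvd_left (dvd_pow h (by norm_num)) _))
  have ht : ¬ π ∣ t := by
    intro h
    exact he₂ (he₂' ▸ (dvd_mul_of_dvd_left (dvd_pow h (by norm_num)) _))
  have hstcop : IsCoprime s t := by
    have h1 : s ∣ e₁ := he₁' ▸ (dvd_mul_of_dvd_left (dvd_pow_self s (by norm_num : (4:ℕ) ≠ 0)) _)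
    have h2 : t ∣ e₂ := he₂' ▸ (dvd_mul_of_dvd_left (dvd_pow_self t (by norm_num : (4:ℕ) ≠ 0)) _)
    exact (hcop.of_isCoprime_of_dvd_left h1).of_isCoprime_of_dvd_right h2
  -- branch
  rcases (by omega : k₁ = 2 ∨ k₂ = 2) with hk | hk
  · -- d₁ small : k₂ = 4n+6
    have hk₂ : k₂ = 4*n+6 := by omega
    apply gi_descend_core n W₁.isUnit (W₂.isUnit.mul U.isUnit) hs ht hb hstcop
    calc π^(4*n+6) * ((↑W₂ * ↑U) * t^4) - π^2 * (↑W₁ * s^4)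
        = π^k₂ * (t^4 * (↑W₂ * ↑U)) - π^k₁ * (s^4 * ↑W₁) := by rw [hk, hk₂]; ring
    _ = π^k₂ * e₂ - π^k₁ * e₁ := by rw [← he₁', ← he₂']
    _ = 2 * b^2 := hdiff
  · -- d₂ small : k₁ = 4n+6
    have hk₁ : k₁ = 4*n+6 := by omega
    have hIb : ¬ π ∣ I * b := gi_odd_mul (gi_not_dvd_unit gi_I_unit) hb
    apply gi_descend_core n (W₂.isUnit.mul U.isUnit) W₁.isUnit ht hs hIb hstcop.symm
    have hII : (I : GaussianInt) * I = -1 := by decide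
    calc π^(4*n+6) * (↑W₁ * s^4) - π^2 * ((↑W₂ * ↑U) * t^4)
        = -(π^k₂ * e₂ - π^k₁ * e₁) := by rw [hk, hk₁, he₁', he₂']; ring
    _ = -(2*b^2) := by rw [hdiff]
    _ = 2 * (I*b)^2 := by rw [mul_pow, show (I:GaussianInt)^2 = -1 from by decide]; ring

theorem gi_sol_none : ∀ n : ℕ, ¬ GSol (n+1) := by
  intro n
  induction n with
  | zero => exact gi_sol_base
  | succ m ih => exact fun h => ih (gi_sol_descend m h)

/-- Case C core: both `x`, `y` odd, with `x²+y²` exactly divisible by `π²`. -/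
theorem gi_caseC_core {x y z z₀ P₀ Q₀ : GaussianInt} {M : ℕ}
    (hx : ¬ π ∣ x) (hy : ¬ π ∣ y) (hxy : IsCoprime x y)
    (heq : x^4 - y^4 = z^2)
    (hz : z = π^M * z₀) (hz₀ : ¬ π ∣ z₀) (hM : 4 ≤ M)
    (hP : x^2 + y^2 = π^2 * P₀) (hP₀ : ¬ π ∣ P₀)
    (hQ : x^2 - y^2 = π^(2*M-2) * Q₀) (hQ₀ : ¬ π ∣ Q₀) : False := by
  -- P₀ Q₀ = z₀²
  have hPQ : π^(2 + (2*M-2)) * (P₀ * Q₀) = π^(2*M) * (z₀^2) := by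
    rw [pow_add]
    calc π^2 * π^(2*M-2) * (P₀*Q₀) = (π^2*P₀) * (π^(2*M-2)*Q₀) := by ring
    _ = (x^2+y^2) * (x^2-y^2) := by rw [← hP, ← hQ]
    _ = z^2 := by linear_combination heq
    _ = π^(2*M) * z₀^2 := by rw [hz, mul_pow, ← pow_mul, mul_comm M 2]
  obtain ⟨-, hPQ₀⟩ := gi_pow_cancel (gi_odd_mul hP₀ hQ₀) (gi_odd_pow hz₀ 2) hPQ
  -- coprime P₀ Q₀
  have hcop : IsCoprime P₀ Q₀ := by
    apply isCoprime_of_prime_dvd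
    · rintro ⟨h0, -⟩; exact hP₀ (h0 ▸ dvd_zero _)
    · intro p hp hp1 hp2
      have hpodd : ¬ p ∣ π := fun h =>
        (fun hπp => hP₀ (hπp.trans hp1)) (gi_pi_dvd_of_dvd hp h)
      have hpP : p ∣ x^2 + y^2 := hP ▸ Dvd.dvd.mul_left hp1 _
      have hpQ : p ∣ x^2 - y^2 := hQ ▸ Dvd.dvd.mul_left hp2 _
      have hp2x : p ∣ π^2 * ((-I) * x^2) := by
        have e : (π:GaussianInt)^2 * ((-I) * x^2) = (x^2+y^2) + (x^2-y^2) := by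
          rw [show (π:GaussianInt)^2 * ((-I) * x^2) = (π^2 * (-I)) * x^2 from by ring,
              show ((⟨1,1⟩:GaussianInt)^2 * (-I)) = 2 from by decide]
          ring
        rw [e]; exact dvd_add hpP hpQ
      have hp2y : p ∣ π^2 * ((-I) * y^2) := by
        have e : (π:GaussianInt)^2 * ((-I) * y^2) = (x^2+y^2) - (x^2-y^2) := by
          rw [show (π:GaussianInt)^2 * ((-I) * y^2) = (π^2 * (-I)) * y^2 from by ring,
              show ((⟨1,1⟩:GaussianInt)^2 * (-I)) = 2 from by decide]
          ring
        rw [e]; exact dvd_sub hpP hpQ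
      have hpx : p ∣ x := by
        rcases hp.dvd_mul.mp hp2x with h1 | h1
        · exact absurd (hp.dvd_of_dvd_pow h1) hpodd
        · rcases hp.dvd_mul.mp h1 with h2 | h2
          · exact absurd (isUnit_of_dvd_unit h2 gi_I_unit.neg) hp.not_unit
          · exact hp.dvd_of_dvd_pow h2
      have hpy : p ∣ y := by
        rcases hp.dvd_mul.mp hp2y with h1 | h1
        · exact absurd (hp.dvd_of_dvd_pow h1) hpodd
        · rcases hp.dvd_mul.mp h1 with h2 | h2
          · exact absurd (isUnit_of_dvd_unit h2 gi_I_unit.neg) hp.not_unit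
          · exact hp.dvd_of_dvd_pow h2
      exact hp.not_unit (hxy.isUnit_of_dvd' hpx hpy)
  -- extract squares
  obtain ⟨s, W₁, hW₁⟩ := exists_associated_pow_of_mul_eq_pow' hcop hPQ₀
  obtain ⟨t, W₂, hW₂⟩ := exists_associated_pow_of_mul_eq_pow' hcop.symm
    (by rw [mul_comm]; exact hPQ₀)
  have hP₀' : P₀ = s^2 * ↑W₁ := hW₁.symm
  have hQ₀' : Q₀ = t^2 * ↑W₂ := hW₂.symm
  have hs : ¬ π ∣ s := fun h =>
    hP₀ (hP₀' ▸ dvd_mul_of_dvd_left (dvd_pow h (by norm_num)) _)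
  have ht : ¬ π ∣ t := fun h =>
    hQ₀ (hQ₀' ▸ dvd_mul_of_dvd_left (dvd_pow h (by norm_num)) _)
  have hstcop : IsCoprime s t := by
    have h1 : s ∣ P₀ := hP₀' ▸ dvd_mul_of_dvd_left (dvd_pow_self s two_ne_zero) _
    have h2 : t ∣ Q₀ := hQ₀' ▸ dvd_mul_of_dvd_left (dvd_pow_self t two_ne_zero) _
    exact (hcop.of_isCoprime_of_dvd_left h1).of_isCoprime_of_dvd_right h2
  -- P² - Q² = -π⁴ (xy)²
  have hmain : π^4 * ((s^2*↑W₁)^2) - π^(4*M-4) * ((t^2*↑W₂)^2) = π^4 * (-(x*y)^2) := by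
    calc π^4 * ((s^2*↑W₁)^2) - π^(4*M-4) * ((t^2*↑W₂)^2)
        = (π^2 * (s^2*↑W₁))^2 - (π^(2*M-2) * (t^2*↑W₂))^2 := by
          rw [show (4*M-4) = (2*M-2)*2 from by omega, pow_mul,
              show ((⟨1,1⟩:GaussianInt)^4) = (π^2)^2 from by rw [← pow_mul]]
          ring
    _ = (x^2+y^2)^2 - (x^2-y^2)^2 := by rw [← hP₀', ← hQ₀', ← hP, ← hQ]
    _ = 4 * x^2 * y^2 := by ring
    _ = π^4 * (-(x*y)^2) := by
          rw [show ((⟨1,1⟩:GaussianInt)^4) = -4 from by decide]; ring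
  have hcan : (s^2*↑W₁)^2 - π^(4*M-8) * ((t^2*↑W₂)^2) = -(x*y)^2 := by
    apply mul_left_cancel₀ (pow_ne_zero 4 gi_pi_ne)
    calc π^4 * ((s^2*↑W₁)^2 - π^(4*M-8) * ((t^2*↑W₂)^2))
        = π^4 * ((s^2*↑W₁)^2) - π^(4+(4*M-8)) * ((t^2*↑W₂)^2) := by
          rw [pow_add]; ring
    _ = π^4 * ((s^2*↑W₁)^2) - π^(4*M-4) * ((t^2*↑W₂)^2) := by
          rw [show 4+(4*M-8) = 4*M-4 from by omega]
    _ = π^4 * (-(x*y)^2) := hmain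
  -- rearrange into GSol (M-3+1)
  have hW₁inv : (↑W₁⁻¹ : GaussianInt) * ↑W₁ = 1 := W₁.inv_mul
  have heq' : s^4 + (-(↑W₁⁻¹^2 * ↑W₂^2)) * π^(4*((M-3)+1)) * t^4
      = (-(↑W₁⁻¹^2)) * (x*y)^2 := by
    have e1 : 4*((M-3)+1) = 4*M-8 := by omega
    rw [e1]
    linear_combination (↑W₁⁻¹^2 : GaussianInt) * hcan
      - s^4 * (1 + ↑W₁⁻¹*↑W₁) * hW₁inv
  have hu₃ : IsUnit (-(↑W₁⁻¹^2 * ↑W₂^2) : GaussianInt) :=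
    ((W₁⁻¹.isUnit.pow 2).mul (W₂.isUnit.pow 2)).neg
  have hv : (-(↑W₁⁻¹^2) : GaussianInt) = 1 ∨ (-(↑W₁⁻¹^2) : GaussianInt) = -1 := by
    rcases gi_unit_sq (W₁⁻¹.isUnit) with h | h
    · right; rw [h]
    · left; rw [h]; ring
  exact gi_sol_none (M-3) (gi_mk_sol hu₃ hv hs ht hstcop.symm heq')

theorem gi_caseC {x y z : GaussianInt} (hx : ¬ π ∣ x) (hy : ¬ π ∣ y) (hz : z ≠ 0)
    (hxy : IsCoprime x y) (heq : x^4 - y^4 = z^2) : False := by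
  have hI2 : (I : GaussianInt)^2 = -1 := by decide
  have h7 : π^7 ∣ z^2 := by
    have e : z^2 = (x^4 - 1) - (y^4 - 1) := by linear_combination -heq
    rw [e]; exact dvd_sub (gi_F1 hx) (gi_F1 hy)
  obtain ⟨M, z₀, hz₀, hzf⟩ := gi_factor_out hz
  have hM7 : 7 ≤ 2*M := by
    apply gi_le_of_dvd (gi_odd_pow hz₀ 2)
    have e : z^2 = π^(2*M) * z₀^2 := by rw [hzf, mul_pow, ← pow_mul, mul_comm M 2]
    rwa [e] at h7
  have hM : 4 ≤ M := by omega
  have hz2ne : z^2 ≠ 0 := pow_ne_zero _ hz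
  have hPne : x^2 + y^2 ≠ 0 := by
    intro h0
    apply hz2ne
    have e : z^2 = (x^2 - y^2) * (x^2 + y^2) := by linear_combination -heq
    rw [e, h0, mul_zero]
  have hQne : x^2 - y^2 ≠ 0 := by
    intro h0
    apply hz2ne
    have e : z^2 = (x^2 - y^2) * (x^2 + y^2) := by linear_combination -heq
    rw [e, h0, zero_mul]
  obtain ⟨p, P₀, hP₀, hPf⟩ := gi_factor_out hPne
  obtain ⟨q, Q₀, hQ₀, hQf⟩ := gi_factor_out hQne
  -- p + q = 2M
  have hkey : π^(p+q) * (P₀*Q₀) = π^(2*M) * (z₀^2) := by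
    rw [pow_add]
    calc π^p * π^q * (P₀*Q₀) = (π^p*P₀) * (π^q*Q₀) := by ring
    _ = (x^2+y^2) * (x^2-y^2) := by rw [← hPf, ← hQf]
    _ = z^2 := by linear_combination heq
    _ = π^(2*M) * z₀^2 := by rw [hzf, mul_pow, ← pow_mul, mul_comm M 2]
  obtain ⟨hsum, -⟩ := gi_pow_cancel (gi_odd_mul hP₀ hQ₀) (gi_odd_pow hz₀ 2) hkey
  -- sums / differences
  have hxodd : ¬ π ∣ (-I) * x^2 := gi_odd_mul (gi_not_dvd_unit gi_I_unit.neg) (gi_odd_pow hx 2)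
  have hyodd : ¬ π ∣ (-I) * y^2 := gi_odd_mul (gi_not_dvd_unit gi_I_unit.neg) (gi_odd_pow hy 2)
  have hadd : π^p * P₀ + π^q * Q₀ = π^2 * ((-I) * x^2) := by
    rw [← hPf, ← hQf,
        show (π:GaussianInt)^2 * ((-I) * x^2) = (π^2 * (-I)) * x^2 from by ring,
        show ((⟨1,1⟩:GaussianInt)^2 * (-I)) = 2 from by decide]
    ring
  have hsub : π^p * P₀ - π^q * Q₀ = π^2 * ((-I) * y^2) := by
    rw [← hPf, ← hQf,
        show (π:GaussianInt)^2 * ((-I) * y^2) = (π^2 * (-I)) * y^2 from by ring,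
        show ((⟨1,1⟩:GaussianInt)^2 * (-I)) = 2 from by decide]
    ring
  have hp2 : 2 ≤ p := by
    by_contra hlt
    push_neg at hlt
    have hd : π^(p+1) ∣ π^p * P₀ := by
      have h1 : π^(p+1) ∣ π^q * Q₀ := dvd_mul_of_dvd_left (pow_dvd_pow _ (by omega)) _
      have h2 : π^(p+1) ∣ π^2 * ((-I) * x^2) := dvd_mul_of_dvd_left (pow_dvd_pow _ (by omega)) _
      have e : π^p * P₀ = π^2 * ((-I) * x^2) - π^q * Q₀ := by linear_combination hadd
      rw [e]; exact dvd_sub h2 h1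
    have := gi_le_of_dvd hP₀ hd
    omega
  have hq2 : 2 ≤ q := by
    by_contra hlt
    push_neg at hlt
    have hd : π^(q+1) ∣ π^q * Q₀ := by
      have h1 : π^(q+1) ∣ π^p * P₀ := dvd_mul_of_dvd_left (pow_dvd_pow _ (by omega)) _
      have h2 : π^(q+1) ∣ π^2 * ((-I) * x^2) := dvd_mul_of_dvd_left (pow_dvd_pow _ (by omega)) _
      have e : π^q * Q₀ = π^2 * ((-I) * x^2) - π^p * P₀ := by linear_combination hadd
      rw [e]; exact dvd_sub h2 h1
    have := gi_le_of_dvd hQ₀ hd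
    omega
  have hnot33 : ¬ (3 ≤ p ∧ 3 ≤ q) := by
    rintro ⟨h3, h4⟩
    have h1 : π^3 ∣ π^p * P₀ := dvd_mul_of_dvd_left (pow_dvd_pow _ h3) _
    have h2 : π^3 ∣ π^q * Q₀ := dvd_mul_of_dvd_left (pow_dvd_pow _ h4) _
    have h5 : π^3 ∣ π^2 * ((-I) * x^2) := by rw [← hadd]; exact dvd_add h1 h2
    have := gi_le_of_dvd hxodd h5
    omega
  rcases (by omega : p = 2 ∨ q = 2) with hk | hk
  · -- P small, Q = π^(2M-2) Q₀ : use (x, y) directly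
    have hq : q = 2*M-2 := by omega
    exact gi_caseC_core hx hy hxy heq hzf hz₀ hM (hk ▸ hPf) hP₀ (hq ▸ hQf) hQ₀
  · -- Q small : use (x, I*y)
    have hp : p = 2*M-2 := by omega
    have hy' : ¬ π ∣ I * y := gi_odd_mul (gi_not_dvd_unit gi_I_unit) hy
    have hxy' : IsCoprime x (I * y) := by
      apply IsCoprime.mul_right _ hxy
      exact ⟨0, -I, by rw [zero_mul, zero_add]; decide⟩
    have hI4 : (I : GaussianInt)^4 = 1 := by decide
    have heq' : x^4 - (I*y)^4 = z^2 := by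
      rw [mul_pow, hI4, one_mul]; exact heq
    have hP' : x^2 + (I*y)^2 = π^2 * Q₀ := by
      rw [mul_pow, hI2]
      calc x^2 + -1 * y^2 = x^2 - y^2 := by ring
      _ = π^2 * Q₀ := hk ▸ hQf
    have hQ' : x^2 - (I*y)^2 = π^(2*M-2) * P₀ := by
      rw [mul_pow, hI2]
      calc x^2 - -1 * y^2 = x^2 + y^2 := by ring
      _ = π^(2*M-2) * P₀ := hp ▸ hPf
    exact gi_caseC_core hx hy' hxy' heq' hzf hz₀ hM hP' hQ₀ hQ' hP₀

theorem gi_coprime_case {x y z : GaussianInt} (hx0 : x ≠ 0) (hy0 : y ≠ 0) (hz0 : z ≠ 0)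
    (hxy : IsCoprime x y) (heq : x^4 - y^4 = z^2) : False := by
  have hI2 : (I : GaussianInt)^2 = -1 := by decide
  have hm1 : IsUnit (-1 : GaussianInt) := IsUnit.neg isUnit_one
  by_cases hπx : π ∣ x
  · by_cases hπy : π ∣ y
    · exact gi_prime.not_unit (hxy.isUnit_of_dvd' hπx hπy)
    · -- π ∣ x only
      have hπz : ¬ π ∣ z := by
        intro hz
        apply hπy
        apply gi_prime.dvd_of_dvd_pow (n := 4)
        have e : y^4 = x^4 - z^2 := by linear_combination -heq
        rw [e]
        exact dvd_sub (dvd_pow hπx (by norm_num)) (dvd_pow hz (by norm_num))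
      obtain ⟨k, x₀, hx₀, hfx⟩ := gi_factor_out hx0
      have hk1 : 1 ≤ k := by
        by_contra h0
        push_neg at h0
        interval_cases k
        · rw [pow_zero, one_mul] at hfx
          exact hx₀ (hfx ▸ hπx)
      obtain ⟨m, rfl⟩ : ∃ m, k = m + 1 := ⟨k-1, by omega⟩
      apply gi_sol_none m
      refine ⟨x₀, y, I*z, -1, hm1, hx₀, hπy, ?_, ?_⟩
      · exact hxy.of_isCoprime_of_dvd_left ⟨π^(m+1), by rw [hfx]; ring⟩
      · have hx4 : x^4 = π^(4*(m+1)) * x₀^4 := by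
          rw [hfx, mul_pow, ← pow_mul, Nat.mul_comm]
        calc y^4 + (-1) * π^(4*(m+1)) * x₀^4 = y^4 - x^4 := by rw [hx4]; ring
        _ = -(z^2) := by linear_combination -heq
        _ = (I*z)^2 := by rw [mul_pow, hI2]; ring
  · by_cases hπy : π ∣ y
    · -- π ∣ y only
      have hπz : ¬ π ∣ z := by
        intro hz
        apply hπx
        apply gi_prime.dvd_of_dvd_pow (n := 4)
        have e : x^4 = z^2 + y^4 := by linear_combination heq
        rw [e]
        exact dvd_add (dvd_pow hz (by norm_num)) (dvd_pow hπy (by norm_num))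
      obtain ⟨k, y₀, hy₀, hfy⟩ := gi_factor_out hy0
      have hk1 : 1 ≤ k := by
        by_contra h0
        push_neg at h0
        interval_cases k
        · rw [pow_zero, one_mul] at hfy
          exact hy₀ (hfy ▸ hπy)
      obtain ⟨m, rfl⟩ : ∃ m, k = m + 1 := ⟨k-1, by omega⟩
      apply gi_sol_none m
      refine ⟨y₀, x, z, -1, hm1, hy₀, hπx, ?_, ?_⟩
      · exact (hxy.symm.of_isCoprime_of_dvd_left ⟨π^(m+1), by rw [hfy]; ring⟩)
      · have hy4 : y^4 = π^(4*(m+1)) * y₀^4 := by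
          rw [hfy, mul_pow, ← pow_mul, Nat.mul_comm]
        calc x^4 + (-1) * π^(4*(m+1)) * y₀^4 = x^4 - y^4 := by rw [hy4]; ring
        _ = z^2 := heq
    · exact gi_caseC hπx hπy hz0 hxy heq

theorem gi_unit_norm_ge {p : GaussianInt} (hp : Prime p) : 2 ≤ (p.norm).natAbs := by
  have h0 : (p.norm).natAbs ≠ 0 := by
    rw [Ne, Int.natAbs_eq_zero, GaussianInt.norm_eq_zero]
    exact hp.ne_zero
  have h1 : (p.norm).natAbs ≠ 1 := fun h => hp.not_unit (Zsqrtd.norm_eq_one_iff.mp h)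
  omega

theorem gi_main : ∀ N : ℕ, ∀ x y z : GaussianInt, x ≠ 0 → y ≠ 0 → z ≠ 0 →
    (z.norm).natAbs ≤ N → x^4 - y^4 = z^2 → False := by
  intro N
  induction N with
  | zero =>
    intro x y z _ _ hz hN _
    apply hz
    rw [← GaussianInt.norm_eq_zero, ← Int.natAbs_eq_zero]
    omega
  | succ N ih =>
    intro x y z hx hy hz hN heq
    by_cases hxy : IsCoprime x y
    · exact gi_coprime_case hx hy hz hxy heq
    · have hex : ∃ p, Prime p ∧ p ∣ x ∧ p ∣ y := by
        by_contra hne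
        push_neg at hne
        exact hxy (isCoprime_of_prime_dvd (fun ⟨h0, _⟩ => hx h0)
          (fun p hp hpx hpy => hne p hp hpx hpy))
      obtain ⟨p, hp, hpx, hpy⟩ := hex
      obtain ⟨x', rfl⟩ := hpx
      obtain ⟨y', rfl⟩ := hpy
      have hpz : p ∣ z := by
        apply hp.dvd_of_dvd_pow (n := 2)
        exact ⟨p^3*x'^4 - p^3*y'^4, by linear_combination -heq⟩
      obtain ⟨z₁, rfl⟩ := hpz
      have hcan : p^2 * (x'^4 - y'^4) = z₁^2 := by
        apply mul_left_cancel₀ (pow_ne_zero 2 hp.ne_zero)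
        linear_combination heq
      have hz₁ : p ∣ z₁ := by
        apply hp.dvd_of_dvd_pow (n := 2)
        exact ⟨p*(x'^4 - y'^4), by linear_combination -hcan⟩
      obtain ⟨z', rfl⟩ := hz₁
      have heq' : x'^4 - y'^4 = z'^2 := by
        apply mul_left_cancel₀ (pow_ne_zero 4 hp.ne_zero)
        linear_combination heq
      have hx' : x' ≠ 0 := fun h => hx (by rw [h, mul_zero])
      have hy' : y' ≠ 0 := fun h => hy (by rw [h, mul_zero])
      have hz' : z' ≠ 0 := fun h => hz (by rw [h, mul_zero, mul_zero])
      have hnorm : ((p*(p*z')).norm).natAbs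
          = (p.norm).natAbs * ((p.norm).natAbs * ((z'.norm).natAbs)) := by
        rw [Zsqrtd.norm_mul, Zsqrtd.norm_mul, Int.natAbs_mul, Int.natAbs_mul]
      have hp2 := gi_unit_norm_ge hp
      have hz'1 : 1 ≤ ((z'.norm).natAbs) := by
        have : (z'.norm).natAbs ≠ 0 := by
          rw [Ne, Int.natAbs_eq_zero, GaussianInt.norm_eq_zero]; exact hz'
        omega
      have hN' : (p.norm).natAbs * ((p.norm).natAbs * ((z'.norm).natAbs)) ≤ N+1 := by
        rw [← hnorm]; exact hN
      have h4 : 2*(2*((z'.norm).natAbs)) ≤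
          (p.norm).natAbs * ((p.norm).natAbs * ((z'.norm).natAbs)) :=
        Nat.mul_le_mul hp2 (Nat.mul_le_mul hp2 le_rfl)
      have h5 := le_trans h4 hN'
      exact ih x' y' z' hx' hy' hz' (by omega) heq'

/-- Hilbert's result: the equation `x⁴ - y⁴ = z²` has only trivial solutions
in the Gaussian integers `ℤ[i]`. -/
theorem stmt_3 :
    ¬ ∃ x y z : GaussianInt, x * y * z ≠ 0 ∧ x ^ 4 - y ^ 4 = z ^ 2 := by
  rintro ⟨x, y, z, hne, heq⟩
  have hx : x ≠ 0 := fun h => hne (by rw [h, zero_mul, zero_mul])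
  have hy : y ≠ 0 := fun h => hne (by rw [h, mul_zero, zero_mul])
  have hz : z ≠ 0 := fun h => hne (by rw [h, mul_zero])
  exact gi_main ((z.norm).natAbs) x y z hx hy hz le_rfl heq
end
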